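/- arXiv:2506.12569 — 6 statements merged into one kernel-verified Lean document; each statement's English description precedes it below -/
import Mathlib

section
/- Theorem 1, Part (A) (validity of feedback-and-heterogeneity-robust moment functions). Suppose the measurable function φ : 𝒴^{T+1} × 𝒳^T → ℝ satisfies the FHR conditions (i) and (ii). Then for every data generating process ω = (g, π, ν) such that φ(Y_0,…,Y_T, X_1,…,X_T) is absolutely integrable under the induced joint law, the expectation of φ(Y_0,…,Y_T, X_1,…,X_T) under that joint law equals zero. -/
/-!
Theorem 1, Part (A) of Bonhomme, Dano & Graham, "Moment Restrictions for Nonlinear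
Panel Data Models with Feedback": validity of feedback-and-heterogeneity-robust (FHR)
moment functions.
-/

open MeasureTheory ProbabilityTheory Function
open scoped ENNReal

noncomputable section

variable {Y X A : Type*} [MeasurableSpace Y] [MeasurableSpace X] [MeasurableSpace A]

/-- Iterated partial integral `∫ φ(y^T, x^T) ∏_{r=t}^{t+n-1} f_r(y_r | y_{r-1}, x_r, a)
dμ(y_t) ⋯ dμ(y_{t+n-1})`, for a fixed covariate path `x` and heterogeneity `a`.
Histories are encoded as streams `ℕ → Y`, `ℕ → X`; coordinate `r` of the outcome stream
is overwritten by the integration variable for `y_r`. -/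
noncomputable def iterInt (μ : Measure Y) (f : ℕ → Y → Y → X → A → ℝ)
    (φ : (ℕ → Y) → (ℕ → X) → ℝ) (a : A) (x : ℕ → X) :
    ℕ → ℕ → (ℕ → Y) → ℝ
  | 0, _, y => φ y x
  | n + 1, t, y =>
      ∫ yt, f t yt (y (t - 1)) (x t) a *
        iterInt μ f φ a x n (t + 1) (Function.update y t yt) ∂μ

/-- The feedback-and-heterogeneity-robust (FHR) conditions (i) and (ii) for a moment
function `φ` in the panel data model with `T` periods, outcome densities `f_t` with
respect to `μ`:
(i) the full integral of `φ` against `∏_{t=1}^T f_t` vanishes for all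
`(y_0, x_1, …, x_T, a)`;
(ii) for every `s = 2, …, T`, the partial integral of `φ` against `∏_{t=s}^T f_t`
does not depend on `(x_s, …, x_T)`. -/
def FHR (μ : Measure Y) (f : ℕ → Y → Y → X → A → ℝ) (T : ℕ)
    (φ : (ℕ → Y) → (ℕ → X) → ℝ) : Prop :=
  (∀ (y : ℕ → Y) (x : ℕ → X) (a : A), iterInt μ f φ a x T 1 y = 0) ∧
  (∀ s, 2 ≤ s → s ≤ T → ∀ (y : ℕ → Y) (x x' : ℕ → X) (a : A),
    (∀ i, i < s → x i = x' i) →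
    iterInt μ f φ a x (T - s + 1) s y = iterInt μ f φ a x' (T - s + 1) s y)

/-- Expected value of `φ(Y^T, X^T)` conditional on heterogeneity `a` and on the history
up to (but not including) period `t`, when `n` outcome periods remain: the period-`t`
outcome is drawn with density `f_t(·|y_{t-1}, x_t, a)` with respect to `μ`, and (as long
as further periods remain) the period-`t+1` covariate is drawn from the feedback kernel
`g (t+1)` evaluated at the current history. -/
noncomputable def pathInt (μ : Measure Y) (f : ℕ → Y → Y → X → A → ℝ)
    (g : ℕ → Kernel ((ℕ → Y) × (ℕ → X) × A) X)
    (φ : (ℕ → Y) → (ℕ → X) → ℝ) (a : A) :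
    ℕ → ℕ → (ℕ → Y) → (ℕ → X) → ℝ
  | 0, _, y, x => φ y x
  | 1, t, y, x =>
      ∫ yt, f t yt (y (t - 1)) (x t) a * φ (Function.update y t yt) x ∂μ
  | n + 2, t, y, x =>
      ∫ yt, f t yt (y (t - 1)) (x t) a *
        ∫ xt, pathInt μ f g φ a (n + 1) (t + 1) (Function.update y t yt)
            (Function.update x (t + 1) xt)
          ∂(g (t + 1) (Function.update y t yt, x, a)) ∂μ

/-- `ℝ≥0∞`-valued analogue of `pathInt`, used to express absolute integrability of a
moment function under the induced joint law. -/
noncomputable def pathLint (μ : Measure Y) (f : ℕ → Y → Y → X → A → ℝ)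
    (g : ℕ → Kernel ((ℕ → Y) × (ℕ → X) × A) X)
    (φ : (ℕ → Y) → (ℕ → X) → ℝ≥0∞) (a : A) :
    ℕ → ℕ → (ℕ → Y) → (ℕ → X) → ℝ≥0∞
  | 0, _, y, x => φ y x
  | 1, t, y, x =>
      ∫⁻ yt, ENNReal.ofReal (f t yt (y (t - 1)) (x t) a) * φ (Function.update y t yt) x ∂μ
  | n + 2, t, y, x =>
      ∫⁻ yt, ENNReal.ofReal (f t yt (y (t - 1)) (x t) a) *
        ∫⁻ xt, pathLint μ f g φ a (n + 1) (t + 1) (Function.update y t yt)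
            (Function.update x (t + 1) xt)
          ∂(g (t + 1) (Function.update y t yt, x, a)) ∂μ

/-- Joint measurability of `pathLint` in `(a, y, x)`. -/
lemma measurable_pathLint (μ : Measure Y) [SigmaFinite μ]
    (f : ℕ → Y → Y → X → A → ℝ)
    (hf_meas : ∀ t, Measurable fun p : Y × Y × X × A => f t p.1 p.2.1 p.2.2.1 p.2.2.2)
    (g : ℕ → Kernel ((ℕ → Y) × (ℕ → X) × A) X) (hg : ∀ t, IsMarkovKernel (g t))
    (φL : (ℕ → Y) → (ℕ → X) → ℝ≥0∞)
    (hφ : Measurable fun p : (ℕ → Y) × (ℕ → X) => φL p.1 p.2) :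
    ∀ n t, Measurable fun q : A × (ℕ → Y) × (ℕ → X) =>
      pathLint μ f g φL q.1 n t q.2.1 q.2.2 := by
  intro n
  induction n using Nat.strong_induction_on with
  | _ n ih =>
    intro t
    match n with
    | 0 =>
      simpa only [pathLint, Function.comp_def] using hφ.comp measurable_snd
    | 1 =>
      simp only [pathLint]
      have h1 : Measurable fun r : (A × (ℕ → Y) × (ℕ → X)) × Y =>
          ENNReal.ofReal (f t r.2 (r.1.2.1 (t - 1)) (r.1.2.2 t) r.1.1) := by
        have h0 : Measurable fun r : (A × (ℕ → Y) × (ℕ → X)) × Y =>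
            ((r.2, r.1.2.1 (t - 1), r.1.2.2 t, r.1.1) : Y × Y × X × A) := by fun_prop
        exact ((hf_meas t).comp h0).ennreal_ofReal
      have h2 : Measurable fun r : (A × (ℕ → Y) × (ℕ → X)) × Y =>
          φL (Function.update r.1.2.1 t r.2) r.1.2.2 :=
        hφ.comp ((measurable_update'.comp
          (measurable_fst.snd.fst.prodMk measurable_snd)).prodMk
          measurable_fst.snd.snd)
      exact Measurable.lintegral_prod_right' (h1.mul h2)
    | (m + 2) =>
      simp only [pathLint]
      have h1 : Measurable fun r : (A × (ℕ → Y) × (ℕ → X)) × Y =>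
          ENNReal.ofReal (f t r.2 (r.1.2.1 (t - 1)) (r.1.2.2 t) r.1.1) := by
        have h0 : Measurable fun r : (A × (ℕ → Y) × (ℕ → X)) × Y =>
            ((r.2, r.1.2.1 (t - 1), r.1.2.2 t, r.1.1) : Y × Y × X × A) := by fun_prop
        exact ((hf_meas t).comp h0).ennreal_ofReal
      have hh : Measurable fun r : (A × (ℕ → Y) × (ℕ → X)) × Y =>
          ((Function.update r.1.2.1 t r.2, r.1.2.2, r.1.1) :
            (ℕ → Y) × (ℕ → X) × A) :=
        (measurable_update'.comp (measurable_fst.snd.fst.prodMk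
          measurable_snd)).prodMk (measurable_fst.snd.snd.prodMk measurable_fst.fst)
      haveI := hg (t + 1)
      have hF : Measurable fun p : ((A × (ℕ → Y) × (ℕ → X)) × Y) × X =>
          pathLint μ f g φL p.1.1.1 (m + 1) (t + 1)
            (Function.update p.1.1.2.1 t p.1.2)
            (Function.update p.1.1.2.2 (t + 1) p.2) := by
        have := ih (m + 1) (by omega) (t + 1)
        exact this.comp (measurable_fst.fst.fst.prodMk
          ((measurable_update'.comp
            (measurable_fst.fst.snd.fst.prodMk measurable_fst.snd)).prodMk
           (measurable_update'.comp
            (measurable_fst.fst.snd.snd.prodMk measurable_snd))))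
      have h2 : Measurable fun r : (A × (ℕ → Y) × (ℕ → X)) × Y =>
          ∫⁻ xt, pathLint μ f g φL r.1.1 (m + 1) (t + 1)
              (Function.update r.1.2.1 t r.2)
              (Function.update r.1.2.2 (t + 1) xt)
            ∂((g (t + 1)).comap _ hh r) :=
        Measurable.lintegral_kernel_prod_right (κ := (g (t + 1)).comap _ hh)
          ((hF.comp measurable_id).comp measurable_id)
      exact Measurable.lintegral_prod_right' (h1.mul h2)

/-- Key lemma: under the FHR conditions, the feedback integral `pathInt` coincides with
the fixed-covariate iterated integral `iterInt`, at every history where the absolute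
moment is finite. -/
lemma pathInt_eq_iterInt (μ : Measure Y) [SigmaFinite μ] (T : ℕ)
    (f : ℕ → Y → Y → X → A → ℝ)
    (hf_meas : ∀ t, Measurable fun p : Y × Y × X × A => f t p.1 p.2.1 p.2.2.1 p.2.2.2)
    (hf_nonneg : ∀ t y ylag x a, 0 ≤ f t y ylag x a)
    (φ : (ℕ → Y) → (ℕ → X) → ℝ)
    (hφ_meas : Measurable fun p : (ℕ → Y) × (ℕ → X) => φ p.1 p.2)
    (hFHR : FHR μ f T φ)
    (g : ℕ → Kernel ((ℕ → Y) × (ℕ → X) × A) X) (hg : ∀ t, IsMarkovKernel (g t)) :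
    ∀ n t (a : A) (y : ℕ → Y) (x : ℕ → X), 1 ≤ t → n + t = T + 1 →
      pathLint μ f g (fun y x => ENNReal.ofReal |φ y x|) a n t y x ≠ ⊤ →
      pathInt μ f g φ a n t y x = iterInt μ f φ a x n t y := by
  have hφL : Measurable fun p : (ℕ → Y) × (ℕ → X) => ENNReal.ofReal |φ p.1 p.2| :=
    ENNReal.measurable_ofReal.comp hφ_meas.abs
  intro n
  induction n using Nat.strong_induction_on with
  | _ n ih =>
    intro t a y x ht hsum hfin
    match n, hsum, hfin, ih with
    | 0, hsum, hfin, ih => simp only [pathInt, iterInt]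
    | 1, hsum, hfin, ih => simp only [pathInt, iterInt]
    | (m + 2), hsum, hfin, ih =>
      simp only [pathInt, iterInt]
      haveI := hg (t + 1)
      -- measurability of the inner ℝ≥0∞ integral as a function of `yt`
      have hh : Measurable fun yt : Y =>
          ((Function.update y t yt, x, a) : (ℕ → Y) × (ℕ → X) × A) :=
        (measurable_update y).prodMk measurable_const
      have hpl := measurable_pathLint μ f hf_meas g hg
        (fun y x => ENNReal.ofReal |φ y x|) hφL (m + 1) (t + 1)
      have hGmeas : Measurable fun yt : Y =>
          ∫⁻ xt, pathLint μ f g (fun y x => ENNReal.ofReal |φ y x|) a (m + 1) (t + 1)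
              (Function.update y t yt) (Function.update x (t + 1) xt)
            ∂(g (t + 1) (Function.update y t yt, x, a)) :=
        Measurable.lintegral_kernel_prod_right (κ := (g (t + 1)).comap _ hh)
          (hpl.comp ((measurable_const.prodMk
            ((measurable_update'.comp (measurable_const.prodMk measurable_fst)).prodMk
              (measurable_update'.comp
                (measurable_const.prodMk measurable_snd)))) :
            Measurable fun p : Y × X =>
              ((a, Function.update y t p.1, Function.update x (t + 1) p.2) :
                A × (ℕ → Y) × (ℕ → X))))
      have hfy : Measurable fun yt : Y =>
          ENNReal.ofReal (f t yt (y (t - 1)) (x t) a) := by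
        have h0 : Measurable fun yt : Y => ((yt, y (t - 1), x t, a) : Y × Y × X × A) := by
          fun_prop
        exact ((hf_meas t).comp h0).ennreal_ofReal
      have hfin' : (∫⁻ yt, ENNReal.ofReal (f t yt (y (t - 1)) (x t) a) *
          ∫⁻ xt, pathLint μ f g (fun y x => ENNReal.ofReal |φ y x|) a (m + 1) (t + 1)
              (Function.update y t yt) (Function.update x (t + 1) xt)
            ∂(g (t + 1) (Function.update y t yt, x, a)) ∂μ) ≠ ⊤ := by
        simpa only [pathLint] using hfin
      have hae := ae_lt_top (hfy.mul hGmeas) hfin'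
      refine integral_congr_ae ?_
      filter_upwards [hae] with yt hyt
      by_cases hf0 : f t yt (y (t - 1)) (x t) a = 0
      · simp [hf0]
      · have hGfin : (∫⁻ xt, pathLint μ f g (fun y x => ENNReal.ofReal |φ y x|) a
            (m + 1) (t + 1) (Function.update y t yt) (Function.update x (t + 1) xt)
            ∂(g (t + 1) (Function.update y t yt, x, a))) ≠ ⊤ := by
          intro hG
          rw [Pi.mul_apply, hG, ENNReal.mul_top] at hyt
          · exact absurd hyt (lt_irrefl _)
          · simp only [ne_eq, ENNReal.ofReal_eq_zero, not_le]
            exact lt_of_le_of_ne (hf_nonneg t yt (y (t - 1)) (x t) a) (Ne.symm hf0)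
        congr 1
        have hplm : Measurable fun xt : X =>
            pathLint μ f g (fun y x => ENNReal.ofReal |φ y x|) a (m + 1) (t + 1)
              (Function.update y t yt) (Function.update x (t + 1) xt) :=
          hpl.comp (measurable_const.prodMk
            (measurable_const.prodMk (measurable_update x)))
        have hae2 := ae_lt_top hplm hGfin
        have hconst : (fun xt => pathInt μ f g φ a (m + 1) (t + 1)
              (Function.update y t yt) (Function.update x (t + 1) xt))
            =ᵐ[g (t + 1) (Function.update y t yt, x, a)]
            (fun _ => iterInt μ f φ a x (m + 1) (t + 1) (Function.update y t yt)) := by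
          filter_upwards [hae2] with xt hxt
          rw [ih (m + 1) (by omega) (t + 1) a (Function.update y t yt)
            (Function.update x (t + 1) xt) (by omega) (by omega) hxt.ne]
          have h2 := hFHR.2 (t + 1) (by omega) (by omega) (Function.update y t yt)
            x (Function.update x (t + 1) xt) a
            (fun i hi => (Function.update_of_ne (by omega) xt x).symm)
          have hTe : T - (t + 1) + 1 = m + 1 := by omega
          rw [hTe] at h2
          exact h2.symm
        rw [integral_congr_ae hconst, integral_const]
        simp [iterInt]

/-- **Theorem 1, Part (A)**: if the measurable moment function `φ` satisfies the FHR
conditions (i) and (ii), then for every data generating process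
`ω = (g, π, ν)` — an initial-condition law `ν` for `(Y_0, X_1)`, a heterogeneity Markov
kernel `π`, and feedback Markov kernels `g_t` — under which `φ(Y_0,…,Y_T, X_1,…,X_T)` is
absolutely integrable, the expectation of `φ` under the induced joint law is zero. -/
theorem theorem1_partA
    (μ : Measure Y) [SigmaFinite μ] (T : ℕ) (hT : 2 ≤ T)
    (f : ℕ → Y → Y → X → A → ℝ)
    (hf_meas : ∀ t, Measurable fun p : Y × Y × X × A => f t p.1 p.2.1 p.2.2.1 p.2.2.2)
    (hf_nonneg : ∀ t y ylag x a, 0 ≤ f t y ylag x a)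
    (hf_one : ∀ t (ylag : Y) (x : X) (a : A), ∫⁻ y, ENNReal.ofReal (f t y ylag x a) ∂μ = 1)
    (φ : (ℕ → Y) → (ℕ → X) → ℝ)
    (hφ_meas : Measurable fun p : (ℕ → Y) × (ℕ → X) => φ p.1 p.2)
    (hFHR : FHR μ f T φ)
    -- the data generating process ω = (g, π, ν)
    (ν : Measure (Y × X)) [IsProbabilityMeasure ν]
    (π : Kernel (Y × X) A) [IsMarkovKernel π]
    (g : ℕ → Kernel ((ℕ → Y) × (ℕ → X) × A) X) (hg : ∀ t, IsMarkovKernel (g t))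
    -- arbitrary base streams used to hold the recursively constructed histories
    (y₀ : ℕ → Y) (x₀ : ℕ → X)
    -- absolute integrability of φ under the induced joint law
    (hint : (∫⁻ p, ∫⁻ a, pathLint μ f g (fun y x => ENNReal.ofReal |φ y x|) a T 1
        (Function.update y₀ 0 p.1) (Function.update x₀ 1 p.2) ∂(π p) ∂ν) ≠ ⊤) :
    (∫ p, ∫ a, pathInt μ f g φ a T 1
        (Function.update y₀ 0 p.1) (Function.update x₀ 1 p.2) ∂(π p) ∂ν) = 0 := by
  have hφL : Measurable fun p : (ℕ → Y) × (ℕ → X) => ENNReal.ofReal |φ p.1 p.2| :=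
    ENNReal.measurable_ofReal.comp hφ_meas.abs
  have hpl := measurable_pathLint μ f hf_meas g hg
    (fun y x => ENNReal.ofReal |φ y x|) hφL T 1
  have hmeas1 : Measurable fun p : Y × X =>
      ∫⁻ a, pathLint μ f g (fun y x => ENNReal.ofReal |φ y x|) a T 1
        (Function.update y₀ 0 p.1) (Function.update x₀ 1 p.2) ∂(π p) :=
    Measurable.lintegral_kernel_prod_right
      (hpl.comp (measurable_snd.prodMk
        (((measurable_update y₀).comp measurable_fst.fst).prodMk
          ((measurable_update x₀).comp measurable_fst.snd))))
  have h1 := ae_lt_top hmeas1 hint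
  apply integral_eq_zero_of_ae
  filter_upwards [h1] with p hp
  have hmeas2 : Measurable fun a : A =>
      pathLint μ f g (fun y x => ENNReal.ofReal |φ y x|) a T 1
        (Function.update y₀ 0 p.1) (Function.update x₀ 1 p.2) :=
    by
      have hpair : Measurable fun a : A =>
          ((a, Function.update y₀ 0 p.1, Function.update x₀ 1 p.2) :
            A × (ℕ → Y) × (ℕ → X)) := measurable_id.prodMk measurable_const
      exact hpl.comp hpair
  have h2 := ae_lt_top hmeas2 hp.ne
  show (∫ a, pathInt μ f g φ a T 1
      (Function.update y₀ 0 p.1) (Function.update x₀ 1 p.2) ∂(π p)) = 0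
  apply integral_eq_zero_of_ae
  filter_upwards [h2] with a ha
  show pathInt μ f g φ a T 1
      (Function.update y₀ 0 p.1) (Function.update x₀ 1 p.2) = 0
  rw [pathInt_eq_iterInt μ T f hf_meas hf_nonneg φ hφ_meas hFHR g hg T 1 a _ _
    le_rfl rfl ha.ne]
  exact hFHR.1 _ _ _

end
end

section
/- Theorem 2, Part (A) (validity of FHR moment functions for average effects). Let h : 𝒴^{T+1} × 𝒳^T × 𝒜 → ℝ and φ : 𝒴^{T+1} × 𝒳^T → ℝ be measurable and suppose: (i) ∫ (φ(y^T, x^T) − h(y^T, x^T, a)) ∏_{t=1}^T f_t(y_t | y_{t−1}, x_t, a) dμ(y_1)⋯dμ(y_T) = 0 for all (y_0, x_1,…,x_T, a); and (ii) for each s = 2,…,T, the partial integral ∫ (φ(y^T, x^T) − h(y^T, x^T, a)) ∏_{t=s}^T f_t(y_t | y_{t−1}, x_t, a) dμ(y_s)⋯dμ(y_T) takes the same value for any two choices of (x_s,…,x_T), holding (y_0,…,y_{s−1}, x_1,…,x_{s−1}, a) fixed. Then for every data generating process ω = (g, π, ν) such that both φ(Y^T, X^T) and h(Y^T, X^T,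 A) are absolutely integrable under the induced joint law, one has E[φ(Y^T, X^T)] = E[h(Y^T, X^T, A)]. -/
/-!
Theorem 2, Part (A) of Bonhomme, Dano & Graham, "Moment Restrictions for Nonlinear
Panel Data Models with Feedback": validity of FHR moment functions for average effects.
-/

open MeasureTheory ProbabilityTheory Function
open scoped ENNReal

noncomputable section

variable {Y X A : Type*} [MeasurableSpace Y] [MeasurableSpace X] [MeasurableSpace A]

section Aux

variable {μ : Measure Y} {f : ℕ → Y → Y → X → A → ℝ}
  {g : ℕ → Kernel ((ℕ → Y) × (ℕ → X) × A) X}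

private lemma meas_upd₁ (t : ℕ) :
    Measurable (fun q : ((ℕ → Y) × (ℕ → X) × A) × Y =>
      ((Function.update q.1.1 t q.2, q.1.2.1, q.1.2.2) : (ℕ → Y) × (ℕ → X) × A)) :=
  (measurable_update'.comp (measurable_fst.fst.prodMk measurable_snd)).prodMk
    (measurable_fst.snd.fst.prodMk measurable_fst.snd.snd)

private lemma meas_upd₂ (t : ℕ) :
    Measurable (fun q : (((ℕ → Y) × (ℕ → X) × A) × Y) × X =>
      ((Function.update q.1.1.1 t q.1.2, Function.update q.1.1.2.1 (t + 1) q.2, q.1.1.2.2)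
        : (ℕ → Y) × (ℕ → X) × A)) :=
  (measurable_update'.comp (measurable_fst.fst.fst.prodMk measurable_fst.snd)).prodMk
    ((measurable_update'.comp (measurable_fst.fst.snd.fst.prodMk measurable_snd)).prodMk
      measurable_fst.fst.snd.snd)

private lemma meas_fterm
    (hf_meas : ∀ t, Measurable fun p : Y × Y × X × A => f t p.1 p.2.1 p.2.2.1 p.2.2.2)
    (t : ℕ) :
    Measurable (fun q : ((ℕ → Y) × (ℕ → X) × A) × Y =>
      f t q.2 (q.1.1 (t - 1)) (q.1.2.1 t) q.1.2.2) :=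
  (hf_meas t).comp
    (show Measurable fun q : ((ℕ → Y) × (ℕ → X) × A) × Y =>
        ((q.2, q.1.1 (t - 1), q.1.2.1 t, q.1.2.2) : Y × Y × X × A) by fun_prop)

private lemma pathInt_meas [SigmaFinite μ]
    (hf_meas : ∀ t, Measurable fun p : Y × Y × X × A => f t p.1 p.2.1 p.2.2.1 p.2.2.2)
    (hg : ∀ t, IsMarkovKernel (g t))
    (Φ : (ℕ → Y) → (ℕ → X) → A → ℝ)
    (hΦ : Measurable fun p : (ℕ → Y) × (ℕ → X) × A => Φ p.1 p.2.1 p.2.2) :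
    ∀ n t, StronglyMeasurable (fun p : (ℕ → Y) × (ℕ → X) × A =>
      pathInt μ f g (fun y x => Φ y x p.2.2) p.2.2 n t p.1 p.2.1) := by
  intro n
  induction n using Nat.strong_induction_on with
  | _ n ih =>
    obtain _ | _ | m := n
    · intro t
      simpa only [pathInt] using hΦ.stronglyMeasurable
    · intro t
      simp only [pathInt]
      exact MeasureTheory.StronglyMeasurable.integral_prod_right' (ν := μ)
        (Measurable.stronglyMeasurable
          ((meas_fterm hf_meas t).mul (hΦ.comp (meas_upd₁ t))))
    · intro t
      haveI := hg (t + 1)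
      have hinner : StronglyMeasurable (fun q : ((ℕ → Y) × (ℕ → X) × A) × Y =>
          ∫ xt, pathInt μ f g (fun y x => Φ y x q.1.2.2) q.1.2.2 (m + 1) (t + 1)
            (Function.update q.1.1 t q.2) (Function.update q.1.2.1 (t + 1) xt)
            ∂(g (t + 1) (Function.update q.1.1 t q.2, q.1.2.1, q.1.2.2))) := by
        have := MeasureTheory.StronglyMeasurable.integral_kernel_prod_right'
          (κ := (g (t + 1)).comap _ (meas_upd₁ t))
          ((ih (m + 1) (by omega) (t + 1)).comp_measurable (meas_upd₂ t))
        simpa only [Kernel.comap_apply, Function.comp_apply] using this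
      simp only [pathInt]
      exact MeasureTheory.StronglyMeasurable.integral_prod_right' (ν := μ)
        (((meas_fterm hf_meas t).stronglyMeasurable).mul hinner)

private lemma pathLint_meas [SigmaFinite μ]
    (hf_meas : ∀ t, Measurable fun p : Y × Y × X × A => f t p.1 p.2.1 p.2.2.1 p.2.2.2)
    (hg : ∀ t, IsMarkovKernel (g t))
    (Φ : (ℕ → Y) → (ℕ → X) → A → ℝ≥0∞)
    (hΦ : Measurable fun p : (ℕ → Y) × (ℕ → X) × A => Φ p.1 p.2.1 p.2.2) :
    ∀ n t, Measurable (fun p : (ℕ → Y) × (ℕ → X) × A =>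
      pathLint μ f g (fun y x => Φ y x p.2.2) p.2.2 n t p.1 p.2.1) := by
  intro n
  induction n using Nat.strong_induction_on with
  | _ n ih =>
    obtain _ | _ | m := n
    · intro t
      simpa only [pathLint] using hΦ
    · intro t
      simp only [pathLint]
      exact Measurable.lintegral_prod_right' (ν := μ)
        (((meas_fterm hf_meas t).ennreal_ofReal).mul (hΦ.comp (meas_upd₁ t)))
    · intro t
      haveI := hg (t + 1)
      have hinner : Measurable (fun q : ((ℕ → Y) × (ℕ → X) × A) × Y =>
          ∫⁻ xt, pathLint μ f g (fun y x => Φ y x q.1.2.2) q.1.2.2 (m + 1) (t + 1)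
            (Function.update q.1.1 t q.2) (Function.update q.1.2.1 (t + 1) xt)
            ∂(g (t + 1) (Function.update q.1.1 t q.2, q.1.2.1, q.1.2.2))) := by
        have := Measurable.lintegral_kernel_prod_right'
          (κ := (g (t + 1)).comap _ (meas_upd₁ t))
          ((ih (m + 1) (by omega) (t + 1)).comp (meas_upd₂ t))
        simpa only [Kernel.comap_apply, Function.comp_apply] using this
      simp only [pathLint]
      exact Measurable.lintegral_prod_right' (ν := μ)
        (((meas_fterm hf_meas t).ennreal_ofReal).mul hinner)

private lemma pathInt_abs_le
    (hf_nonneg : ∀ t ylag x a y, 0 ≤ f t y ylag x a)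
    (φ : (ℕ → Y) → (ℕ → X) → ℝ) (a : A) :
    ∀ n t (y : ℕ → Y) (x : ℕ → X), ENNReal.ofReal |pathInt μ f g φ a n t y x| ≤
      pathLint μ f g (fun y x => ENNReal.ofReal |φ y x|) a n t y x := by
  intro n
  induction n using Nat.strong_induction_on with
  | _ n ih =>
    obtain _ | _ | m := n
    · intro t y x; simp [pathInt, pathLint]
    · intro t y x
      simp only [pathInt, pathLint]
      refine le_trans (le_of_eq (Real.enorm_eq_ofReal_abs _).symm) ?_
      refine le_trans (enorm_integral_le_lintegral_enorm _)
        (lintegral_mono fun yt => le_of_eq ?_)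
      rw [Real.enorm_eq_ofReal_abs, abs_mul, abs_of_nonneg (hf_nonneg _ _ _ _ _),
        ENNReal.ofReal_mul (hf_nonneg _ _ _ _ _)]
    · intro t y x
      simp only [pathInt, pathLint]
      refine le_trans (le_of_eq (Real.enorm_eq_ofReal_abs _).symm) ?_
      refine le_trans (enorm_integral_le_lintegral_enorm _)
        (lintegral_mono fun yt => ?_)
      rw [Real.enorm_eq_ofReal_abs, abs_mul, abs_of_nonneg (hf_nonneg _ _ _ _ _),
        ENNReal.ofReal_mul (hf_nonneg _ _ _ _ _)]
      refine mul_le_mul_right ?_ _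
      rw [← Real.enorm_eq_ofReal_abs]
      refine le_trans (enorm_integral_le_lintegral_enorm _)
        (lintegral_mono fun xt => ?_)
      rw [Real.enorm_eq_ofReal_abs]
      exact ih (m + 1) (by omega) (t + 1) _ _

end Aux
section Aux2

variable {μ : Measure Y} {f : ℕ → Y → Y → X → A → ℝ}
  {g : ℕ → Kernel ((ℕ → Y) × (ℕ → X) × A) X}

private lemma pathInt_inner_meas [SigmaFinite μ]
    (hf_meas : ∀ t, Measurable fun p : Y × Y × X × A => f t p.1 p.2.1 p.2.2.1 p.2.2.2)
    (hg : ∀ t, IsMarkovKernel (g t))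
    (Φ : (ℕ → Y) → (ℕ → X) → A → ℝ)
    (hΦ : Measurable fun p : (ℕ → Y) × (ℕ → X) × A => Φ p.1 p.2.1 p.2.2)
    (m t : ℕ) :
    StronglyMeasurable (fun q : ((ℕ → Y) × (ℕ → X) × A) × Y =>
      ∫ xt, pathInt μ f g (fun y x => Φ y x q.1.2.2) q.1.2.2 (m + 1) (t + 1)
        (Function.update q.1.1 t q.2) (Function.update q.1.2.1 (t + 1) xt)
        ∂(g (t + 1) (Function.update q.1.1 t q.2, q.1.2.1, q.1.2.2))) := by
  haveI := hg (t + 1)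
  have := MeasureTheory.StronglyMeasurable.integral_kernel_prod_right'
    (κ := (g (t + 1)).comap _ (meas_upd₁ t))
    ((pathInt_meas (μ := μ) (g := g) hf_meas hg Φ hΦ (m + 1) (t + 1)).comp_measurable (meas_upd₂ t))
  simpa only [Kernel.comap_apply, Function.comp_apply] using this

private lemma pathLint_inner_meas [SigmaFinite μ]
    (hf_meas : ∀ t, Measurable fun p : Y × Y × X × A => f t p.1 p.2.1 p.2.2.1 p.2.2.2)
    (hg : ∀ t, IsMarkovKernel (g t))
    (Φ : (ℕ → Y) → (ℕ → X) → A → ℝ≥0∞)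
    (hΦ : Measurable fun p : (ℕ → Y) × (ℕ → X) × A => Φ p.1 p.2.1 p.2.2)
    (m t : ℕ) :
    Measurable (fun q : ((ℕ → Y) × (ℕ → X) × A) × Y =>
      ∫⁻ xt, pathLint μ f g (fun y x => Φ y x q.1.2.2) q.1.2.2 (m + 1) (t + 1)
        (Function.update q.1.1 t q.2) (Function.update q.1.2.1 (t + 1) xt)
        ∂(g (t + 1) (Function.update q.1.1 t q.2, q.1.2.1, q.1.2.2))) := by
  haveI := hg (t + 1)
  have := Measurable.lintegral_kernel_prod_right'
    (κ := (g (t + 1)).comap _ (meas_upd₁ t))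
    ((pathLint_meas (μ := μ) (g := g) hf_meas hg Φ hΦ (m + 1) (t + 1)).comp (meas_upd₂ t))
  simpa only [Kernel.comap_apply, Function.comp_apply] using this

private lemma pathInt_eq_iterInt_s1
    (hg : ∀ t, IsMarkovKernel (g t)) (T : ℕ)
    (ψ : (ℕ → Y) → (ℕ → X) → ℝ) (a : A)
    (hii : ∀ s, 2 ≤ s → s ≤ T → ∀ (y : ℕ → Y) (x x' : ℕ → X),
      (∀ i, i < s → x i = x' i) →
      iterInt μ f ψ a x (T - s + 1) s y = iterInt μ f ψ a x' (T - s + 1) s y) :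
    ∀ n t, 1 ≤ n → 1 ≤ t → n + t = T + 1 → ∀ (y : ℕ → Y) (x : ℕ → X),
      pathInt μ f g ψ a n t y x = iterInt μ f ψ a x n t y := by
  intro n
  induction n using Nat.strong_induction_on with
  | _ n ih =>
    obtain _ | _ | m := n
    · intro t h1; omega
    · intro t _ _ _ y x
      simp only [pathInt, iterInt]
    · intro t _ ht hsum y x
      haveI := hg (t + 1)
      rw [pathInt]
      conv_rhs => rw [iterInt]
      refine integral_congr_ae (Filter.Eventually.of_forall fun yt => ?_)
      have hpt : ∀ xt, pathInt μ f g ψ a (m + 1) (t + 1) (Function.update y t yt)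
          (Function.update x (t + 1) xt) =
          iterInt μ f ψ a x (m + 1) (t + 1) (Function.update y t yt) := by
        intro xt
        rw [ih (m + 1) (by omega) (t + 1) (by omega) (by omega) (by omega)]
        have hTs : T - (t + 1) + 1 = m + 1 := by omega
        have := hii (t + 1) (by omega) (by omega) (Function.update y t yt)
          (Function.update x (t + 1) xt) x
          (fun i hi => Function.update_of_ne (by omega) _ _)
        rwa [hTs] at this
      simp only [hpt, integral_const, probReal_univ, one_smul]

end Aux2
section Aux3

variable {μ : Measure Y} {f : ℕ → Y → Y → X → A → ℝ}
  {g : ℕ → Kernel ((ℕ → Y) × (ℕ → X) × A) X}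

private lemma integrable_level1 [SigmaFinite μ]
    (hf_meas : ∀ t, Measurable fun p : Y × Y × X × A => f t p.1 p.2.1 p.2.2.1 p.2.2.2)
    (hf_nonneg : ∀ t ylag x a y, 0 ≤ f t y ylag x a)
    (Φ : (ℕ → Y) → (ℕ → X) → A → ℝ)
    (hΦ : Measurable fun p : (ℕ → Y) × (ℕ → X) × A => Φ p.1 p.2.1 p.2.2)
    (t : ℕ) (y : ℕ → Y) (x : ℕ → X) (a : A)
    (hfin : (∫⁻ yt, ENNReal.ofReal (f t yt (y (t - 1)) (x t) a) *
        ENNReal.ofReal |Φ (Function.update y t yt) x a| ∂μ) ≠ ⊤) :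
    Integrable (fun yt => f t yt (y (t - 1)) (x t) a * Φ (Function.update y t yt) x a) μ := by
  have sl : Measurable fun yt : Y => (((y, x, a), yt) : ((ℕ → Y) × (ℕ → X) × A) × Y) :=
    measurable_const.prodMk measurable_id
  constructor
  · exact (((meas_fterm hf_meas t).mul (hΦ.comp (meas_upd₁ t))).comp sl).aestronglyMeasurable
  · refine (hasFiniteIntegral_iff_norm _).2
      (lt_of_le_of_lt (lintegral_mono fun yt => le_of_eq ?_) hfin.lt_top)
    rw [Real.norm_eq_abs, abs_mul, abs_of_nonneg (hf_nonneg _ _ _ _ _),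
      ENNReal.ofReal_mul (hf_nonneg _ _ _ _ _)]

private lemma pathInt_sub [SigmaFinite μ]
    (hf_meas : ∀ t, Measurable fun p : Y × Y × X × A => f t p.1 p.2.1 p.2.2.1 p.2.2.2)
    (hf_nonneg : ∀ t ylag x a y, 0 ≤ f t y ylag x a)
    (hg : ∀ t, IsMarkovKernel (g t))
    (Φ₁ Φ₂ : (ℕ → Y) → (ℕ → X) → A → ℝ)
    (hΦ₁ : Measurable fun p : (ℕ → Y) × (ℕ → X) × A => Φ₁ p.1 p.2.1 p.2.2)
    (hΦ₂ : Measurable fun p : (ℕ → Y) × (ℕ → X) × A => Φ₂ p.1 p.2.1 p.2.2) :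
    ∀ n t (y : ℕ → Y) (x : ℕ → X) (a : A),
      pathLint μ f g (fun y x => ENNReal.ofReal |Φ₁ y x a|) a n t y x ≠ ⊤ →
      pathLint μ f g (fun y x => ENNReal.ofReal |Φ₂ y x a|) a n t y x ≠ ⊤ →
      pathInt μ f g (fun y x => Φ₁ y x a - Φ₂ y x a) a n t y x =
        pathInt μ f g (fun y x => Φ₁ y x a) a n t y x -
          pathInt μ f g (fun y x => Φ₂ y x a) a n t y x := by
  intro n
  induction n using Nat.strong_induction_on with
  | _ n ih =>
    obtain _ | _ | m := n
    · intro t y x a _ _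
      simp [pathInt]
    · intro t y x a h1 h2
      simp only [pathLint] at h1 h2
      simp only [pathInt]
      simp_rw [mul_sub]
      exact integral_sub (integrable_level1 hf_meas hf_nonneg Φ₁ hΦ₁ t y x a h1)
        (integrable_level1 hf_meas hf_nonneg Φ₂ hΦ₂ t y x a h2)
    · intro t y x a h1 h2
      haveI := hg (t + 1)
      simp only [pathLint] at h1 h2
      have sl : Measurable fun yt : Y => (((y, x, a), yt) : ((ℕ → Y) × (ℕ → X) × A) × Y) :=
        measurable_const.prodMk measurable_id
      have mc : Measurable fun yt => f t yt (y (t - 1)) (x t) a :=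
        (meas_fterm hf_meas t).comp sl
      have mL₁ : Measurable fun yt =>
          ∫⁻ xt, pathLint μ f g (fun y x => ENNReal.ofReal |Φ₁ y x a|) a (m + 1) (t + 1)
            (Function.update y t yt) (Function.update x (t + 1) xt)
            ∂(g (t + 1) (Function.update y t yt, x, a)) :=
        (pathLint_inner_meas (μ := μ) (g := g) hf_meas hg
          (fun y x a => ENNReal.ofReal |Φ₁ y x a|) (hΦ₁.abs.ennreal_ofReal) m t).comp sl
      have mL₂ : Measurable fun yt =>
          ∫⁻ xt, pathLint μ f g (fun y x => ENNReal.ofReal |Φ₂ y x a|) a (m + 1) (t + 1)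
            (Function.update y t yt) (Function.update x (t + 1) xt)
            ∂(g (t + 1) (Function.update y t yt, x, a)) :=
        (pathLint_inner_meas (μ := μ) (g := g) hf_meas hg
          (fun y x a => ENNReal.ofReal |Φ₂ y x a|) (hΦ₂.abs.ennreal_ofReal) m t).comp sl
      -- integrability of the μ-level integrands
      have intc : ∀ (Φ : (ℕ → Y) → (ℕ → X) → A → ℝ),
          (Measurable fun p : (ℕ → Y) × (ℕ → X) × A => Φ p.1 p.2.1 p.2.2) →
          (∫⁻ yt, ENNReal.ofReal (f t yt (y (t - 1)) (x t) a) *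
            ∫⁻ xt, pathLint μ f g (fun y x => ENNReal.ofReal |Φ y x a|) a (m + 1) (t + 1)
              (Function.update y t yt) (Function.update x (t + 1) xt)
              ∂(g (t + 1) (Function.update y t yt, x, a)) ∂μ) ≠ ⊤ →
          Integrable (fun yt => f t yt (y (t - 1)) (x t) a *
            ∫ xt, pathInt μ f g (fun y x => Φ y x a) a (m + 1) (t + 1)
              (Function.update y t yt) (Function.update x (t + 1) xt)
              ∂(g (t + 1) (Function.update y t yt, x, a))) μ := by
        intro Φ hΦ hfin
        constructor
        · exact (mc.stronglyMeasurable.mul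
            ((pathInt_inner_meas (μ := μ) (g := g) hf_meas hg Φ hΦ m t).comp_measurable
              sl)).aestronglyMeasurable
        · refine (hasFiniteIntegral_iff_norm _).2
            (lt_of_le_of_lt (lintegral_mono fun yt => ?_) hfin.lt_top)
          rw [Real.norm_eq_abs, abs_mul, abs_of_nonneg (hf_nonneg _ _ _ _ _),
            ENNReal.ofReal_mul (hf_nonneg _ _ _ _ _)]
          refine mul_le_mul_right ?_ _
          rw [← Real.enorm_eq_ofReal_abs]
          refine le_trans (enorm_integral_le_lintegral_enorm _)
            (lintegral_mono fun xt => ?_)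
          rw [Real.enorm_eq_ofReal_abs]
          exact pathInt_abs_le hf_nonneg _ a (m + 1) (t + 1) _ _
      -- a.e. pointwise identity
      have haeq : (fun yt => f t yt (y (t - 1)) (x t) a *
            ∫ xt, pathInt μ f g (fun y x => Φ₁ y x a - Φ₂ y x a) a (m + 1) (t + 1)
              (Function.update y t yt) (Function.update x (t + 1) xt)
              ∂(g (t + 1) (Function.update y t yt, x, a))) =ᵐ[μ]
          (fun yt => (f t yt (y (t - 1)) (x t) a *
            ∫ xt, pathInt μ f g (fun y x => Φ₁ y x a) a (m + 1) (t + 1)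
              (Function.update y t yt) (Function.update x (t + 1) xt)
              ∂(g (t + 1) (Function.update y t yt, x, a))) -
            (f t yt (y (t - 1)) (x t) a *
            ∫ xt, pathInt μ f g (fun y x => Φ₂ y x a) a (m + 1) (t + 1)
              (Function.update y t yt) (Function.update x (t + 1) xt)
              ∂(g (t + 1) (Function.update y t yt, x, a)))) := by
        have hae1 := ae_lt_top (mc.ennreal_ofReal.mul mL₁) h1
        have hae2 := ae_lt_top (mc.ennreal_ofReal.mul mL₂) h2
        filter_upwards [hae1, hae2] with yt hy1 hy2
        rcases eq_or_lt_of_le (hf_nonneg t (y (t - 1)) (x t) a yt) with hc0 | hc0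
        · rw [← hc0]; simp
        · have hne : ENNReal.ofReal (f t yt (y (t - 1)) (x t) a) ≠ 0 := by
            simp only [ne_eq, ENNReal.ofReal_eq_zero, not_le]; exact hc0
          have hL1 : (∫⁻ xt, pathLint μ f g (fun y x => ENNReal.ofReal |Φ₁ y x a|) a
              (m + 1) (t + 1) (Function.update y t yt) (Function.update x (t + 1) xt)
              ∂(g (t + 1) (Function.update y t yt, x, a))) ≠ ⊤ := by
            intro hT
            rw [Pi.mul_apply, hT, ENNReal.mul_top hne] at hy1
            exact lt_irrefl _ hy1
          have hL2 : (∫⁻ xt, pathLint μ f g (fun y x => ENNReal.ofReal |Φ₂ y x a|) a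
              (m + 1) (t + 1) (Function.update y t yt) (Function.update x (t + 1) xt)
              ∂(g (t + 1) (Function.update y t yt, x, a))) ≠ ⊤ := by
            intro hT
            rw [Pi.mul_apply, hT, ENNReal.mul_top hne] at hy2
            exact lt_irrefl _ hy2
          have slmap : Measurable fun xt : X =>
              ((Function.update y t yt, Function.update x (t + 1) xt, a) :
                (ℕ → Y) × (ℕ → X) × A) :=
            measurable_const.prodMk ((measurable_update _).prodMk measurable_const)
          have msl1 : Measurable fun xt =>
              pathLint μ f g (fun y x => ENNReal.ofReal |Φ₁ y x a|) a (m + 1) (t + 1)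
                (Function.update y t yt) (Function.update x (t + 1) xt) :=
            (pathLint_meas (μ := μ) (g := g) hf_meas hg
              (fun y x a => ENNReal.ofReal |Φ₁ y x a|) (hΦ₁.abs.ennreal_ofReal)
              (m + 1) (t + 1)).comp slmap
          have msl2 : Measurable fun xt =>
              pathLint μ f g (fun y x => ENNReal.ofReal |Φ₂ y x a|) a (m + 1) (t + 1)
                (Function.update y t yt) (Function.update x (t + 1) xt) :=
            (pathLint_meas (μ := μ) (g := g) hf_meas hg
              (fun y x a => ENNReal.ofReal |Φ₂ y x a|) (hΦ₂.abs.ennreal_ofReal)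
              (m + 1) (t + 1)).comp slmap
          have hintk : ∀ (Φ : (ℕ → Y) → (ℕ → X) → A → ℝ),
              (Measurable fun p : (ℕ → Y) × (ℕ → X) × A => Φ p.1 p.2.1 p.2.2) →
              (∫⁻ xt, pathLint μ f g (fun y x => ENNReal.ofReal |Φ y x a|) a
                (m + 1) (t + 1) (Function.update y t yt) (Function.update x (t + 1) xt)
                ∂(g (t + 1) (Function.update y t yt, x, a))) ≠ ⊤ →
              Integrable (fun xt => pathInt μ f g (fun y x => Φ y x a) a (m + 1) (t + 1)
                (Function.update y t yt) (Function.update x (t + 1) xt))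
                (g (t + 1) (Function.update y t yt, x, a)) := by
            intro Φ hΦ hfin
            constructor
            · exact ((pathInt_meas (μ := μ) (g := g) hf_meas hg Φ hΦ (m + 1)
                (t + 1)).comp_measurable slmap).aestronglyMeasurable
            · refine (hasFiniteIntegral_iff_norm _).2
                (lt_of_le_of_lt (lintegral_mono fun xt => ?_) hfin.lt_top)
              rw [Real.norm_eq_abs]
              exact pathInt_abs_le hf_nonneg _ a (m + 1) (t + 1) _ _
          have hI : (∫ xt, pathInt μ f g (fun y x => Φ₁ y x a - Φ₂ y x a) a (m + 1) (t + 1)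
                (Function.update y t yt) (Function.update x (t + 1) xt)
                ∂(g (t + 1) (Function.update y t yt, x, a))) =
              (∫ xt, pathInt μ f g (fun y x => Φ₁ y x a) a (m + 1) (t + 1)
                (Function.update y t yt) (Function.update x (t + 1) xt)
                ∂(g (t + 1) (Function.update y t yt, x, a))) -
              (∫ xt, pathInt μ f g (fun y x => Φ₂ y x a) a (m + 1) (t + 1)
                (Function.update y t yt) (Function.update x (t + 1) xt)
                ∂(g (t + 1) (Function.update y t yt, x, a))) := by
            rw [← integral_sub (hintk Φ₁ hΦ₁ hL1) (hintk Φ₂ hΦ₂ hL2)]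
            refine integral_congr_ae ?_
            filter_upwards [ae_lt_top msl1 hL1, ae_lt_top msl2 hL2] with xt hx1 hx2
            exact ih (m + 1) (by omega) (t + 1) _ _ a hx1.ne hx2.ne
          rw [hI, mul_sub]
      simp only [pathInt]
      rw [integral_congr_ae haeq]
      exact integral_sub (intc Φ₁ hΦ₁ h1) (intc Φ₂ hΦ₂ h2)

end Aux3
/-- **Theorem 2, Part (A)**: if the pair `(φ, h)` satisfies the average-effect FHR
conditions (i) and (ii) — i.e. `φ − h` integrates to zero against `∏_{t=1}^T f_t` for
all `(y_0, x^T, a)`, and its partial integrals against `∏_{t=s}^T f_t` do not depend on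
`(x_s, …, x_T)` — then for every data generating process `ω = (g, π, ν)` under which
both `φ(Y^T, X^T)` and `h(Y^T, X^T, A)` are absolutely integrable,
`E[φ(Y^T, X^T)] = E[h(Y^T, X^T, A)]`. -/
theorem theorem2_partA
    (μ : Measure Y) [SigmaFinite μ] (T : ℕ) (hT : 2 ≤ T)
    (f : ℕ → Y → Y → X → A → ℝ)
    (hf_meas : ∀ t, Measurable fun p : Y × Y × X × A => f t p.1 p.2.1 p.2.2.1 p.2.2.2)
    (hf_nonneg : ∀ t ylag x a y, 0 ≤ f t y ylag x a)
    (hf_one : ∀ t (ylag : Y) (x : X) (a : A), ∫⁻ y, ENNReal.ofReal (f t y ylag x a) ∂μ = 1)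
    (φ : (ℕ → Y) → (ℕ → X) → ℝ)
    (h : (ℕ → Y) → (ℕ → X) → A → ℝ)
    (hφ_meas : Measurable fun p : (ℕ → Y) × (ℕ → X) => φ p.1 p.2)
    (hh_meas : Measurable fun p : (ℕ → Y) × (ℕ → X) × A => h p.1 p.2.1 p.2.2)
    -- average-effect FHR condition (i)
    (hi : ∀ (y : ℕ → Y) (x : ℕ → X) (a : A),
      iterInt μ f (fun y' x' => φ y' x' - h y' x' a) a x T 1 y = 0)
    -- average-effect FHR condition (ii)
    (hii : ∀ s, 2 ≤ s → s ≤ T → ∀ (y : ℕ → Y) (x x' : ℕ → X) (a : A),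
      (∀ i, i < s → x i = x' i) →
      iterInt μ f (fun y' x' => φ y' x' - h y' x' a) a x (T - s + 1) s y =
        iterInt μ f (fun y' x' => φ y' x' - h y' x' a) a x' (T - s + 1) s y)
    -- the data generating process ω = (g, π, ν)
    (ν : Measure (Y × X)) [IsProbabilityMeasure ν]
    (π : Kernel (Y × X) A) [IsMarkovKernel π]
    (g : ℕ → Kernel ((ℕ → Y) × (ℕ → X) × A) X) (hg : ∀ t, IsMarkovKernel (g t))
    (y₀ : ℕ → Y) (x₀ : ℕ → X)
    -- absolute integrability of φ under the induced joint law
    (hφint : (∫⁻ p, ∫⁻ a, pathLint μ f g (fun y x => ENNReal.ofReal |φ y x|) a T 1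
        (Function.update y₀ 0 p.1) (Function.update x₀ 1 p.2) ∂(π p) ∂ν) ≠ ⊤)
    -- absolute integrability of h under the induced joint law
    (hhint : (∫⁻ p, ∫⁻ a, pathLint μ f g (fun y x => ENNReal.ofReal |h y x a|) a T 1
        (Function.update y₀ 0 p.1) (Function.update x₀ 1 p.2) ∂(π p) ∂ν) ≠ ⊤) :
    (∫ p, ∫ a, pathInt μ f g φ a T 1
        (Function.update y₀ 0 p.1) (Function.update x₀ 1 p.2) ∂(π p) ∂ν) =
    (∫ p, ∫ a, pathInt μ f g (fun y x => h y x a) a T 1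
        (Function.update y₀ 0 p.1) (Function.update x₀ 1 p.2) ∂(π p) ∂ν) := by

  have hφ' : Measurable fun p : (ℕ → Y) × (ℕ → X) × A => φ p.1 p.2.1 :=
    hφ_meas.comp (measurable_fst.prodMk measurable_snd.fst)
  have hmap : Measurable fun q : (Y × X) × A =>
      ((Function.update y₀ 0 q.1.1, Function.update x₀ 1 q.1.2, q.2) :
        (ℕ → Y) × (ℕ → X) × A) :=
    ((measurable_update y₀).comp measurable_fst.fst).prodMk
      (((measurable_update x₀).comp measurable_fst.snd).prodMk measurable_snd)
  have mφ : Measurable fun p : Y × X =>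
      ∫⁻ a, pathLint μ f g (fun y x => ENNReal.ofReal |φ y x|) a T 1
        (Function.update y₀ 0 p.1) (Function.update x₀ 1 p.2) ∂π p := by
    exact Measurable.lintegral_kernel_prod_right' (κ := π)
      ((pathLint_meas (μ := μ) (g := g) hf_meas hg
        (fun y x _ => ENNReal.ofReal |φ y x|) (hφ'.abs.ennreal_ofReal) T 1).comp hmap)
  have mh : Measurable fun p : Y × X =>
      ∫⁻ a, pathLint μ f g (fun y x => ENNReal.ofReal |h y x a|) a T 1
        (Function.update y₀ 0 p.1) (Function.update x₀ 1 p.2) ∂π p := by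
    exact Measurable.lintegral_kernel_prod_right' (κ := π)
      ((pathLint_meas (μ := μ) (g := g) hf_meas hg
        (fun y x a => ENNReal.ofReal |h y x a|) (hh_meas.abs.ennreal_ofReal) T 1).comp hmap)
  refine integral_congr_ae ?_
  filter_upwards [ae_lt_top mφ hφint, ae_lt_top mh hhint] with p hp1 hp2
  have hmapa : Measurable fun a : A =>
      ((Function.update y₀ 0 p.1, Function.update x₀ 1 p.2, a) :
        (ℕ → Y) × (ℕ → X) × A) :=
    measurable_const.prodMk (measurable_const.prodMk measurable_id)
  have mφa : Measurable fun a : A =>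
      pathLint μ f g (fun y x => ENNReal.ofReal |φ y x|) a T 1
        (Function.update y₀ 0 p.1) (Function.update x₀ 1 p.2) :=
    (pathLint_meas (μ := μ) (g := g) hf_meas hg
      (fun y x _ => ENNReal.ofReal |φ y x|) (hφ'.abs.ennreal_ofReal) T 1).comp hmapa
  have mha : Measurable fun a : A =>
      pathLint μ f g (fun y x => ENNReal.ofReal |h y x a|) a T 1
        (Function.update y₀ 0 p.1) (Function.update x₀ 1 p.2) :=
    (pathLint_meas (μ := μ) (g := g) hf_meas hg
      (fun y x a => ENNReal.ofReal |h y x a|) (hh_meas.abs.ennreal_ofReal) T 1).comp hmapa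
  refine integral_congr_ae ?_
  filter_upwards [ae_lt_top mφa hp1.ne, ae_lt_top mha hp2.ne] with a ha1 ha2
  have hsub := pathInt_sub (μ := μ) (g := g) hf_meas hf_nonneg hg
    (fun y x _ => φ y x) h hφ' hh_meas T 1
    (Function.update y₀ 0 p.1) (Function.update x₀ 1 p.2) a ha1.ne ha2.ne
  have hzero : pathInt μ f g (fun y x => φ y x - h y x a) a T 1
      (Function.update y₀ 0 p.1) (Function.update x₀ 1 p.2) = 0 := by
    rw [pathInt_eq_iterInt_s1 (μ := μ) hg T (fun y' x' => φ y' x' - h y' x' a) a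
      (fun s hs hsT y xx xx' hxx => hii s hs hsT y xx xx' a hxx) T 1
      (by omega) (by omega) (by omega)]
    exact hi _ _ a
  exact sub_eq_zero.mp (hsub.symm.trans hzero)
end
end

section
/- Instrumented first-difference moment functions are FHR. Suppose that for t ∈ {T−1, T} there exist measurable functions η_t : 𝒴^{t+1} × 𝒳^t → ℝ and a measurable function b : 𝒴 × 𝒳 × 𝒜 → ℝ such that, for both t = T−1 and t = T and for all arguments, ∫ η_t(y_0,…,y_{t−1}, y, x_1,…,x_t) f_t(y | y_{t−1}, x_t, a) dμ(y) = b(y_0, x_1, a). Then for any bounded measurable m : 𝒴^{T−1} × 𝒳^{T−1} → ℝ, the function φ(y^T, x^T) = [η_T(y_0,…,y_T, x_1,…,x_T) − η_{T−1}(y_0,…,y_{T−1}, x_1,…,x_{T−1})] · m(y_0,…,y_{T−2}, x_1,…,x_{T−1}) satisfies the FHR conditions (i) and (ii), provided all the integrals appearing in conditions (i)–(ii) converge absolutely. -/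
/-!
Instrumented first-difference moment functions are FHR (Bonhomme, Dano & Graham,
display (2.10)/(2.11)): if `η_{T−1}` and `η_T` both have conditional mean
`b(y_0, x_1, a)` given the respective past histories, then
`[η_T − η_{T−1}] · m(y^{T−2}, x^{T−1})` satisfies the FHR conditions.
-/

open MeasureTheory Function
open scoped ENNReal

noncomputable section

variable {Y X A : Type*} [MeasurableSpace Y] [MeasurableSpace X] [MeasurableSpace A]

/-- `ℝ≥0∞`-valued analogue of `iterInt`, expressing absolute convergence. -/
noncomputable def iterLint (μ : Measure Y) (f : ℕ → Y → Y → X → A → ℝ)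
    (φ : (ℕ → Y) → (ℕ → X) → ℝ≥0∞) (a : A) (x : ℕ → X) :
    ℕ → ℕ → (ℕ → Y) → ℝ≥0∞
  | 0, _, y => φ y x
  | n + 1, t, y =>
      ∫⁻ yt, ENNReal.ofReal (f t yt (y (t - 1)) (x t) a) *
        iterLint μ f φ a x n (t + 1) (Function.update y t yt) ∂μ

/-- **Instrumented first differences are FHR.** Suppose for `t ∈ {T−1, T}` the
measurable functions `η_t(y^t, x^t)` satisfy
`∫ η_t(y^{t−1}, y, x^t) f_t(y | y_{t−1}, x_t, a) dμ(y) = b(y_0, x_1, a)` for all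
arguments. Then for any bounded measurable `m(y^{T−2}, x^{T−1})`, the function
`φ(y^T, x^T) = [η_T(y^T, x^T) − η_{T−1}(y^{T−1}, x^{T−1})] · m(y^{T−2}, x^{T−1})`
satisfies the FHR conditions (i) and (ii), provided all the integrals appearing in
conditions (i)–(ii) converge absolutely. -/
theorem instrumented_first_difference_FHR
    (μ : Measure Y) [SigmaFinite μ] (T : ℕ) (hT : 2 ≤ T)
    (f : ℕ → Y → Y → X → A → ℝ)
    (hf_meas : ∀ t, Measurable fun p : Y × Y × X × A => f t p.1 p.2.1 p.2.2.1 p.2.2.2)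
    (hf_nonneg : ∀ t ylag x a y, 0 ≤ f t y ylag x a)
    (hf_one : ∀ t (ylag : Y) (x : X) (a : A), ∫⁻ y, ENNReal.ofReal (f t y ylag x a) ∂μ = 1)
    -- η_T and η_{T−1}, measurable functions of (y^T, x^T) resp. (y^{T−1}, x^{T−1})
    (ηT ηT1 : (ℕ → Y) → (ℕ → X) → ℝ)
    (hηT_meas : Measurable fun p : (ℕ → Y) × (ℕ → X) => ηT p.1 p.2)
    (hηT1_meas : Measurable fun p : (ℕ → Y) × (ℕ → X) => ηT1 p.1 p.2)
    (hηT_dep : ∀ (y y' : ℕ → Y) (x x' : ℕ → X),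
      (∀ i, i ≤ T → y i = y' i) → (∀ i, i ≤ T → x i = x' i) → ηT y x = ηT y' x')
    (hηT1_dep : ∀ (y y' : ℕ → Y) (x x' : ℕ → X),
      (∀ i, i ≤ T - 1 → y i = y' i) → (∀ i, i ≤ T - 1 → x i = x' i) → ηT1 y x = ηT1 y' x')
    -- the common conditional mean b(y_0, x_1, a)
    (b : Y → X → A → ℝ)
    (hb_meas : Measurable fun p : Y × X × A => b p.1 p.2.1 p.2.2)
    (hmeanT : ∀ (y : ℕ → Y) (x : ℕ → X) (a : A),
      (∫ yt, f T yt (y (T - 1)) (x T) a * ηT (Function.update y T yt) x ∂μ) =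
        b (y 0) (x 1) a)
    (hmeanT1 : ∀ (y : ℕ → Y) (x : ℕ → X) (a : A),
      (∫ yt, f (T - 1) yt (y (T - 2)) (x (T - 1)) a *
          ηT1 (Function.update y (T - 1) yt) x ∂μ) = b (y 0) (x 1) a)
    -- the instrument: a bounded measurable function of (y^{T−2}, x^{T−1})
    (m : (ℕ → Y) → (ℕ → X) → ℝ)
    (hm_meas : Measurable fun p : (ℕ → Y) × (ℕ → X) => m p.1 p.2)
    (hm_bdd : ∃ C, ∀ (y : ℕ → Y) (x : ℕ → X), |m y x| ≤ C)
    (hm_dep : ∀ (y y' : ℕ → Y) (x x' : ℕ → X),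
      (∀ i, i ≤ T - 2 → y i = y' i) → (∀ i, i ≤ T - 1 → x i = x' i) → m y x = m y' x')
    -- absolute convergence of all the integrals appearing in conditions (i)–(ii)
    (hconv : ∀ s, 1 ≤ s → s ≤ T → ∀ (y : ℕ → Y) (x : ℕ → X) (a : A),
      iterLint μ f (fun y' x' => ENNReal.ofReal |(ηT y' x' - ηT1 y' x') * m y' x'|) a x
        (T - s + 1) s y ≠ ⊤) :
    FHR μ f T (fun y x => (ηT y x - ηT1 y x) * m y x) := by
  set φ : (ℕ → Y) → (ℕ → X) → ℝ := fun y x => (ηT y x - ηT1 y x) * m y x with hφdef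
  -- unfolding lemma
  have hstep : ∀ (a : A) (x : ℕ → X) (n t : ℕ) (y : ℕ → Y),
      iterInt μ f φ a x (n + 1) t y =
        ∫ yt, f t yt (y (t - 1)) (x t) a *
          iterInt μ f φ a x n (t + 1) (Function.update y t yt) ∂μ := by
    intro a x n t y; rfl
  have hzero : ∀ (a : A) (x : ℕ → X) (t : ℕ) (y : ℕ → Y),
      iterInt μ f φ a x 0 t y = φ y x := by
    intro a x t y; rfl
  -- measurability of φ
  have hφ_meas : Measurable fun p : (ℕ → Y) × (ℕ → X) => φ p.1 p.2 :=
    (hηT_meas.sub hηT1_meas).mul hm_meas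
  -- integrability and integral of the conditional densities
  have hf_meas1 : ∀ t (ylag : Y) (xx : X) (a : A),
      Measurable fun yt => f t yt ylag xx a := by
    intro t ylag xx a
    have : (fun yt => f t yt ylag xx a) =
        (fun p : Y × Y × X × A => f t p.1 p.2.1 p.2.2.1 p.2.2.2) ∘
          (fun yt => (yt, ylag, xx, a)) := rfl
    rw [this]
    exact (hf_meas t).comp (measurable_id.prodMk measurable_const)
  have hf_int : ∀ t (ylag : Y) (xx : X) (a : A),
      Integrable (fun yt => f t yt ylag xx a) μ := by
    intro t ylag xx a
    refine ⟨(hf_meas1 t ylag xx a).aestronglyMeasurable, ?_⟩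
    rw [hasFiniteIntegral_iff_ofReal
      (Filter.Eventually.of_forall fun yt => hf_nonneg t ylag xx a yt)]
    rw [hf_one t ylag xx a]
    exact ENNReal.one_lt_top
  have hf_int_one : ∀ t (ylag : Y) (xx : X) (a : A),
      (∫ yt, f t yt ylag xx a ∂μ) = 1 := by
    intro t ylag xx a
    rw [integral_eq_lintegral_of_nonneg_ae
      (Filter.Eventually.of_forall fun yt => hf_nonneg t ylag xx a yt)
      (hf_meas1 t ylag xx a).aestronglyMeasurable, hf_one]
    simp
  -- L1 : innermost integral
  have L1 : ∀ (y : ℕ → Y) (x : ℕ → X) (a : A),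
      iterInt μ f φ a x 1 T y = (b (y 0) (x 1) a - ηT1 y x) * m y x := by
    intro y x a
    have hupd_η : ∀ yt, ηT1 (Function.update y T yt) x = ηT1 y x := fun yt =>
      hηT1_dep _ _ _ _ (fun i hi => Function.update_of_ne (by omega) _ _)
        (fun _ _ => rfl)
    have hupd_m : ∀ yt, m (Function.update y T yt) x = m y x := fun yt =>
      hm_dep _ _ _ _ (fun i hi => Function.update_of_ne (by omega) _ _)
        (fun _ _ => rfl)
    have hunfold : iterInt μ f φ a x 1 T y =
        ∫ yt, f T yt (y (T - 1)) (x T) a * φ (Function.update y T yt) x ∂μ := by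
      rw [hstep]
      congr 1
    by_cases hk : m y x = 0
    · rw [hunfold]
      have : (fun yt => f T yt (y (T - 1)) (x T) a * φ (Function.update y T yt) x)
          = fun _ => (0 : ℝ) := by
        funext yt
        simp [hφdef, hupd_m yt, hk]
      rw [this, integral_zero, hk, mul_zero]
    · set k := m y x with hkdef
      set c1 := ηT1 y x with hc1def
      -- integrability of f·φ(update)
      have hmeasφu : Measurable fun yt =>
          f T yt (y (T - 1)) (x T) a * φ (Function.update y T yt) x := by
        refine (hf_meas1 T _ _ a).mul ?_
        exact hφ_meas.comp ((measurable_update y).prodMk measurable_const)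
      have hco := hconv T (by omega) le_rfl y x a
      rw [show T - T + 1 = 1 from by omega] at hco
      have hcoeq : iterLint μ f
          (fun y' x' => ENNReal.ofReal |(ηT y' x' - ηT1 y' x') * m y' x'|) a x 1 T y
          = ∫⁻ yt, ENNReal.ofReal
              ‖f T yt (y (T - 1)) (x T) a * φ (Function.update y T yt) x‖ ∂μ := by
        show (∫⁻ yt, ENNReal.ofReal (f T yt (y (T - 1)) (x T) a) *
            iterLint μ f _ a x 0 (T + 1) (Function.update y T yt) ∂μ) = _
        congr 1
        funext yt
        show ENNReal.ofReal (f T yt (y (T - 1)) (x T) a) *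
            ENNReal.ofReal |φ (Function.update y T yt) x| = _
        rw [← ENNReal.ofReal_mul (hf_nonneg T _ _ a yt)]
        congr 1
        conv_rhs => rw [Real.norm_eq_abs, abs_mul]
        rw [abs_of_nonneg (hf_nonneg T _ _ a yt)]
      have hφint : Integrable (fun yt =>
          f T yt (y (T - 1)) (x T) a * φ (Function.update y T yt) x) μ := by
        refine ⟨hmeasφu.aestronglyMeasurable, ?_⟩
        rw [hasFiniteIntegral_iff_norm, ← hcoeq]
        exact lt_top_iff_ne_top.2 hco
      -- integrability of f·ηT(update)
      have hfη_eq : (fun yt => f T yt (y (T - 1)) (x T) a *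
            ηT (Function.update y T yt) x)
          = fun yt => (1 / k) *
              (f T yt (y (T - 1)) (x T) a * φ (Function.update y T yt) x)
            + c1 * f T yt (y (T - 1)) (x T) a := by
        funext yt
        simp only [hφdef, hupd_η yt, hupd_m yt, ← hkdef, ← hc1def]
        field_simp
        ring
      have hηint : Integrable (fun yt => f T yt (y (T - 1)) (x T) a *
          ηT (Function.update y T yt) x) μ := by
        rw [hfη_eq]
        exact (hφint.const_mul _).add ((hf_int T _ _ a).const_mul c1)
      have heq2 : (fun yt => f T yt (y (T - 1)) (x T) a * φ (Function.update y T yt) x)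
          = fun yt => k * (f T yt (y (T - 1)) (x T) a * ηT (Function.update y T yt) x)
              - (c1 * k) * f T yt (y (T - 1)) (x T) a := by
        funext yt
        simp only [hφdef, hupd_η yt, hupd_m yt, ← hkdef, ← hc1def]
        ring
      rw [hunfold, heq2, integral_sub (hηint.const_mul k) ((hf_int T _ _ a).const_mul _),
        integral_const_mul, integral_const_mul, hmeanT y x a, hf_int_one]
      ring
  -- L2 : two innermost integrals give zero
  have L2 : ∀ (y : ℕ → Y) (x : ℕ → X) (a : A), iterInt μ f φ a x 2 (T - 1) y = 0 := by
    intro y x a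
    have h1 : T - 1 + 1 = T := by omega
    have h2 : T - 1 - 1 = T - 2 := by omega
    rw [show (2 : ℕ) = 1 + 1 from rfl, hstep]
    simp only [h1, h2]
    simp only [L1]
    have hupd0 : ∀ yt : Y, (Function.update y (T - 1) yt) 0 = y 0 := fun yt =>
      Function.update_of_ne (by omega) _ _
    have hupd_m : ∀ yt : Y, m (Function.update y (T - 1) yt) x = m y x := fun yt =>
      hm_dep _ _ _ _ (fun i hi => Function.update_of_ne (by omega) _ _)
        (fun _ _ => rfl)
    set c := b (y 0) (x 1) a with hcdef
    set k := m y x with hkdef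
    by_cases hk : k = 0
    · have : (fun yt => f (T - 1) yt (y (T - 2)) (x (T - 1)) a *
          ((b ((Function.update y (T - 1) yt) 0) (x 1) a -
              ηT1 (Function.update y (T - 1) yt) x) *
            m (Function.update y (T - 1) yt) x)) = fun _ => (0 : ℝ) := by
        funext yt
        rw [hupd_m yt, hk, mul_zero, mul_zero]
      rw [this, integral_zero]
    · have heq : (fun yt => f (T - 1) yt (y (T - 2)) (x (T - 1)) a *
          ((b ((Function.update y (T - 1) yt) 0) (x 1) a -
              ηT1 (Function.update y (T - 1) yt) x) *
            m (Function.update y (T - 1) yt) x))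
          = fun yt => (c * k) * f (T - 1) yt (y (T - 2)) (x (T - 1)) a -
              k * (f (T - 1) yt (y (T - 2)) (x (T - 1)) a *
                ηT1 (Function.update y (T - 1) yt) x) := by
        funext yt
        rw [hupd0 yt, hupd_m yt]
        ring
      rw [heq]
      by_cases hint : Integrable (fun yt => f (T - 1) yt (y (T - 2)) (x (T - 1)) a *
          ηT1 (Function.update y (T - 1) yt) x) μ
      · rw [integral_sub ((hf_int (T - 1) _ _ a).const_mul _) (hint.const_mul k),
          integral_const_mul, integral_const_mul, hf_int_one, hmeanT1 y x a]
        ring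
      · refine integral_undef ?_
        intro hcontra
        apply hint
        have h3 : Integrable (fun yt =>
            (c * k) * f (T - 1) yt (y (T - 2)) (x (T - 1)) a -
            ((c * k) * f (T - 1) yt (y (T - 2)) (x (T - 1)) a -
              k * (f (T - 1) yt (y (T - 2)) (x (T - 1)) a *
                ηT1 (Function.update y (T - 1) yt) x))) μ :=
          ((hf_int (T - 1) _ _ a).const_mul _).sub hcontra
        have h4 : Integrable (fun yt => (1 / k) *
            ((c * k) * f (T - 1) yt (y (T - 2)) (x (T - 1)) a -
            ((c * k) * f (T - 1) yt (y (T - 2)) (x (T - 1)) a -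
              k * (f (T - 1) yt (y (T - 2)) (x (T - 1)) a *
                ηT1 (Function.update y (T - 1) yt) x)))) μ := h3.const_mul _
        have h5 : (fun yt => (1 / k) *
            ((c * k) * f (T - 1) yt (y (T - 2)) (x (T - 1)) a -
            ((c * k) * f (T - 1) yt (y (T - 2)) (x (T - 1)) a -
              k * (f (T - 1) yt (y (T - 2)) (x (T - 1)) a *
                ηT1 (Function.update y (T - 1) yt) x))))
            = fun yt => f (T - 1) yt (y (T - 2)) (x (T - 1)) a *
                ηT1 (Function.update y (T - 1) yt) x := by
          funext yt
          field_simp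
          ring
        rwa [h5] at h4
  -- L3 : any block of ≥ 2 innermost integrals ending at T gives zero
  have L3 : ∀ n, n ≤ T - 2 → ∀ (y : ℕ → Y) (x : ℕ → X) (a : A),
      iterInt μ f φ a x (n + 2) (T - 1 - n) y = 0 := by
    intro n
    induction n with
    | zero =>
      intro _ y x a
      simpa using L2 y x a
    | succ n ih =>
      intro hn y x a
      have h1 : T - 1 - (n + 1) + 1 = T - 1 - n := by omega
      rw [show n + 1 + 2 = (n + 2) + 1 from rfl, hstep]
      simp only [h1]
      simp only [ih (by omega)]
      simp
  refine ⟨?_, ?_⟩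
  · intro y x a
    have h := L3 (T - 2) le_rfl y x a
    rw [show T - 2 + 2 = T from by omega, show T - 1 - (T - 2) = 1 from by omega] at h
    exact h
  · intro s hs2 hsT y x x' a hxx'
    by_cases hsEq : s = T
    · subst hsEq
      rw [show s - s + 1 = 1 from by omega, L1 y x a, L1 y x' a,
        hxx' 1 (by omega),
        hηT1_dep y y x x' (fun _ _ => rfl) (fun i hi => hxx' i (by omega)),
        hm_dep y y x x' (fun _ _ => rfl) (fun i hi => hxx' i (by omega))]
    · have h0 := L3 (T - s - 1) (by omega) y x a
      have h0' := L3 (T - s - 1) (by omega) y x' a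
      rw [show T - 1 - (T - s - 1) = s from by omega] at h0 h0'
      rw [show T - s + 1 = (T - s - 1) + 2 from by omega, h0, h0']

end
end

section
/- Simple FHR moment functions in the MPH model. Consider the MPH model with T ≥ 2 periods (f_t = f_θ for every t). For each fixed t ∈ {2,…,T} and any bounded measurable function m : (0,∞)^{t−1} × (ℝ^k)^{t−1} → ℝ, the function φ(y^T, x^T) = [ρ_θ(y_t, y_{t−1}, x_t) − ρ_θ(y_{t−1}, y_{t−2}, x_{t−1})] · m(y_0,…,y_{t−2}, x_1,…,x_{t−1}) satisfies the FHR conditions (i) and (ii) with respect to the MPH densities f_θ. -/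
/-!
Simple FHR moment functions in the multi-spell mixed proportional hazards (MPH) model
(Bonhomme, Dano & Graham, display (2.13)): for each `t ∈ {2,…,T}`,
`[ρ_θ(z_t) − ρ_θ(z_{t−1})] · m(y^{t−2}, x^{t−1})` satisfies the FHR conditions.
-/

open MeasureTheory Function Real Set
open scoped ENNReal

noncomputable section

section MPH

variable {k : ℕ}

set_option linter.unusedSectionVars false
set_option linter.unusedVariables false

/-- Integrated baseline hazard `Λ(y) = ∫₀^y λ(u) du`. -/
noncomputable def intHaz (lam : ℝ → ℝ) (y : ℝ) : ℝ := ∫ u in Set.Ioc (0:ℝ) y, lam u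

section ExpInt
variable {c : ℝ}

lemma tendsto_exp_neg_mul (hc : 0 < c) :
    Filter.Tendsto (fun u : ℝ => Real.exp (-(u * c))) Filter.atTop (nhds 0) := by
  apply Real.tendsto_exp_atBot.comp
  exact Filter.tendsto_neg_atTop_atBot.comp
    (Filter.Tendsto.atTop_mul_const hc Filter.tendsto_id)

lemma hasDerivAt_G1 (c u : ℝ) :
    HasDerivAt (fun u : ℝ => -Real.exp (-(u * c))) (c * Real.exp (-(u * c))) u := by
  have h1 : HasDerivAt (fun u : ℝ => -(u * c)) (-c) u := by
    simpa using ((hasDerivAt_id u).mul_const c).fun_neg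
  have := (Real.hasDerivAt_exp (-(u * c))).comp u h1
  simpa [mul_comm] using this.fun_neg

lemma integrableOn_g1 (hc : 0 < c) :
    IntegrableOn (fun u : ℝ => c * Real.exp (-(u * c))) (Set.Ioi 0) := by
  refine integrableOn_Ioi_deriv_of_nonneg' (g := fun u => -Real.exp (-(u * c))) (l := 0)
    (fun x _ => hasDerivAt_G1 c x) (fun x _ => by positivity) ?_
  simpa using (tendsto_exp_neg_mul hc).neg

lemma integral_g1 (hc : 0 < c) :
    ∫ u in Set.Ioi (0:ℝ), c * Real.exp (-(u * c)) = 1 := by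
  have := integral_Ioi_of_hasDerivAt_of_nonneg' (g := fun u => -Real.exp (-(u * c)))
    (l := 0) (a := 0) (fun x _ => hasDerivAt_G1 c x) (fun x _ => by positivity)
    (by simpa using (tendsto_exp_neg_mul hc).neg)
  simpa using this

end ExpInt

section ExpInt2
variable {c : ℝ}

lemma tendsto_G2 (hc : 0 < c) :
    Filter.Tendsto (fun u : ℝ => -((u + 1/c) * Real.exp (-(u * c)))) Filter.atTop (nhds 0) := by
  have h1 : Filter.Tendsto (fun u : ℝ => u * Real.exp (-(u * c))) Filter.atTop (nhds 0) := by
    have := tendsto_rpow_mul_exp_neg_mul_atTop_nhds_zero 1 c hc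
    refine this.congr' ?_
    filter_upwards [Filter.eventually_gt_atTop (0:ℝ)] with u hu
    rw [Real.rpow_one]; ring_nf
  have h2 : Filter.Tendsto (fun u : ℝ => (1/c) * Real.exp (-(u * c))) Filter.atTop (nhds 0) := by
    simpa using (tendsto_exp_neg_mul hc).const_mul (1/c)
  have := (h1.add h2).neg
  norm_num at this
  refine this.congr (fun u => by ring)

lemma hasDerivAt_G2 (hc : 0 < c) (u : ℝ) :
    HasDerivAt (fun u : ℝ => -((u + 1/c) * Real.exp (-(u * c))))
      (u * c * Real.exp (-(u * c))) u := by
  have h1 : HasDerivAt (fun u : ℝ => u + 1/c) 1 u := by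
    simpa using (hasDerivAt_id u).add_const (1/c)
  have h2 : HasDerivAt (fun u : ℝ => Real.exp (-(u * c))) (-c * Real.exp (-(u * c))) u := by
    have h3 : HasDerivAt (fun u : ℝ => -(u * c)) (-c) u := by
      simpa using ((hasDerivAt_id u).mul_const c).fun_neg
    simpa [mul_comm, Function.comp_def] using (Real.hasDerivAt_exp (-(u * c))).comp u h3
  have := (h1.fun_mul h2).fun_neg
  refine this.congr_deriv ?_
  have hc' : c ≠ 0 := hc.ne'
  field_simp
  ring

lemma integrableOn_g2 (hc : 0 < c) :
    IntegrableOn (fun u : ℝ => u * c * Real.exp (-(u * c))) (Set.Ioi 0) := by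
  refine integrableOn_Ioi_deriv_of_nonneg' (l := 0)
    (fun x _ => hasDerivAt_G2 hc x) (fun x hx => by have hx' := Set.mem_Ioi.mp hx; positivity) (tendsto_G2 hc)

lemma integral_g2 (hc : 0 < c) :
    ∫ u in Set.Ioi (0:ℝ), u * c * Real.exp (-(u * c)) = 1/c := by
  have := integral_Ioi_of_hasDerivAt_of_nonneg' (l := 0) (a := 0)
    (fun x _ => hasDerivAt_G2 hc x) (fun x hx => by have hx' := Set.mem_Ioi.mp hx; positivity) (tendsto_G2 hc)
  simpa using this

end ExpInt2

section Haz
variable {lam : ℝ → ℝ}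

lemma intHaz_of_nonpos {y : ℝ} (hy : y ≤ 0) : intHaz lam y = 0 := by
  unfold intHaz
  rw [Set.Ioc_eq_empty (by simpa using hy)]
  simp

lemma intHaz_zero : intHaz lam 0 = 0 := intHaz_of_nonpos le_rfl

variable (hlam_pos : ∀ y ∈ Set.Ioi (0:ℝ), 0 < lam y)
  (hlam_int : ∀ y : ℝ, 0 < y → IntegrableOn lam (Set.Ioc 0 y) volume)

include hlam_int in
lemma lam_integrableOn_Ioc {a b : ℝ} (ha : 0 ≤ a) : IntegrableOn lam (Set.Ioc a b) volume := by
  rcases le_or_gt b a with h | h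
  · rw [Set.Ioc_eq_empty (not_lt.mpr h)]; exact integrableOn_empty
  · exact (hlam_int b (lt_of_le_of_lt ha h)).mono_set
      (Set.Ioc_subset_Ioc_left ha)

include hlam_int in
lemma intHaz_add {a b : ℝ} (ha : 0 ≤ a) (hab : a ≤ b) :
    intHaz lam b = intHaz lam a + ∫ u in Set.Ioc a b, lam u := by
  unfold intHaz
  rw [← MeasureTheory.setIntegral_union (Set.Ioc_disjoint_Ioc_of_le le_rfl) measurableSet_Ioc
      (lam_integrableOn_Ioc hlam_int le_rfl) (lam_integrableOn_Ioc hlam_int ha),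
    Set.Ioc_union_Ioc_eq_Ioc ha hab]

include hlam_pos hlam_int in
lemma intHaz_strictMonoOn : StrictMonoOn (intHaz lam) (Set.Ici 0) := by
  intro a ha b hb hab
  rw [intHaz_add hlam_int ha hab.le]
  have hpos : 0 < ∫ u in Set.Ioc a b, lam u := by
    rw [MeasureTheory.setIntegral_pos_iff_support_of_nonneg_ae ?_ (lam_integrableOn_Ioc hlam_int ha)]
    · refine lt_of_lt_of_le (b := volume (Set.Ioc a b)) ?_ (measure_mono ?_)
      · simp [Real.volume_Ioc, hab]
      · intro u hu
        exact ⟨(hlam_pos u (lt_of_le_of_lt ha hu.1)).ne', hu⟩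
    · filter_upwards [MeasureTheory.ae_restrict_mem measurableSet_Ioc] with u hu
      exact (hlam_pos u (lt_of_le_of_lt ha hu.1)).le
  linarith

include hlam_pos hlam_int in
lemma intHaz_mono : Monotone (intHaz lam) := by
  intro a b hab
  rcases le_or_gt b 0 with hb | hb
  · rw [intHaz_of_nonpos (hab.trans hb), intHaz_of_nonpos hb]
  rcases le_or_gt a 0 with ha | ha
  · rw [intHaz_of_nonpos ha]
    rw [← intHaz_zero (lam := lam)]
    exact ((intHaz_strictMonoOn hlam_pos hlam_int) (le_refl (0:ℝ)) hb.le hb).le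
  · rcases eq_or_lt_of_le hab with rfl | h
    · exact le_rfl
    · exact ((intHaz_strictMonoOn hlam_pos hlam_int) ha.le (ha.trans h).le h).le

include hlam_pos hlam_int in
lemma intHaz_pos {y : ℝ} (hy : 0 < y) : 0 < intHaz lam y := by
  have := (intHaz_strictMonoOn hlam_pos hlam_int) (le_refl (0:ℝ)) hy.le hy
  rwa [intHaz_zero] at this

include hlam_pos hlam_int in
lemma intHaz_measurable : Measurable (intHaz lam) :=
  (intHaz_mono hlam_pos hlam_int).measurable

include hlam_int in
lemma intHaz_continuousOn {B : ℝ} (hB : 0 < B) :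
    ContinuousOn (intHaz lam) (Set.Icc 0 B) := by
  have : IntegrableOn lam (Set.Icc 0 B) volume := by
    rw [integrableOn_Icc_iff_integrableOn_Ioc]
    exact hlam_int B hB
  exact intervalIntegral.continuousOn_primitive this

variable (hlam_top : Filter.Tendsto (intHaz lam) Filter.atTop Filter.atTop)

include hlam_int hlam_top in
lemma intHaz_surj {v : ℝ} (hv : 0 < v) : ∃ y, 0 < y ∧ intHaz lam y = v := by
  obtain ⟨B, hB⟩ := (Filter.tendsto_atTop.mp hlam_top v).exists_forall_of_atTop
  set B' := max B 1 with hB'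
  have hB'0 : (0:ℝ) < B' := lt_of_lt_of_le one_pos (le_max_right _ _)
  have hvB : v ≤ intHaz lam B' := hB B' (le_max_left _ _)
  have := intermediate_value_Icc hB'0.le (intHaz_continuousOn hlam_int hB'0)
  have hmem : v ∈ Set.Icc (intHaz lam 0) (intHaz lam B') := by
    rw [intHaz_zero]; exact ⟨hv.le, hvB⟩
  obtain ⟨y, hy, hyv⟩ := this hmem
  refine ⟨y, ?_, hyv⟩
  rcases eq_or_lt_of_le hy.1 with h | h
  · exfalso; rw [← h, intHaz_zero] at hyv; exact hv.ne hyv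
  · exact h

end Haz

section CoV
variable {lam : ℝ → ℝ}
variable (hlam_meas : Measurable lam)
  (hlam_pos : ∀ y ∈ Set.Ioi (0:ℝ), 0 < lam y)
  (hlam_int : ∀ y : ℝ, 0 < y → IntegrableOn lam (Set.Ioc 0 y) volume)
  (hlam_top : Filter.Tendsto (intHaz lam) Filter.atTop Filter.atTop)

include hlam_meas hlam_pos hlam_int hlam_top in
lemma map_intHaz :
    Measure.map (intHaz lam)
      ((volume.restrict (Set.Ioi (0:ℝ))).withDensity (fun y => ENNReal.ofReal (lam y)))
      = volume.restrict (Set.Ioi (0:ℝ)) := by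
  set ν := (volume.restrict (Set.Ioi (0:ℝ))).withDensity (fun y => ENNReal.ofReal (lam y)) with hν
  have hΛmeas := intHaz_measurable hlam_pos hlam_int
  have hνapp : ∀ S : Set ℝ, MeasurableSet S →
      ν S = ∫⁻ y in S ∩ Set.Ioi 0, ENNReal.ofReal (lam y) ∂volume := by
    intro S hS
    rw [hν, withDensity_apply _ hS, Measure.restrict_restrict hS]
  have hΛpos : ∀ y : ℝ, 0 < y → 0 < intHaz lam y := fun y hy => intHaz_pos hlam_pos hlam_int hy
  have hmono := intHaz_mono hlam_pos hlam_int
  have hsmono := intHaz_strictMonoOn hlam_pos hlam_int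
  symm
  refine Measure.ext_of_Ioc' _ _ (fun a b _ => ?_) (fun u v huv => ?_)
  · exact ((Measure.restrict_apply_le _ _).trans_lt measure_Ioc_lt_top).ne
  · rw [Measure.map_apply hΛmeas measurableSet_Ioc]
    rcases le_or_gt v 0 with hv | hv
    · have h1 : Set.Ioc u v ∩ Set.Ioi (0:ℝ) = ∅ := by
        ext y; simp only [Set.mem_inter_iff, Set.mem_Ioc, Set.mem_Ioi, Set.mem_empty_iff_false,
          iff_false, not_and, and_imp]
        intro _ h2 h3; linarith
      have h2 : intHaz lam ⁻¹' Set.Ioc u v ∩ Set.Ioi (0:ℝ) = ∅ := by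
        ext y; simp only [Set.mem_inter_iff, Set.mem_preimage, Set.mem_Ioc, Set.mem_Ioi,
          Set.mem_empty_iff_false, iff_false, not_and, and_imp]
        intro _ h3 h4; exact absurd (h3.trans hv) (not_le.mpr (hΛpos y h4))
      rw [Measure.restrict_apply measurableSet_Ioc, h1, measure_empty,
        hνapp _ (hΛmeas measurableSet_Ioc), h2]
      simp
    · -- 0 < v
      obtain ⟨yv, hyv0, hyv⟩ := intHaz_surj hlam_int hlam_top hv
      set m := max u 0 with hm
      have hm0 : 0 ≤ m := le_max_right _ _
      have hmv : m < v := max_lt huv hv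
      obtain ⟨w, hw0, hwΛ⟩ : ∃ w, 0 ≤ w ∧ intHaz lam w = m := by
        rcases eq_or_lt_of_le hm0 with h | h
        · exact ⟨0, le_rfl, by rw [intHaz_zero, ← h]⟩
        · obtain ⟨w, hw, hwe⟩ := intHaz_surj hlam_int hlam_top h
          exact ⟨w, hw.le, hwe⟩
      have hset : intHaz lam ⁻¹' Set.Ioc u v ∩ Set.Ioi (0:ℝ) = Set.Ioc w yv := by
        ext y
        simp only [Set.mem_inter_iff, Set.mem_preimage, Set.mem_Ioc, Set.mem_Ioi]
        constructor
        · rintro ⟨⟨h1, h2⟩, h3⟩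
          have hmy : m < intHaz lam y := max_lt h1 (hΛpos y h3)
          constructor
          · by_contra h
            exact absurd (hwΛ ▸ hmono (not_lt.mp h)) (not_le.mpr hmy)
          · by_contra h
            exact absurd (hyv ▸ hsmono hyv0.le h3.le (not_le.mp h)) (not_lt.mpr h2)
        · rintro ⟨h1, h2⟩
          have hy0 : 0 < y := lt_of_le_of_lt hw0 h1
          have hml : m < intHaz lam y := hwΛ ▸ hsmono hw0 hy0.le h1
          refine ⟨⟨lt_of_le_of_lt (le_max_left u 0) hml, hyv ▸ hmono h2⟩, hy0⟩
      have hIoc : Set.Ioc u v ∩ Set.Ioi (0:ℝ) = Set.Ioc m v := by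
        ext y
        simp only [Set.mem_inter_iff, Set.mem_Ioc, Set.mem_Ioi, hm, max_lt_iff]
        constructor
        · rintro ⟨⟨h1, h2⟩, h3⟩; exact ⟨⟨h1, h3⟩, h2⟩
        · rintro ⟨⟨h1, h3⟩, h2⟩; exact ⟨⟨h1, h2⟩, h3⟩
      have hsub : Set.Ioc w yv ⊆ Set.Ioi (0:ℝ) := fun y hy => lt_of_le_of_lt hw0 hy.1
      rw [Measure.restrict_apply measurableSet_Ioc, hIoc,
        hνapp _ (hΛmeas measurableSet_Ioc), hset]
      have hint : IntegrableOn lam (Set.Ioc w yv) volume := lam_integrableOn_Ioc hlam_int hw0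
      have hnn : 0 ≤ᵐ[volume.restrict (Set.Ioc w yv)] lam := by
        filter_upwards [MeasureTheory.ae_restrict_mem measurableSet_Ioc] with z hz
        exact (hlam_pos z (lt_of_le_of_lt hw0 hz.1)).le
      rw [← MeasureTheory.ofReal_integral_eq_lintegral_ofReal hint hnn]
      have hwle : w ≤ yv := by
        by_contra h
        have := hsmono hyv0.le hw0 (not_le.mp h)
        rw [hyv, hwΛ] at this; linarith
      have : ∫ z in Set.Ioc w yv, lam z = v - m := by
        have := intHaz_add hlam_int hw0 hwle
        rw [hyv, hwΛ] at this; linarith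
      rw [this, Real.volume_Ioc]

include hlam_meas hlam_pos hlam_int hlam_top in
lemma integral_change_var (g : ℝ → ℝ) (hg : Measurable g) :
    ∫ y in Set.Ioi (0:ℝ), lam y * g (intHaz lam y) = ∫ u in Set.Ioi (0:ℝ), g u := by
  set ν := (volume.restrict (Set.Ioi (0:ℝ))).withDensity (fun y => ENNReal.ofReal (lam y)) with hν
  have hΛmeas := intHaz_measurable hlam_pos hlam_int
  have h1 : ∫ u in Set.Ioi (0:ℝ), g u = ∫ u, g u ∂(Measure.map (intHaz lam) ν) := by
    rw [map_intHaz hlam_meas hlam_pos hlam_int hlam_top]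
  rw [h1, integral_map hΛmeas.aemeasurable
    (by rw [map_intHaz hlam_meas hlam_pos hlam_int hlam_top]; exact hg.aestronglyMeasurable)]
  have h2 : ν = (volume.restrict (Set.Ioi (0:ℝ))).withDensity
      (fun y => ((lam y).toNNReal : ℝ≥0∞)) := rfl
  rw [h2, integral_withDensity_eq_integral_smul hlam_meas.real_toNNReal]
  refine integral_congr_ae ?_
  filter_upwards [MeasureTheory.ae_restrict_mem measurableSet_Ioi] with y hy
  have : (lam y).toNNReal • g (intHaz lam y) = lam y * g (intHaz lam y) := by
    rw [NNReal.smul_def, smul_eq_mul, Real.coe_toNNReal _ (hlam_pos y hy).le]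
  rw [this]

include hlam_meas hlam_pos hlam_int hlam_top in
lemma integrable_change_var (g : ℝ → ℝ) (hg : Measurable g)
    (hgi : IntegrableOn g (Set.Ioi (0:ℝ)) volume) :
    IntegrableOn (fun y => lam y * g (intHaz lam y)) (Set.Ioi (0:ℝ)) volume := by
  set ν := (volume.restrict (Set.Ioi (0:ℝ))).withDensity (fun y => ENNReal.ofReal (lam y)) with hν
  have hΛmeas := intHaz_measurable hlam_pos hlam_int
  have h1 : Integrable g (Measure.map (intHaz lam) ν) := by
    rw [map_intHaz hlam_meas hlam_pos hlam_int hlam_top]; exact hgi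
  have h2 : Integrable (g ∘ intHaz lam) ν := by
    rw [← integrable_map_measure
      (by rw [map_intHaz hlam_meas hlam_pos hlam_int hlam_top]; exact hg.aestronglyMeasurable)
      hΛmeas.aemeasurable]
    exact h1
  rw [show (g ∘ intHaz lam) = fun y => g (intHaz lam y) from rfl] at h2
  rw [hν, integrable_withDensity_iff (hlam_meas.ennreal_ofReal)
    (Filter.Eventually.of_forall (fun y => ENNReal.ofReal_lt_top))] at h2
  refine h2.congr ?_
  filter_upwards [MeasureTheory.ae_restrict_mem measurableSet_Ioi] with y hy
  rw [ENNReal.toReal_ofReal (hlam_pos y hy).le, mul_comm]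

end CoV



/-- `ρ_θ(y, y₋, x) = Λ_α(y) e^{γ y₋ + x'β}` in the MPH model. -/
noncomputable def mphRho (lam : ℝ → ℝ) (γ : ℝ) (β : Fin k → ℝ)
    (y ylag : ℝ) (x : Fin k → ℝ) : ℝ :=
  intHaz lam y * Real.exp (γ * ylag + ∑ i, x i * β i)

/-- Conditional duration density
`f_θ(y | y₋, x, a) = λ_α(y) e^{γ y₋ + x'β + a} exp(−Λ_α(y) e^{γ y₋ + x'β + a})`
of the MPH model. -/
noncomputable def mphDensity (lam : ℝ → ℝ) (γ : ℝ) (β : Fin k → ℝ)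
    (y ylag : ℝ) (x : Fin k → ℝ) (a : ℝ) : ℝ :=
  lam y * Real.exp (γ * ylag + ∑ i, x i * β i + a) *
    Real.exp (-(intHaz lam y * Real.exp (γ * ylag + ∑ i, x i * β i + a)))

section Density
set_option maxHeartbeats 1000000
variable {lam : ℝ → ℝ} {γ : ℝ} {β : Fin k → ℝ}
variable (hlam_meas : Measurable lam)
  (hlam_pos : ∀ y ∈ Set.Ioi (0:ℝ), 0 < lam y)
  (hlam_int : ∀ y : ℝ, 0 < y → IntegrableOn lam (Set.Ioc 0 y) volume)
  (hlam_top : Filter.Tendsto (intHaz lam) Filter.atTop Filter.atTop)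

include hlam_meas hlam_pos hlam_int hlam_top in
lemma mphDensity_integral_one (ylag a : ℝ) (x : Fin k → ℝ) :
    ∫ y in Set.Ioi (0:ℝ), mphDensity lam γ β y ylag x a = 1 := by
  set c := Real.exp (γ * ylag + ∑ i, x i * β i + a) with hc
  have hc0 : 0 < c := Real.exp_pos _
  have heq : ∀ y : ℝ, mphDensity lam γ β y ylag x a
      = lam y * (c * Real.exp (-(intHaz lam y * c))) := by
    intro y; unfold mphDensity; rw [← hc]; ring
  simp_rw [heq]
  have hmg : Measurable (fun u : ℝ => c * Real.exp (-(u * c))) := by fun_prop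
  rw [integral_change_var hlam_meas hlam_pos hlam_int hlam_top _ hmg]
  exact integral_g1 hc0

include hlam_meas hlam_pos hlam_int hlam_top in
lemma mphDensity_integrable (ylag a : ℝ) (x : Fin k → ℝ) :
    IntegrableOn (fun y => mphDensity lam γ β y ylag x a) (Set.Ioi (0:ℝ)) volume := by
  set c := Real.exp (γ * ylag + ∑ i, x i * β i + a) with hc
  have hc0 : 0 < c := Real.exp_pos _
  have heq : ∀ y : ℝ, mphDensity lam γ β y ylag x a
      = lam y * (c * Real.exp (-(intHaz lam y * c))) := by
    intro y; unfold mphDensity; rw [← hc]; ring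
  simp_rw [heq]
  have hmg : Measurable (fun u : ℝ => c * Real.exp (-(u * c))) := by fun_prop
  exact integrable_change_var hlam_meas hlam_pos hlam_int hlam_top _ hmg (integrableOn_g1 hc0)

include hlam_meas hlam_pos hlam_int hlam_top in
lemma mphRho_density_integral (ylag a : ℝ) (x : Fin k → ℝ) :
    ∫ y in Set.Ioi (0:ℝ), mphRho lam γ β y ylag x * mphDensity lam γ β y ylag x a
      = Real.exp (-a) := by
  set b := γ * ylag + ∑ i, x i * β i with hb
  set c := Real.exp (b + a) with hc
  have hc0 : 0 < c := Real.exp_pos _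
  have heq : ∀ y : ℝ, mphRho lam γ β y ylag x * mphDensity lam γ β y ylag x a
      = lam y * (Real.exp b * (intHaz lam y * c * Real.exp (-(intHaz lam y * c)))) := by
    intro y; unfold mphRho mphDensity; rw [← hb, ← hc]; ring
  simp_rw [heq]
  have hmg : Measurable (fun u : ℝ => Real.exp b * (u * c * Real.exp (-(u * c)))) := by fun_prop
  rw [integral_change_var hlam_meas hlam_pos hlam_int hlam_top _ hmg,
    MeasureTheory.integral_const_mul, integral_g2 hc0, hc, Real.exp_add, Real.exp_neg]
  have := Real.exp_ne_zero b
  have := Real.exp_ne_zero a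
  field_simp
  rw [hb, Real.exp_add, Real.exp_add]

include hlam_meas hlam_pos hlam_int hlam_top in
lemma mphRho_density_integrable (ylag a : ℝ) (x : Fin k → ℝ) :
    IntegrableOn (fun y => mphRho lam γ β y ylag x * mphDensity lam γ β y ylag x a)
      (Set.Ioi (0:ℝ)) volume := by
  set b := γ * ylag + ∑ i, x i * β i with hb
  set c := Real.exp (b + a) with hc
  have hc0 : 0 < c := Real.exp_pos _
  have heq : ∀ y : ℝ, mphRho lam γ β y ylag x * mphDensity lam γ β y ylag x a
      = lam y * (Real.exp b * (intHaz lam y * c * Real.exp (-(intHaz lam y * c)))) := by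
    intro y; unfold mphRho mphDensity; rw [← hb, ← hc]; ring
  simp_rw [heq]
  have hmg : Measurable (fun u : ℝ => Real.exp b * (u * c * Real.exp (-(u * c)))) := by fun_prop
  exact integrable_change_var hlam_meas hlam_pos hlam_int hlam_top _ hmg
    ((integrableOn_g2 hc0).const_mul _)

end Density

section Iter
variable {lam : ℝ → ℝ} {γ : ℝ} {β : Fin k → ℝ}
variable (hlam_meas : Measurable lam)
  (hlam_pos : ∀ y ∈ Set.Ioi (0:ℝ), 0 < lam y)
  (hlam_int : ∀ y : ℝ, 0 < y → IntegrableOn lam (Set.Ioc 0 y) volume)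
  (hlam_top : Filter.Tendsto (intHaz lam) Filter.atTop Filter.atTop)

include hlam_meas hlam_pos hlam_int hlam_top in
lemma iterInt_of_ignores (φ : (ℕ → ℝ) → (ℕ → Fin k → ℝ) → ℝ) (x : ℕ → Fin k → ℝ) (a : ℝ) :
    ∀ (n s : ℕ) (y : ℕ → ℝ),
      (∀ z z' : ℕ → ℝ, (∀ i, i < s → z i = z' i) → φ z x = φ z' x) →
      iterInt (volume.restrict (Set.Ioi (0:ℝ)))
        (fun _ y ylag xx aa => mphDensity lam γ β y ylag xx aa) φ a x n s y = φ y x := by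
  intro n
  induction n with
  | zero => intro s y _; simp [iterInt]
  | succ n ih =>
    intro s y h
    simp only [iterInt]
    have hin : ∀ yt : ℝ, iterInt (volume.restrict (Set.Ioi (0:ℝ)))
        (fun _ y ylag xx aa => mphDensity lam γ β y ylag xx aa) φ a x n (s+1)
        (Function.update y s yt) = φ y x := by
      intro yt
      rw [ih (s+1) (Function.update y s yt)
        (fun z z' hz => h z z' (fun i hi => hz i (Nat.lt_succ_of_lt hi)))]
      exact h _ _ (fun i hi => Function.update_of_ne (Nat.ne_of_lt hi) _ _)
    simp only [hin]
    rw [MeasureTheory.integral_mul_const,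
      mphDensity_integral_one hlam_meas hlam_pos hlam_int hlam_top, one_mul]

variable (t : ℕ) (ht1 : 2 ≤ t) (m : (ℕ → ℝ) → (ℕ → Fin k → ℝ) → ℝ)
  (hm_dep : ∀ (y y' : ℕ → ℝ) (x x' : ℕ → Fin k → ℝ),
      (∀ i, i ≤ t - 2 → y i = y' i) → (∀ i, i ≤ t - 1 → x i = x' i) → m y x = m y' x')

include hlam_meas hlam_pos hlam_int hlam_top ht1 hm_dep in
lemma iterInt_C1 (x : ℕ → Fin k → ℝ) (a : ℝ) (n : ℕ) (y : ℕ → ℝ) :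
    iterInt (volume.restrict (Set.Ioi (0:ℝ)))
      (fun _ y ylag xx aa => mphDensity lam γ β y ylag xx aa)
      (fun y x => (mphRho lam γ β (y t) (y (t - 1)) (x t) -
          mphRho lam γ β (y (t - 1)) (y (t - 2)) (x (t - 1))) * m y x)
      a x (n + 1) t y
      = (Real.exp (-a) - mphRho lam γ β (y (t - 1)) (y (t - 2)) (x (t - 1))) * m y x := by
  set φ : (ℕ → ℝ) → (ℕ → Fin k → ℝ) → ℝ :=
    fun y x => (mphRho lam γ β (y t) (y (t - 1)) (x t) -
          mphRho lam γ β (y (t - 1)) (y (t - 2)) (x (t - 1))) * m y x with hφ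
  have hφdep : ∀ z z' : ℕ → ℝ, (∀ i, i < t + 1 → z i = z' i) → φ z x = φ z' x := by
    intro z z' hz
    rw [hφ]
    simp only
    rw [hz t (by omega), hz (t-1) (by omega), hz (t-2) (by omega),
      hm_dep z z' x x (fun i hi => hz i (by omega)) (fun i _ => rfl)]
  simp only [iterInt]
  have hin : ∀ yt : ℝ, iterInt (volume.restrict (Set.Ioi (0:ℝ)))
      (fun _ y ylag xx aa => mphDensity lam γ β y ylag xx aa) φ a x n (t+1)
      (Function.update y t yt)
      = (mphRho lam γ β yt (y (t - 1)) (x t) -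
          mphRho lam γ β (y (t - 1)) (y (t - 2)) (x (t - 1))) * m y x := by
    intro yt
    rw [iterInt_of_ignores hlam_meas hlam_pos hlam_int hlam_top φ x a n (t+1)
      (Function.update y t yt)
      (fun z z' hz => hφdep z z' (fun i hi => hz i hi))]
    rw [hφ]
    simp only
    rw [Function.update_self, Function.update_of_ne (by omega : t - 1 ≠ t),
      Function.update_of_ne (by omega : t - 2 ≠ t),
      hm_dep (Function.update y t yt) y x x
        (fun i hi => Function.update_of_ne (by omega) _ _) (fun i _ => rfl)]
  simp only [hin]
  have hsplit : (fun yt : ℝ => mphDensity lam γ β yt (y (t-1)) (x t) a *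
      ((mphRho lam γ β yt (y (t - 1)) (x t) -
        mphRho lam γ β (y (t - 1)) (y (t - 2)) (x (t - 1))) * m y x))
      = fun yt : ℝ =>
        (mphRho lam γ β yt (y (t - 1)) (x t) * mphDensity lam γ β yt (y (t-1)) (x t) a)
          * m y x
        - mphDensity lam γ β yt (y (t-1)) (x t) a *
            (mphRho lam γ β (y (t - 1)) (y (t - 2)) (x (t - 1)) * m y x) := by
    funext yt; ring
  rw [hsplit, MeasureTheory.integral_sub
    ((mphRho_density_integrable hlam_meas hlam_pos hlam_int hlam_top _ _ _).mul_const _)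
    ((mphDensity_integrable hlam_meas hlam_pos hlam_int hlam_top _ _ _).mul_const _),
    MeasureTheory.integral_mul_const, MeasureTheory.integral_mul_const,
    mphRho_density_integral hlam_meas hlam_pos hlam_int hlam_top,
    mphDensity_integral_one hlam_meas hlam_pos hlam_int hlam_top]
  ring

include hlam_meas hlam_pos hlam_int hlam_top ht1 hm_dep in
lemma iterInt_C2 (x : ℕ → Fin k → ℝ) (a : ℝ) (n : ℕ) (y : ℕ → ℝ) :
    iterInt (volume.restrict (Set.Ioi (0:ℝ)))
      (fun _ y ylag xx aa => mphDensity lam γ β y ylag xx aa)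
      (fun y x => (mphRho lam γ β (y t) (y (t - 1)) (x t) -
          mphRho lam γ β (y (t - 1)) (y (t - 2)) (x (t - 1))) * m y x)
      a x (n + 2) (t - 1) y = 0 := by
  rw [iterInt]
  have ht : t - 1 + 1 = t := by omega
  have ht' : t - 1 - 1 = t - 2 := by omega
  rw [ht, ht']
  have hin : ∀ ys : ℝ, iterInt (volume.restrict (Set.Ioi (0:ℝ)))
      (fun _ y ylag xx aa => mphDensity lam γ β y ylag xx aa)
      (fun y x => (mphRho lam γ β (y t) (y (t - 1)) (x t) -
          mphRho lam γ β (y (t - 1)) (y (t - 2)) (x (t - 1))) * m y x)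
      a x (n + 1) t (Function.update y (t-1) ys)
      = (Real.exp (-a) - mphRho lam γ β ys (y (t - 2)) (x (t - 1))) * m y x := by
    intro ys
    rw [iterInt_C1 hlam_meas hlam_pos hlam_int hlam_top t ht1 m hm_dep x a n]
    rw [Function.update_self, Function.update_of_ne (by omega : t - 2 ≠ t - 1),
      hm_dep (Function.update y (t-1) ys) y x x
        (fun i hi => Function.update_of_ne (by omega) _ _) (fun i _ => rfl)]
  simp only [hin]
  have hsplit : (fun ys : ℝ => mphDensity lam γ β ys (y (t-2)) (x (t-1)) a *
      ((Real.exp (-a) - mphRho lam γ β ys (y (t - 2)) (x (t - 1))) * m y x))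
      = fun ys : ℝ =>
        mphDensity lam γ β ys (y (t-2)) (x (t-1)) a * (Real.exp (-a) * m y x)
        - (mphRho lam γ β ys (y (t - 2)) (x (t - 1)) *
            mphDensity lam γ β ys (y (t-2)) (x (t-1)) a) * m y x := by
    funext ys; ring
  rw [hsplit, MeasureTheory.integral_sub
    ((mphDensity_integrable hlam_meas hlam_pos hlam_int hlam_top _ _ _).mul_const _)
    ((mphRho_density_integrable hlam_meas hlam_pos hlam_int hlam_top _ _ _).mul_const _),
    MeasureTheory.integral_mul_const, MeasureTheory.integral_mul_const,
    mphRho_density_integral hlam_meas hlam_pos hlam_int hlam_top,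
    mphDensity_integral_one hlam_meas hlam_pos hlam_int hlam_top]
  ring

lemma iterInt_zero_step {φ : (ℕ → ℝ) → (ℕ → Fin k → ℝ) → ℝ} (x : ℕ → Fin k → ℝ) (a : ℝ)
    {n s : ℕ}
    (h : ∀ y : ℕ → ℝ, iterInt (volume.restrict (Set.Ioi (0:ℝ)))
      (fun _ y ylag xx aa => mphDensity lam γ β y ylag xx aa) φ a x n (s + 1) y = 0)
    (y : ℕ → ℝ) :
    iterInt (volume.restrict (Set.Ioi (0:ℝ)))
      (fun _ y ylag xx aa => mphDensity lam γ β y ylag xx aa) φ a x (n + 1) s y = 0 := by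
  rw [iterInt]
  simp only [h, mul_zero, MeasureTheory.integral_zero]

include hlam_meas hlam_pos hlam_int hlam_top ht1 hm_dep in
lemma iterInt_zero_all {T : ℕ} (ht2 : t ≤ T) (x : ℕ → Fin k → ℝ) (a : ℝ) :
    ∀ (d s : ℕ), s + d + 1 = t → 1 ≤ s → ∀ y : ℕ → ℝ,
    iterInt (volume.restrict (Set.Ioi (0:ℝ)))
      (fun _ y ylag xx aa => mphDensity lam γ β y ylag xx aa)
      (fun y x => (mphRho lam γ β (y t) (y (t - 1)) (x t) -
          mphRho lam γ β (y (t - 1)) (y (t - 2)) (x (t - 1))) * m y x)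
      a x (T - s + 1) s y = 0 := by
  intro d
  induction d with
  | zero =>
    intro s hst hs1 y
    have hs : s = t - 1 := by omega
    have hn : T - s + 1 = (T - t) + 2 := by omega
    rw [hs] at hn ⊢
    rw [hn]
    exact iterInt_C2 hlam_meas hlam_pos hlam_int hlam_top t ht1 m hm_dep x a (T - t) y
  | succ d ih =>
    intro s hst hs1 y
    have hn : T - s + 1 = (T - (s + 1) + 1) + 1 := by omega
    rw [hn]
    exact iterInt_zero_step x a (fun y' => ih (s+1) (by omega) (by omega) y') y

end Iter

/-- **Simple FHR moment functions in the MPH model.** In the MPH model with `T ≥ 2`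
periods (common density `f_θ` in every period, durations carrying Lebesgue measure on
`(0, ∞)`), for each fixed `t ∈ {2,…,T}` and any bounded measurable function
`m(y_0,…,y_{t−2}, x_1,…,x_{t−1})`, the moment function
`φ(y^T, x^T) = [ρ_θ(y_t, y_{t−1}, x_t) − ρ_θ(y_{t−1}, y_{t−2}, x_{t−1})] · m`
satisfies the FHR conditions (i) and (ii). -/
theorem mph_simple_moments_FHR
    (lam : ℝ → ℝ) (hlam_meas : Measurable lam)
    (hlam_pos : ∀ y ∈ Set.Ioi (0:ℝ), 0 < lam y)
    (hlam_int : ∀ y : ℝ, 0 < y → IntegrableOn lam (Set.Ioc 0 y) volume)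
    (hlam_top : Filter.Tendsto (intHaz lam) Filter.atTop Filter.atTop)
    (γ : ℝ) (β : Fin k → ℝ)
    (T : ℕ) (hT : 2 ≤ T) (t : ℕ) (ht1 : 2 ≤ t) (ht2 : t ≤ T)
    (m : (ℕ → ℝ) → (ℕ → Fin k → ℝ) → ℝ)
    (hm_meas : Measurable fun p : (ℕ → ℝ) × (ℕ → Fin k → ℝ) => m p.1 p.2)
    (hm_bdd : ∃ C, ∀ (y : ℕ → ℝ) (x : ℕ → Fin k → ℝ), |m y x| ≤ C)
    (hm_dep : ∀ (y y' : ℕ → ℝ) (x x' : ℕ → Fin k → ℝ),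
      (∀ i, i ≤ t - 2 → y i = y' i) → (∀ i, i ≤ t - 1 → x i = x' i) → m y x = m y' x') :
    FHR (volume.restrict (Set.Ioi (0:ℝ)))
      (fun _ y ylag x a => mphDensity lam γ β y ylag x a) T
      (fun y x =>
        (mphRho lam γ β (y t) (y (t - 1)) (x t) -
          mphRho lam γ β (y (t - 1)) (y (t - 2)) (x (t - 1))) * m y x) := by
  constructor
  · intro y x a
    rw [show T = T - 1 + 1 by omega]
    exact iterInt_zero_all hlam_meas hlam_pos hlam_int hlam_top t ht1 m hm_dep
      (by omega) x a (t - 2) 1 (by omega) le_rfl y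
  · intro s hs2 hsT y x x' a hxx'
    rcases lt_trichotomy s t with hst | hst | hst
    · rw [iterInt_zero_all hlam_meas hlam_pos hlam_int hlam_top t ht1 m hm_dep ht2 x a
          (t - s - 1) s (by omega) (by omega) y,
        iterInt_zero_all hlam_meas hlam_pos hlam_int hlam_top t ht1 m hm_dep ht2 x' a
          (t - s - 1) s (by omega) (by omega) y]
    · subst hst
      rw [iterInt_C1 hlam_meas hlam_pos hlam_int hlam_top s ht1 m hm_dep x a (T - s) y,
        iterInt_C1 hlam_meas hlam_pos hlam_int hlam_top s ht1 m hm_dep x' a (T - s) y,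
        hxx' (s - 1) (by omega),
        hm_dep y y x x' (fun i _ => rfl) (fun i hi => hxx' i (by omega))]
    · have hφx : ∀ z z' : ℕ → ℝ, (∀ i, i < s → z i = z' i) →
          (fun (y : ℕ → ℝ) (x : ℕ → Fin k → ℝ) =>
            (mphRho lam γ β (y t) (y (t - 1)) (x t) -
              mphRho lam γ β (y (t - 1)) (y (t - 2)) (x (t - 1))) * m y x) z x
          = (fun (y : ℕ → ℝ) (x : ℕ → Fin k → ℝ) =>
            (mphRho lam γ β (y t) (y (t - 1)) (x t) -
              mphRho lam γ β (y (t - 1)) (y (t - 2)) (x (t - 1))) * m y x) z' x := by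
        intro z z' hz
        simp only
        rw [hz t (by omega), hz (t-1) (by omega), hz (t-2) (by omega),
          hm_dep z z' x x (fun i hi => hz i (by omega)) (fun i _ => rfl)]
      have hφx' : ∀ z z' : ℕ → ℝ, (∀ i, i < s → z i = z' i) →
          (fun (y : ℕ → ℝ) (x : ℕ → Fin k → ℝ) =>
            (mphRho lam γ β (y t) (y (t - 1)) (x t) -
              mphRho lam γ β (y (t - 1)) (y (t - 2)) (x (t - 1))) * m y x) z x'
          = (fun (y : ℕ → ℝ) (x : ℕ → Fin k → ℝ) =>
            (mphRho lam γ β (y t) (y (t - 1)) (x t) -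
              mphRho lam γ β (y (t - 1)) (y (t - 2)) (x (t - 1))) * m y x) z' x' := by
        intro z z' hz
        simp only
        rw [hz t (by omega), hz (t-1) (by omega), hz (t-2) (by omega),
          hm_dep z z' x' x' (fun i hi => hz i (by omega)) (fun i _ => rfl)]
      rw [iterInt_of_ignores hlam_meas hlam_pos hlam_int hlam_top _ x a (T - s + 1) s y hφx,
        iterInt_of_ignores hlam_meas hlam_pos hlam_int hlam_top _ x' a (T - s + 1) s y hφx']
      rw [hxx' t (by omega), hxx' (t-1) (by omega),
        hm_dep y y x x' (fun i _ => rfl) (fun i hi => hxx' i (by omega))]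


end MPH

end
end

section
/- FHR moment function for the average structural hazard (ASH) in the MPH model. Consider the MPH model with T ≥ 2 periods and fix a target evaluation point (ỹ, ỹ₋, x̃) ∈ (0,∞) × (0,∞) × ℝ^k. Let c = λ_α(ỹ) e^{x̃'β + γ ỹ₋}, define h(y^T, x^T, a) = c·e^a and φ(y^T, x^T) = c·(T−1)/p̄, where p̄ = Σ_{t=1}^T ρ_θ(y_t, y_{t−1}, x_t). Then: (i) ∫ (φ(y^T, x^T) − h(y^T, x^T, a)) ∏_{t=1}^T f_θ(y_t | y_{t−1}, x_t, a) dy_1⋯dy_T = 0 for all (y_0, x_1,…,x_T, a); and (ii) for each s = 2,…,T, the partial integral ∫ (φ − h) ∏_{t=s}^T f_θ(y_t | y_{t−1}, x_t, a) dy_s⋯dy_T does not depend on (x_s,…,x_T). Consequently, under every feedback process and heterogeneity distribution making φ and h integrable, E[φ(Y^T, X^T)] equals the average structural hazard λ_α(ỹ) e^{x̃'β + γ ỹ₋} E[e^A]. -/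
/-!
FHR moment function for the average structural hazard (ASH) in the MPH model
(Bonhomme, Dano & Graham, Section 4.2): with `c = λ_α(ỹ) e^{x̃'β + γ ỹ₋}`,
`h = c e^a` and `φ = c (T−1)/p̄`, the pair `(φ, h)` satisfies the average-effect FHR
conditions, and consequently `E[φ] = λ_α(ỹ) e^{x̃'β + γ ỹ₋} E[e^A]` under every
feedback process and heterogeneity distribution making `φ` and `h` integrable.
-/

open MeasureTheory ProbabilityTheory Function Real Set
open scoped ENNReal

noncomputable section

section MPH

variable {k : ℕ}

/-- `p̄ = Σ_{t=1}^T ρ_θ(y_t, y_{t−1}, x_t)` along a trajectory. -/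
noncomputable def mphPbar (lam : ℝ → ℝ) (γ : ℝ) (β : Fin k → ℝ) (T : ℕ)
    (y : ℕ → ℝ) (x : ℕ → Fin k → ℝ) : ℝ :=
  ∑ t ∈ Finset.Icc 1 T, mphRho lam γ β (y t) (y (t - 1)) (x t)

namespace ASHAux

open MeasureTheory Set

variable {lam : ℝ → ℝ}

lemma intHaz_of_nonpos (lam : ℝ → ℝ) {y : ℝ} (hy : y ≤ 0) : intHaz lam y = 0 := by
  unfold intHaz
  rw [Set.Ioc_eq_empty (by exact fun h => absurd (h.trans_le hy) (lt_irrefl 0))]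
  simp

lemma intHaz_integrableOn (hint : ∀ y : ℝ, 0 < y → IntegrableOn lam (Ioc 0 y) volume)
    (y : ℝ) : IntegrableOn lam (Ioc 0 y) volume := by
  rcases lt_or_ge 0 y with h | h
  · exact hint y h
  · rw [Set.Ioc_eq_empty (by exact fun hc => absurd (hc.trans_le h) (lt_irrefl 0))]
    simp [IntegrableOn]

lemma integral_Ioc_pos (hpos : ∀ y ∈ Ioi (0:ℝ), 0 < lam y)
    (hint : ∀ y : ℝ, 0 < y → IntegrableOn lam (Ioc 0 y) volume)
    {u v : ℝ} (hu : 0 ≤ u) (huv : u < v) : 0 < ∫ t in Ioc u v, lam t := by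
  have hsub : Ioc u v ⊆ Ioc 0 v := Set.Ioc_subset_Ioc_left hu
  have hi : IntegrableOn lam (Ioc u v) volume :=
    (intHaz_integrableOn hint v).mono_set hsub
  have hnn : 0 ≤ᵐ[volume.restrict (Ioc u v)] lam := by
    filter_upwards [ae_restrict_mem measurableSet_Ioc] with t ht
    exact (hpos t (lt_of_le_of_lt hu ht.1)).le
  rw [setIntegral_pos_iff_support_of_nonneg_ae hnn hi]
  have hss : Ioc u v ⊆ Function.support lam ∩ Ioc u v := by
    intro t ht
    exact ⟨(hpos t (lt_of_le_of_lt hu ht.1)).ne', ht⟩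
  have hset : Function.support lam ∩ Ioc u v = Ioc u v :=
    le_antisymm Set.inter_subset_right hss
  rw [hset]
  simp [Real.volume_Ioc, huv]

lemma intHaz_split (hint : ∀ y : ℝ, 0 < y → IntegrableOn lam (Ioc 0 y) volume)
    {u v : ℝ} (hu : 0 ≤ u) (huv : u ≤ v) :
    intHaz lam v = intHaz lam u + ∫ t in Ioc u v, lam t := by
  unfold intHaz
  rw [← Set.Ioc_union_Ioc_eq_Ioc hu huv, setIntegral_union (Set.Ioc_disjoint_Ioc_of_le le_rfl)
    measurableSet_Ioc ((intHaz_integrableOn hint v).mono_set (Set.Ioc_subset_Ioc_right huv))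
    ((intHaz_integrableOn hint v).mono_set (Set.Ioc_subset_Ioc_left hu))]

lemma intHaz_nonneg (hpos : ∀ y ∈ Ioi (0:ℝ), 0 < lam y) (y : ℝ) :
    0 ≤ intHaz lam y := by
  rcases le_or_gt y 0 with h | h
  · rw [intHaz_of_nonpos lam h]
  · exact setIntegral_nonneg measurableSet_Ioc fun t ht => (hpos t ht.1).le

lemma intHaz_pos (hpos : ∀ y ∈ Ioi (0:ℝ), 0 < lam y)
    (hint : ∀ y : ℝ, 0 < y → IntegrableOn lam (Ioc 0 y) volume)
    {y : ℝ} (hy : 0 < y) : 0 < intHaz lam y :=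
  integral_Ioc_pos hpos hint le_rfl hy

lemma intHaz_mono (hpos : ∀ y ∈ Ioi (0:ℝ), 0 < lam y)
    (hint : ∀ y : ℝ, 0 < y → IntegrableOn lam (Ioc 0 y) volume) :
    Monotone (intHaz lam) := by
  intro u v huv
  rcases le_or_gt u 0 with h | h
  · rw [intHaz_of_nonpos lam h]
    exact intHaz_nonneg hpos v
  · rw [intHaz_split hint h.le huv]
    have : 0 ≤ ∫ t in Ioc u v, lam t :=
      setIntegral_nonneg measurableSet_Ioc fun t ht => (hpos t (h.trans ht.1)).le
    linarith

lemma intHaz_lt (hpos : ∀ y ∈ Ioi (0:ℝ), 0 < lam y)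
    (hint : ∀ y : ℝ, 0 < y → IntegrableOn lam (Ioc 0 y) volume)
    {u v : ℝ} (hu : 0 ≤ u) (huv : u < v) : intHaz lam u < intHaz lam v := by
  rw [intHaz_split hint hu huv.le]
  linarith [integral_Ioc_pos hpos hint hu huv]

lemma intHaz_measurable (hpos : ∀ y ∈ Ioi (0:ℝ), 0 < lam y)
    (hint : ∀ y : ℝ, 0 < y → IntegrableOn lam (Ioc 0 y) volume) :
    Measurable (intHaz lam) :=
  (intHaz_mono hpos hint).measurable

lemma intHaz_surj (hpos : ∀ y ∈ Ioi (0:ℝ), 0 < lam y)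
    (hint : ∀ y : ℝ, 0 < y → IntegrableOn lam (Ioc 0 y) volume)
    (htop : Filter.Tendsto (intHaz lam) Filter.atTop Filter.atTop)
    {t : ℝ} (ht : 0 ≤ t) : ∃ y, 0 ≤ y ∧ intHaz lam y = t := by
  obtain ⟨Y, hY1, hY2⟩ :=
    ((htop.eventually_ge_atTop t).and (Filter.eventually_ge_atTop (0:ℝ))).exists
  have hcont : ContinuousOn (intHaz lam) (Icc 0 Y) := by
    have h := intervalIntegral.continuousOn_primitive (f := lam) (a := 0) (b := Y)
      (μ := volume) (by rw [integrableOn_Icc_iff_integrableOn_Ioc]; exact intHaz_integrableOn hint Y)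
    exact h
  have hmem : t ∈ Icc (intHaz lam 0) (intHaz lam Y) :=
    ⟨by rw [intHaz_of_nonpos lam le_rfl]; exact ht, hY1⟩
  obtain ⟨y, hy, hyt⟩ := intermediate_value_Icc hY2 hcont hmem
  exact ⟨y, hy.1, hyt⟩

end ASHAux

namespace ASHAux

open MeasureTheory Set

variable {lam : ℝ → ℝ}

lemma lintegral_Ioc_lam (hpos : ∀ y ∈ Ioi (0:ℝ), 0 < lam y)
    (hint : ∀ y : ℝ, 0 < y → IntegrableOn lam (Ioc 0 y) volume)
    {u v : ℝ} (hu : 0 ≤ u) (huv : u ≤ v) :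
    ∫⁻ y in Ioc u v, ENNReal.ofReal (lam y) ∂volume
      = ENNReal.ofReal (intHaz lam v - intHaz lam u) := by
  have hi : IntegrableOn lam (Ioc u v) volume :=
    (intHaz_integrableOn hint v).mono_set (Set.Ioc_subset_Ioc_left hu)
  have hnn : 0 ≤ᵐ[volume.restrict (Ioc u v)] lam := by
    filter_upwards [ae_restrict_mem measurableSet_Ioc] with t ht
    exact (hpos t (lt_of_le_of_lt hu ht.1)).le
  rw [← ofReal_integral_eq_lintegral_ofReal hi hnn, intHaz_split hint hu huv]
  ring_nf

/-- Pushforward of `lam(y) dy` on `(0,∞)` under the integrated hazard is Lebesgue on `(0,∞)`. -/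
lemma map_intHaz (hpos : ∀ y ∈ Ioi (0:ℝ), 0 < lam y)
    (hint : ∀ y : ℝ, 0 < y → IntegrableOn lam (Ioc 0 y) volume)
    (htop : Filter.Tendsto (intHaz lam) Filter.atTop Filter.atTop) :
    Measure.map (intHaz lam)
      ((volume.restrict (Ioi (0:ℝ))).withDensity (fun y => ENNReal.ofReal (lam y)))
    = volume.restrict (Ioi (0:ℝ)) := by
  have hΛmeas : Measurable (intHaz lam) := intHaz_measurable hpos hint
  have hmono := intHaz_mono hpos hint
  have key : ∀ u v : ℝ, u < v →
      Measure.map (intHaz lam)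
        ((volume.restrict (Ioi (0:ℝ))).withDensity (fun y => ENNReal.ofReal (lam y))) (Ioc u v)
      = volume.restrict (Ioi (0:ℝ)) (Ioc u v) := by
    intro u v huv
    rw [Measure.map_apply hΛmeas measurableSet_Ioc,
      withDensity_apply _ (hΛmeas measurableSet_Ioc),
      Measure.restrict_restrict (hΛmeas measurableSet_Ioc),
      Measure.restrict_apply measurableSet_Ioc]
    have hIoc : Ioc u v ∩ Ioi (0:ℝ) = Ioc (max u 0) v := by
      ext z; simp only [Set.mem_inter_iff, Set.mem_Ioc, Set.mem_Ioi, max_lt_iff]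
      tauto
    rcases le_or_gt v 0 with hv | hv
    · have h1 : intHaz lam ⁻¹' Ioc u v ∩ Ioi 0 = (∅ : Set ℝ) := by
        ext y
        simp only [Set.mem_inter_iff, Set.mem_preimage, Set.mem_Ioc, Set.mem_Ioi,
          Set.mem_empty_iff_false, iff_false]
        rintro ⟨⟨_, h2⟩, h3⟩
        exact absurd (lt_of_le_of_lt (h2.trans hv) (intHaz_pos hpos hint h3)) (lt_irrefl _)
      have h2 : Ioc (max u 0) v = (∅ : Set ℝ) :=
        Set.Ioc_eq_empty (fun hc => absurd (lt_of_le_of_lt (hv.trans (le_max_right u 0)) hc)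
          (lt_irrefl _))
      rw [h1, hIoc, h2]
      simp
    · set u' := max u 0 with hu'def
      have hu'0 : 0 ≤ u' := le_max_right u 0
      have hu'v : u' < v := max_lt huv hv
      obtain ⟨ψu, hψu0, hψu⟩ := intHaz_surj hpos hint htop hu'0
      obtain ⟨ψv, hψv0, hψv⟩ := intHaz_surj hpos hint htop (hu'0.trans hu'v.le)
      have hψuv : ψu < ψv := by
        by_contra h
        push_neg at h
        exact absurd (hψv ▸ hψu ▸ hmono h) (not_le.mpr hu'v)
      have hA : intHaz lam ⁻¹' Ioc u v ∩ Ioi 0 = Ioc ψu ψv := by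
        ext y
        simp only [Set.mem_inter_iff, Set.mem_preimage, Set.mem_Ioc, Set.mem_Ioi]
        constructor
        · rintro ⟨⟨h1, h2⟩, h3⟩
          constructor
          · by_contra h
            push_neg at h
            exact absurd (hmono h)
              (by rw [hψu]; exact not_le.mpr (max_lt h1 (intHaz_pos hpos hint h3)))
          · by_contra h
            push_neg at h
            have := intHaz_lt hpos hint hψv0 h
            rw [hψv] at this
            exact absurd h2 (not_le.mpr this)
        · rintro ⟨h1, h2⟩
          have hy0 : 0 < y := lt_of_le_of_lt hψu0 h1
          have hΛ : u' < intHaz lam y := by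
            rw [← hψu]; exact intHaz_lt hpos hint hψu0 h1
          refine ⟨⟨lt_of_le_of_lt (le_max_left u 0) hΛ, ?_⟩, hy0⟩
          rw [← hψv]; exact hmono h2
      rw [hA, hIoc, lintegral_Ioc_lam hpos hint hψu0 hψuv.le, hψu, hψv,
        Real.volume_Ioc]
  refine Measure.ext_of_Ioc' _ _ (fun u v huv => ?_) (fun u v huv => ?_)
  · rw [key u v huv, Measure.restrict_apply measurableSet_Ioc]
    exact (lt_of_le_of_lt (measure_mono Set.inter_subset_left) measure_Ioc_lt_top).ne
  · exact key u v huv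

end ASHAux

namespace ASHAux

open MeasureTheory Set

variable {lam : ℝ → ℝ}

lemma map_rho (hpos : ∀ y ∈ Ioi (0:ℝ), 0 < lam y)
    (hint : ∀ y : ℝ, 0 < y → IntegrableOn lam (Ioc 0 y) volume)
    (htop : Filter.Tendsto (intHaz lam) Filter.atTop Filter.atTop) (g : ℝ) :
    Measure.map (fun y => intHaz lam y * Real.exp g)
      ((volume.restrict (Ioi (0:ℝ))).withDensity fun y => ENNReal.ofReal (lam y))
    = ENNReal.ofReal (Real.exp (-g)) • volume.restrict (Ioi (0:ℝ)) := by
  have hΛmeas : Measurable (intHaz lam) := intHaz_measurable hpos hint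
  have hmul : Measurable (fun u : ℝ => u * Real.exp g) := measurable_id.mul_const _
  have hcomp : (fun y => intHaz lam y * Real.exp g)
      = (fun u : ℝ => u * Real.exp g) ∘ intHaz lam := rfl
  rw [hcomp, ← Measure.map_map hmul hΛmeas, map_intHaz hpos hint htop]
  have hpre : (fun u : ℝ => u * Real.exp g) ⁻¹' (Ioi 0) = Ioi (0:ℝ) := by
    ext u
    simp only [Set.mem_preimage, Set.mem_Ioi]
    constructor
    · intro h
      by_contra hc
      push_neg at hc
      nlinarith [Real.exp_pos g]
    · intro h
      positivity
  calc Measure.map (fun u : ℝ => u * Real.exp g) (volume.restrict (Ioi 0))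
      = Measure.map (fun u : ℝ => u * Real.exp g)
          (volume.restrict ((fun u : ℝ => u * Real.exp g) ⁻¹' (Ioi 0))) := by rw [hpre]
    _ = (Measure.map (fun u : ℝ => u * Real.exp g) volume).restrict (Ioi 0) :=
        (Measure.restrict_map hmul measurableSet_Ioi).symm
    _ = (ENNReal.ofReal |(Real.exp g)⁻¹| • (volume : Measure ℝ)).restrict (Ioi 0) := by
        rw [Real.map_volume_mul_right (Real.exp_ne_zero g)]
    _ = ENNReal.ofReal (Real.exp (-g)) • volume.restrict (Ioi (0:ℝ)) := by
        rw [Measure.restrict_smul]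
        congr 1
        rw [abs_of_pos (by positivity), Real.exp_neg]

lemma sub_integral {k : ℕ} (hmeas : Measurable lam)
    (hpos : ∀ y ∈ Ioi (0:ℝ), 0 < lam y)
    (hint : ∀ y : ℝ, 0 < y → IntegrableOn lam (Ioc 0 y) volume)
    (htop : Filter.Tendsto (intHaz lam) Filter.atTop Filter.atTop)
    (γ : ℝ) (β : Fin k → ℝ) {G : ℝ → ℝ} (hG : Measurable G)
    (ylag : ℝ) (xv : Fin k → ℝ) (a : ℝ) :
    ∫ y in Ioi (0:ℝ), mphDensity lam γ β y ylag xv a * G (mphRho lam γ β y ylag xv)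
      = ∫ ρ in Ioi (0:ℝ), (Real.exp a * Real.exp (-(Real.exp a * ρ))) * G ρ := by
  have hΛmeas : Measurable (intHaz lam) := intHaz_measurable hpos hint
  set g : ℝ := γ * ylag + ∑ i, xv i * β i with hg
  set H : ℝ → ℝ := fun ρ => Real.exp (g + a) * Real.exp (-(ρ * Real.exp a)) * G ρ with hH
  have hHmeas : Measurable H :=
    (measurable_const.mul ((measurable_id.mul_const (Real.exp a)).neg.exp)).mul hG
  have hρmeas : Measurable (fun y => intHaz lam y * Real.exp g) :=
    hΛmeas.mul_const _
  have step1 : ∫ y in Ioi (0:ℝ),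
      mphDensity lam γ β y ylag xv a * G (mphRho lam γ β y ylag xv)
      = ∫ y, H (intHaz lam y * Real.exp g)
          ∂((volume.restrict (Ioi (0:ℝ))).withDensity fun y => ENNReal.ofReal (lam y)) := by
    have hd : Measurable fun y => (lam y).toNNReal := measurable_real_toNNReal.comp hmeas
    rw [show (fun y => ENNReal.ofReal (lam y))
        = fun y => ((fun y => (lam y).toNNReal) y : ℝ≥0∞) from rfl,
      integral_withDensity_eq_integral_smul hd]
    refine (setIntegral_congr_fun measurableSet_Ioi fun y hy => ?_).symm
    have hl : 0 ≤ lam y := (hpos y hy).le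
    show ((lam y).toNNReal : ℝ) • (H (intHaz lam y * Real.exp g))
        = mphDensity lam γ β y ylag xv a * G (mphRho lam γ β y ylag xv)
    rw [smul_eq_mul, Real.coe_toNNReal _ hl]
    simp only [hH, mphDensity, mphRho, ← hg]
    rw [Real.exp_add (g) a]
    ring_nf
  have step2 : ∫ y, H (intHaz lam y * Real.exp g)
        ∂((volume.restrict (Ioi (0:ℝ))).withDensity fun y => ENNReal.ofReal (lam y))
      = ∫ ρ, H ρ ∂(Measure.map (fun y => intHaz lam y * Real.exp g)
          ((volume.restrict (Ioi (0:ℝ))).withDensity fun y => ENNReal.ofReal (lam y))) :=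
    (integral_map hρmeas.aemeasurable hHmeas.aestronglyMeasurable).symm
  rw [step1, step2, map_rho hpos hint htop g, integral_smul_measure,
    ENNReal.toReal_ofReal (Real.exp_nonneg _), ← integral_smul]
  refine setIntegral_congr_fun measurableSet_Ioi fun ρ _ => ?_
  show Real.exp (-g) • (Real.exp (g + a) * Real.exp (-(ρ * Real.exp a)) * G ρ)
      = Real.exp a * Real.exp (-(Real.exp a * ρ)) * G ρ
  rw [smul_eq_mul, ← mul_assoc, ← mul_assoc, ← Real.exp_add]
  have : -g + (g + a) = a := by ring
  rw [this, mul_comm ρ (Real.exp a)]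

end ASHAux

namespace ASHAux

open MeasureTheory Set

/-- Gamma(n, b) kernel (unnormalized by the target: density of the sum of `n`
independent Exp(b) variables). -/
noncomputable def gker (b : ℝ) (n : ℕ) (u : ℝ) : ℝ :=
  b ^ n * u ^ (n - 1) / (Nat.factorial (n - 1)) * Real.exp (-(b * u))

/-- `∫ gker n b u / (s + u) du` over `(0, ∞)`, in `ℝ≥0∞`. -/
noncomputable def gphi (b : ℝ) (n : ℕ) (s : ℝ) : ℝ≥0∞ :=
  ∫⁻ u in Ioi (0:ℝ), ENNReal.ofReal (gker b n u / (s + u))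

lemma gker_nonneg {b : ℝ} (hb : 0 ≤ b) {u : ℝ} (hu : 0 ≤ u) (n : ℕ) : 0 ≤ gker b n u := by
  unfold gker
  positivity

lemma measurable_gker (b : ℝ) (n : ℕ) : Measurable (gker b n) := by
  unfold gker
  exact ((measurable_const.mul (measurable_id.pow_const _)).div_const _).mul
    ((measurable_id.const_mul b).neg.exp)

lemma measurable_gphi (b : ℝ) (n : ℕ) : Measurable (fun s => gphi b n s) := by
  unfold gphi
  apply Measurable.lintegral_prod_right (f := fun s u => ENNReal.ofReal (gker b n u / (s + u)))
  exact (((measurable_gker b n).comp measurable_snd).div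
    (measurable_fst.add measurable_snd)).ennreal_ofReal

/-- the gamma kernel integrates to one -/
lemma lintegral_gker (b : ℝ) (hb : 0 < b) (n : ℕ) (hn : 1 ≤ n) :
    ∫⁻ u in Ioi (0:ℝ), ENNReal.ofReal (gker b n u) = 1 := by
  have h1 := ProbabilityTheory.lintegral_gammaPDF_eq_one
    (a := (n : ℝ)) (r := b) (by exact_mod_cast Nat.pos_of_ne_zero (by omega)) hb
  have hneg : ∫⁻ x in Iio (0:ℝ), ProbabilityTheory.gammaPDF (n : ℝ) b x = 0 := by
    rw [setLIntegral_congr_fun measurableSet_Iio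
      (fun x (hx : x < 0) =>
        ProbabilityTheory.gammaPDF_of_neg hx)]
    simp
  have hIci : ∫⁻ x in Ici (0:ℝ), ProbabilityTheory.gammaPDF (n : ℝ) b x
      = ∫⁻ x in Ioi (0:ℝ), ProbabilityTheory.gammaPDF (n : ℝ) b x := by
    rw [← Set.Ioi_union_left, lintegral_union (measurableSet_singleton 0)
      (by simp [Set.disjoint_singleton_right]),
      show ∫⁻ x in {(0:ℝ)}, ProbabilityTheory.gammaPDF (n : ℝ) b x = 0 by
        rw [lintegral_singleton]; simp]
    simp
  have hcong : ∫⁻ x in Ioi (0:ℝ), ProbabilityTheory.gammaPDF (n : ℝ) b x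
      = ∫⁻ u in Ioi (0:ℝ), ENNReal.ofReal (gker b n u) := by
    refine setLIntegral_congr_fun measurableSet_Ioi
      (fun u (hu : 0 < u) => ?_)
    rw [ProbabilityTheory.gammaPDF_of_nonneg hu.le]
    congr 1
    unfold gker
    have hcast : ((n : ℝ) - 1) = ((n - 1 : ℕ) : ℝ) := by
      have : (1:ℝ) ≤ (n:ℝ) := by exact_mod_cast hn
      push_cast [Nat.cast_sub hn]
      ring
    rw [hcast, Real.rpow_natCast, Real.rpow_natCast,
      show ((n:ℝ)) = ((n - 1 : ℕ) : ℝ) + 1 by push_cast [Nat.cast_sub hn]; ring,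
      Real.Gamma_nat_eq_factorial]
    push_cast [Nat.cast_sub hn]
    ring_nf
  have hadd := lintegral_add_compl (f := fun x => ProbabilityTheory.gammaPDF (n : ℝ) b x)
    (μ := volume) (measurableSet_Ici (a := (0:ℝ)))
  rw [compl_Ici, hneg, add_zero, h1] at hadd
  rw [← hcong, ← hIci]
  exact hadd

end ASHAux

namespace ASHAux

open MeasureTheory Set

lemma gker_one (b ρ : ℝ) : gker b 1 ρ = b * Real.exp (-(b * ρ)) := by
  unfold gker; norm_num

lemma integrable_of_lint {f : ℝ → ℝ} {s : Set ℝ}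
    (hm : AEStronglyMeasurable f (volume.restrict s))
    (hnn : 0 ≤ᵐ[volume.restrict s] f)
    (hfin : ∫⁻ x in s, ENNReal.ofReal (f x) ∂volume ≠ ⊤) : IntegrableOn f s volume :=
  ⟨hm, (hasFiniteIntegral_iff_ofReal hnn).mpr hfin.lt_top⟩

lemma lint_eq_top_of_not_integrable {f : ℝ → ℝ} {s : Set ℝ}
    (hm : AEStronglyMeasurable f (volume.restrict s))
    (hnn : 0 ≤ᵐ[volume.restrict s] f)
    (h : ¬ IntegrableOn f s volume) : ∫⁻ x in s, ENNReal.ofReal (f x) ∂volume = ⊤ := by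
  by_contra hc
  exact h (integrable_of_lint hm hnn hc)

lemma integrable_expK {b : ℝ} (hb : 0 < b) :
    IntegrableOn (fun ρ => b * Real.exp (-(b * ρ))) (Ioi (0:ℝ)) volume := by
  refine integrable_of_lint
    ((by fun_prop : Measurable fun ρ : ℝ => b * Real.exp (-(b * ρ)))).aestronglyMeasurable ?_ ?_
  · filter_upwards with ρ
    positivity
  · rw [show (fun ρ : ℝ => ENNReal.ofReal (b * Real.exp (-(b * ρ))))
        = fun ρ => ENNReal.ofReal (gker b 1 ρ) by funext ρ; rw [gker_one],
      lintegral_gker b hb 1 le_rfl]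
    simp

lemma integral_expK {b : ℝ} (hb : 0 < b) :
    ∫ ρ in Ioi (0:ℝ), b * Real.exp (-(b * ρ)) = 1 := by
  rw [integral_eq_lintegral_of_nonneg_ae (by filter_upwards with ρ; positivity)
    ((by fun_prop : Measurable fun ρ : ℝ => b * Real.exp (-(b * ρ)))).aestronglyMeasurable]
  rw [show (fun ρ : ℝ => ENNReal.ofReal (b * Real.exp (-(b * ρ))))
      = fun ρ => ENNReal.ofReal (gker b 1 ρ) by funext ρ; rw [gker_one],
    lintegral_gker b hb 1 le_rfl]
  simp

lemma gphi_zero {b : ℝ} (hb : 0 < b) {n : ℕ} (hn : 2 ≤ n) :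
    gphi b n 0 = ENNReal.ofReal (b / ((n : ℝ) - 1)) := by
  obtain ⟨m, rfl⟩ : ∃ m, n = m + 2 := ⟨n - 2, by omega⟩
  have hC : (0:ℝ) ≤ b / ((m : ℝ) + 1) := by positivity
  have hpt : ∀ u ∈ Ioi (0:ℝ), ENNReal.ofReal (gker b (m+2) u / (0 + u))
      = ENNReal.ofReal (b / ((m:ℝ) + 1)) * ENNReal.ofReal (gker b (m+1) u) := by
    intro u hu
    have hu0 : (0:ℝ) < u := hu
    rw [← ENNReal.ofReal_mul hC]
    congr 1
    unfold gker
    simp only [Nat.add_sub_cancel, Nat.factorial_succ]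
    have hfact : ((m.factorial : ℝ)) ≠ 0 := Nat.cast_ne_zero.mpr m.factorial_ne_zero
    have h1 : ((m:ℝ) + 1) ≠ 0 := by positivity
    push_cast
    rw [zero_add, pow_succ u m]
    field_simp
    rw [Nat.factorial_succ]
    push_cast
    ring
  unfold gphi
  rw [setLIntegral_congr_fun measurableSet_Ioi hpt,
    lintegral_const_mul' _ _ ENNReal.ofReal_ne_top, lintegral_gker b hb (m+1) (by omega),
    mul_one]
  congr 1
  push_cast
  ring

lemma lintegral_inv_Ioo_top : ∫⁻ u in Ioo (0:ℝ) 1, ENNReal.ofReal u⁻¹ = ⊤ := by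
  by_contra hc
  have hint : IntegrableOn (fun u : ℝ => u⁻¹) (Ioo 0 1) volume :=
    integrable_of_lint measurable_inv.aestronglyMeasurable
      (by filter_upwards [ae_restrict_mem measurableSet_Ioo] with u hu
          exact inv_nonneg.mpr hu.1.le) hc
  have hr : IntegrableOn (fun u : ℝ => u ^ (-1 : ℝ)) (Ioo 0 1) volume := by
    refine hint.congr_fun (fun u hu => ?_) measurableSet_Ioo
    rw [Real.rpow_neg_one]
  rw [intervalIntegral.integrableOn_Ioo_rpow_iff zero_lt_one] at hr
  linarith

lemma gphi_one_zero_top {b : ℝ} (hb : 0 < b) : gphi b 1 0 = ⊤ := by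
  have hle : ∫⁻ u in Ioo (0:ℝ) 1, ENNReal.ofReal (b * Real.exp (-b) * u⁻¹) ≤ gphi b 1 0 := by
    unfold gphi
    refine le_trans ?_ (lintegral_mono_set (fun x (hx : x ∈ Ioo (0:ℝ) 1) => hx.1))
    refine setLIntegral_mono' measurableSet_Ioo fun u hu => ?_
    apply ENNReal.ofReal_le_ofReal
    rw [gker_one, zero_add, div_eq_mul_inv, mul_comm (b * Real.exp (-b)) u⁻¹,
      mul_comm (b * Real.exp (-(b * u))) u⁻¹]
    refine mul_le_mul_of_nonneg_left ?_ (inv_nonneg.mpr hu.1.le)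
    refine mul_le_mul_of_nonneg_left ?_ hb.le
    exact Real.exp_le_exp.mpr (by nlinarith [hu.1, hu.2, hb])
  have heq : ∫⁻ u in Ioo (0:ℝ) 1, ENNReal.ofReal (b * Real.exp (-b) * u⁻¹)
      = ENNReal.ofReal (b * Real.exp (-b)) * ∫⁻ u in Ioo (0:ℝ) 1, ENNReal.ofReal u⁻¹ := by
    rw [← lintegral_const_mul' _ _ ENNReal.ofReal_ne_top]
    refine setLIntegral_congr_fun measurableSet_Ioo
      (fun u hu => ?_)
    rw [← ENNReal.ofReal_mul (by positivity)]
  rw [heq, lintegral_inv_Ioo_top, ENNReal.mul_top (by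
    simp only [ne_eq, ENNReal.ofReal_eq_zero, not_le]
    positivity)] at hle
  exact top_le_iff.mp hle

lemma gphi_one_lt_top {b s : ℝ} (hb : 0 < b) (hs : 0 < s) : gphi b 1 s < ⊤ := by
  have hle : gphi b 1 s ≤ ENNReal.ofReal s⁻¹ * 1 := by
    rw [← lintegral_gker b hb 1 le_rfl, ← lintegral_const_mul' _ _ ENNReal.ofReal_ne_top]
    unfold gphi
    refine setLIntegral_mono' measurableSet_Ioi fun u hu => ?_
    have hu0 : (0:ℝ) < u := hu
    rw [← ENNReal.ofReal_mul (inv_nonneg.mpr hs.le)]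
    apply ENNReal.ofReal_le_ofReal
    rw [gker_one, div_le_iff₀ (by positivity : (0:ℝ) < s + u)]
    have h1 : s⁻¹ * s = 1 := inv_mul_cancel₀ hs.ne'
    have h2 : 0 ≤ s⁻¹ * (b * Real.exp (-(b * u))) * u := by positivity
    have h3 : s⁻¹ * (b * Real.exp (-(b * u))) * (s + u)
        = s⁻¹ * s * (b * Real.exp (-(b * u))) + s⁻¹ * (b * Real.exp (-(b * u))) * u := by ring
    rw [h3, h1, one_mul]
    linarith [h2]
  exact lt_of_le_of_lt hle (by simp [ENNReal.ofReal_lt_top])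

lemma gphi_anti {b : ℝ} (hb : 0 ≤ b) (n : ℕ) {s : ℝ} (hs : 0 ≤ s) :
    gphi b n s ≤ gphi b n 0 := by
  unfold gphi
  refine setLIntegral_mono' measurableSet_Ioi fun u hu => ?_
  apply ENNReal.ofReal_le_ofReal
  rw [zero_add]
  have := gker_nonneg hb (le_of_lt hu) n
  gcongr
  · linarith

lemma gphi_lt_top {b : ℝ} (hb : 0 < b) {n : ℕ} {s : ℝ} (hs : 0 ≤ s)
    (h : 2 ≤ n ∨ (n = 1 ∧ 0 < s)) : gphi b n s < ⊤ := by
  rcases h with h | ⟨rfl, hs'⟩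
  · exact lt_of_le_of_lt (gphi_anti hb.le n hs)
      (by rw [gphi_zero hb h]; exact ENNReal.ofReal_lt_top)
  · exact gphi_one_lt_top hb hs'

end ASHAux

namespace ASHAux

open MeasureTheory Set

lemma lint_poly {w : ℝ} (hw : 0 < w) (m : ℕ) :
    ∫⁻ ρ in Ioo (0:ℝ) w, ENNReal.ofReal ((w - ρ) ^ m)
      = ENNReal.ofReal (w ^ (m+1) / (m+1)) := by
  have hcont : Continuous fun ρ : ℝ => (w - ρ) ^ m := by continuity
  have hint : IntegrableOn (fun ρ : ℝ => (w - ρ) ^ m) (Ioo 0 w) volume :=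
    (hcont.continuousOn.integrableOn_compact isCompact_Icc).mono_set Ioo_subset_Icc_self
  have hnn : 0 ≤ᵐ[volume.restrict (Ioo (0:ℝ) w)] fun ρ : ℝ => (w - ρ) ^ m := by
    filter_upwards [ae_restrict_mem measurableSet_Ioo] with ρ hρ
    have : (0:ℝ) ≤ w - ρ := by linarith [hρ.2]
    positivity
  rw [← ofReal_integral_eq_lintegral_ofReal hint hnn]
  congr 1
  rw [← integral_Ioc_eq_integral_Ioo, ← intervalIntegral.integral_of_le hw.le,
    intervalIntegral.integral_comp_sub_left (fun x : ℝ => x ^ m) w]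
  simp [integral_pow]

lemma gphi_step {b : ℝ} (hb : 0 < b) {s : ℝ} (hs : 0 ≤ s) {n : ℕ} (hn : 1 ≤ n) :
    ∫⁻ ρ in Ioi (0:ℝ), ENNReal.ofReal (b * Real.exp (-(b * ρ))) * gphi b n (s + ρ)
      = gphi b (n + 1) s := by
  obtain ⟨m, rfl⟩ : ∃ m, n = m + 1 := ⟨n - 1, by omega⟩
  have hfact : ((m.factorial : ℝ)) ≠ 0 := Nat.cast_ne_zero.mpr m.factorial_ne_zero
  set F : ℝ × ℝ → ℝ≥0∞ := fun q =>
    ENNReal.ofReal (b * Real.exp (-(b * q.1)))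
      * ENNReal.ofReal (gker b (m+1) (q.2 - q.1) / (s + q.2)) with hF
  set f : ℝ → ℝ → ℝ≥0∞ := fun ρ w => ({q : ℝ × ℝ | q.1 < q.2}).indicator F (ρ, w) with hf
  have hFmeas : Measurable F := by
    rw [hF]
    apply Measurable.mul (f := fun q : ℝ × ℝ => ENNReal.ofReal (b * Real.exp (-(b * q.1))))
      (g := fun q : ℝ × ℝ => ENNReal.ofReal (gker b (m+1) (q.2 - q.1) / (s + q.2)))
    · exact (measurable_const.mul ((measurable_fst.const_mul b).neg.exp)).ennreal_ofReal
    · exact (((measurable_gker b (m+1)).comp (measurable_snd.sub measurable_fst)).div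
        (measurable_const.add measurable_snd)).ennreal_ofReal
  have hSmeas : MeasurableSet {q : ℝ × ℝ | q.1 < q.2} :=
    measurableSet_lt measurable_fst measurable_snd
  -- Step A: rewrite the inner factor as an integral of f over Ioi 0
  have stepA : ∀ ρ ∈ Ioi (0:ℝ),
      ENNReal.ofReal (b * Real.exp (-(b * ρ))) * gphi b (m+1) (s + ρ)
        = ∫⁻ w in Ioi (0:ℝ), f ρ w := by
    intro ρ hρ
    have hemb : MeasurableEmbedding (fun u : ℝ => u + ρ) := by
      have := (MeasurableEquiv.addRight ρ).measurableEmbedding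
      simpa using this
    have hpre : (fun u : ℝ => u + ρ) ⁻¹' (Ioi ρ) = Ioi 0 := by
      ext u; simp [Set.mem_preimage]
    have hshift := (measurePreserving_add_right volume ρ).setLIntegral_comp_preimage_emb
      hemb (fun w => ENNReal.ofReal (gker b (m+1) (w - ρ) / (s + w))) (Ioi ρ)
    rw [hpre] at hshift
    have h1 : gphi b (m+1) (s + ρ)
        = ∫⁻ w in Ioi ρ, ENNReal.ofReal (gker b (m+1) (w - ρ) / (s + w)) := by
      rw [← hshift]
      unfold gphi
      refine setLIntegral_congr_fun measurableSet_Ioi (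
        fun u hu => ?_)
      rw [add_sub_cancel_right]
      ring_nf
    rw [h1, ← lintegral_const_mul' _ _ ENNReal.ofReal_ne_top]
    have h2 : ∀ w : ℝ, f ρ w = (Ioi ρ).indicator
        (fun w => ENNReal.ofReal (b * Real.exp (-(b * ρ)))
          * ENNReal.ofReal (gker b (m+1) (w - ρ) / (s + w))) w := by
      intro w
      by_cases h : ρ < w <;>
        simp [hf, hF, Set.indicator, h, Set.mem_Ioi, Set.mem_setOf_eq]
    rw [show (fun w => f ρ w) = _ from funext h2, lintegral_indicator measurableSet_Ioi,
      Measure.restrict_restrict measurableSet_Ioi,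
      Set.inter_eq_left.mpr (Set.Ioi_subset_Ioi (le_of_lt hρ))]
  -- Step B+C : rewrite and swap
  have hswap : ∫⁻ ρ in Ioi (0:ℝ), ∫⁻ w in Ioi (0:ℝ), f ρ w
      = ∫⁻ w in Ioi (0:ℝ), ∫⁻ ρ in Ioi (0:ℝ), f ρ w := by
    apply lintegral_lintegral_swap
    exact ((hFmeas.indicator hSmeas).aemeasurable)
  -- Step D : compute the inner integral in the swapped order
  have stepD : ∀ w ∈ Ioi (0:ℝ),
      ∫⁻ ρ in Ioi (0:ℝ), f ρ w = ENNReal.ofReal (gker b (m+2) w / (s + w)) := by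
    intro w hw
    have hw0 : (0:ℝ) < w := hw
    have h2 : ∀ ρ : ℝ, f ρ w = (Iio w).indicator
        (fun ρ => ENNReal.ofReal (b * Real.exp (-(b * ρ)))
          * ENNReal.ofReal (gker b (m+1) (w - ρ) / (s + w))) ρ := by
      intro ρ
      by_cases h : ρ < w <;>
        simp [hf, hF, Set.indicator, h, Set.mem_Iio, Set.mem_setOf_eq]
    rw [show (fun ρ => f ρ w) = _ from funext h2, lintegral_indicator measurableSet_Iio,
      Measure.restrict_restrict measurableSet_Iio, Set.Iio_inter_Ioi]
    set C : ℝ := b ^ (m+2) * Real.exp (-(b * w)) / ((m.factorial) * (s + w)) with hC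
    have hCnn : 0 ≤ C := by
      rw [hC]
      positivity
    have hptw : ∀ ρ ∈ Ioo (0:ℝ) w,
        ENNReal.ofReal (b * Real.exp (-(b * ρ)))
          * ENNReal.ofReal (gker b (m+1) (w - ρ) / (s + w))
        = ENNReal.ofReal C * ENNReal.ofReal ((w - ρ) ^ m) := by
      intro ρ hρ
      rw [← ENNReal.ofReal_mul (by positivity), ← ENNReal.ofReal_mul hCnn]
      congr 1
      have hexp : Real.exp (-(b * w)) = Real.exp (-(b * ρ)) * Real.exp (-(b * (w - ρ))) := by
        rw [← Real.exp_add]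
        congr 1
        ring
      have hsw : s + w ≠ 0 := by positivity
      rw [hC, hexp]
      unfold gker
      simp only [Nat.add_sub_cancel, Nat.factorial_succ]
      field_simp
      ring
    rw [setLIntegral_congr_fun measurableSet_Ioo hptw,
      lintegral_const_mul' _ _ ENNReal.ofReal_ne_top, lint_poly hw0 m,
      ← ENNReal.ofReal_mul hCnn]
    congr 1
    rw [hC]
    show _ = gker b (m+2) w / (s+w)
    unfold gker
    have hfac2 : ((m + 2 - 1).factorial : ℝ) = ((m:ℝ) + 1) * (m.factorial : ℝ) := by
      rw [show m + 2 - 1 = m + 1 from rfl, Nat.factorial_succ]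
      push_cast
      ring
    rw [hfac2]
    have hsw : s + w ≠ 0 := by positivity
    have hm1 : ((m:ℝ) + 1) ≠ 0 := by positivity
    push_cast
    field_simp
  calc ∫⁻ ρ in Ioi (0:ℝ), ENNReal.ofReal (b * Real.exp (-(b * ρ))) * gphi b (m+1) (s + ρ)
      = ∫⁻ ρ in Ioi (0:ℝ), ∫⁻ w in Ioi (0:ℝ), f ρ w :=
        setLIntegral_congr_fun measurableSet_Ioi stepA
    _ = ∫⁻ w in Ioi (0:ℝ), ∫⁻ ρ in Ioi (0:ℝ), f ρ w := hswap
    _ = ∫⁻ w in Ioi (0:ℝ), ENNReal.ofReal (gker b (m+2) w / (s + w)) :=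
        setLIntegral_congr_fun measurableSet_Ioi stepD
    _ = gphi b (m + 1 + 1) s := rfl

end ASHAux

namespace ASHAux

open MeasureTheory Set

/-- Value of the partial FHR integral as a function of the accumulated `p̄`. -/
noncomputable def Dfun (c b mm κ : ℝ) : ℕ → ℝ → ℝ
  | 0, s => c * mm / s - κ * (c * b)
  | n + 1, s => if n = 0 ∧ s = 0 then 0
      else c * (mm * (gphi b (n+1) s).toReal) - κ * (c * b)

lemma measurable_Dfun (c b mm κ : ℝ) (n : ℕ) : Measurable (Dfun c b mm κ n) := by
  cases n with
  | zero =>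
      show Measurable fun s => c * mm / s - κ * (c * b)
      exact (measurable_const.div measurable_id).sub measurable_const
  | succ n =>
      have hmg : Measurable fun s => c * (mm * (gphi b (n+1) s).toReal) - κ * (c * b) :=
        (measurable_const.mul (measurable_const.mul
          ((measurable_gphi b (n+1)).ennreal_toReal))).sub measurable_const
      by_cases hn : n = 0
      · subst hn
        show Measurable fun s => if 0 = 0 ∧ s = 0 then (0:ℝ)
            else c * (mm * (gphi b 1 s).toReal) - κ * (c * b)
        simp only [true_and]
        exact Measurable.ite (by exact MeasurableSet.singleton 0 |>.congr (by ext x; simp))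
          measurable_const hmg
      · show Measurable fun s => if n = 0 ∧ s = 0 then (0:ℝ)
            else c * (mm * (gphi b (n+1) s).toReal) - κ * (c * b)
        simp only [hn, false_and, if_false]
        exact hmg

lemma Dfun_nonneg_case {c b mm κ : ℝ} {n : ℕ} {s : ℝ} (h : ¬(n = 0 ∧ s = 0)) :
    Dfun c b mm κ (n+1) s = c * (mm * (gphi b (n+1) s).toReal) - κ * (c * b) := by
  show (if n = 0 ∧ s = 0 then (0:ℝ) else _) = _
  rw [if_neg h]

lemma Dfun_step {c b mm κ : ℝ} (hb : 0 < b) (hc : 0 < c) (hm : 0 < mm) (hκ : 0 ≤ κ)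
    {s : ℝ} (hs : 0 ≤ s) (n : ℕ) :
    ∫ ρ in Ioi (0:ℝ), (b * Real.exp (-(b * ρ))) * Dfun c b mm κ n (s + ρ)
      = Dfun c b mm κ (n+1) s := by
  have hcm : (0:ℝ) ≤ c * mm := by positivity
  have hexpKmeas : Measurable fun ρ : ℝ => b * Real.exp (-(b * ρ)) := by fun_prop
  have hint2 : IntegrableOn (fun ρ : ℝ => b * Real.exp (-(b * ρ)) * (κ * (c * b)))
      (Ioi 0) volume := (integrable_expK hb).mul_const _
  have hI2 : ∫ ρ in Ioi (0:ℝ), b * Real.exp (-(b * ρ)) * (κ * (c * b)) = κ * (c * b) := by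
    rw [integral_mul_const, integral_expK hb, one_mul]
  cases n with
  | zero =>
    simp only [Dfun]
    rcases hs.eq_or_lt with rfl | hs0
    · -- junk case: the integrand is not integrable, the integral is zero
      rw [if_pos (by simp)]
      apply integral_undef
      intro hcontra
      have h1 : Integrable (fun ρ : ℝ => b * Real.exp (-(b * ρ)) * (c * mm / (0 + ρ)))
          (volume.restrict (Ioi 0)) := by
        have hadd := hcontra.add hint2
        refine hadd.congr (Filter.Eventually.of_forall fun ρ => ?_)
        simp only [Pi.add_apply]
        ring
      have hnn : 0 ≤ᵐ[volume.restrict (Ioi (0:ℝ))]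
          fun ρ : ℝ => b * Real.exp (-(b * ρ)) * (c * mm / (0 + ρ)) := by
        filter_upwards [ae_restrict_mem measurableSet_Ioi] with ρ hρ
        have hρ0 : (0:ℝ) < ρ := hρ
        positivity
      have h2 := (hasFiniteIntegral_iff_ofReal hnn).mp h1.hasFiniteIntegral
      have hcongr : ∫⁻ ρ in Ioi (0:ℝ),
            ENNReal.ofReal (b * Real.exp (-(b * ρ)) * (c * mm / (0 + ρ)))
          = ∫⁻ ρ in Ioi (0:ℝ),
            ENNReal.ofReal (c * mm) * ENNReal.ofReal (gker b 1 ρ / (0 + ρ)) :=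
        setLIntegral_congr_fun measurableSet_Ioi (fun ρ hρ => by
          rw [← ENNReal.ofReal_mul hcm, gker_one]; congr 1; ring)
      have h3 : ∫⁻ ρ in Ioi (0:ℝ),
          ENNReal.ofReal (b * Real.exp (-(b * ρ)) * (c * mm / (0 + ρ))) = ⊤ := by
        have hcm0 : ENNReal.ofReal (c * mm) ≠ 0 := by
          simp only [ne_eq, ENNReal.ofReal_eq_zero, not_le]
          positivity
        rw [hcongr, lintegral_const_mul' _ _ ENNReal.ofReal_ne_top,
          show (∫⁻ u in Ioi (0:ℝ), ENNReal.ofReal (gker b 1 u / (0 + u))) = gphi b 1 0 from rfl,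
          gphi_one_zero_top hb, ENNReal.mul_top hcm0]
      rw [h3] at h2
      exact absurd h2 (lt_irrefl ⊤)
    · -- s > 0 : genuine computation
      rw [if_neg (by simp [hs0.ne'])]
      have hs0' : s ≠ 0 := hs0.ne'
      set f1 : ℝ → ℝ := fun ρ => b * Real.exp (-(b * ρ)) * (c * mm / (s + ρ)) with hf1
      have hf1meas : Measurable f1 := by
        apply hexpKmeas.mul
        exact measurable_const.div (measurable_const.add measurable_id)
      have hf1nn : 0 ≤ᵐ[volume.restrict (Ioi (0:ℝ))] f1 := by
        filter_upwards [ae_restrict_mem measurableSet_Ioi] with ρ hρ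
        have hρ0 : (0:ℝ) < ρ := hρ
        have : (0:ℝ) < s + ρ := by linarith
        rw [hf1]
        positivity
      have hlint1 : ∫⁻ ρ in Ioi (0:ℝ), ENNReal.ofReal (f1 ρ)
          = ENNReal.ofReal (c * mm) * gphi b 1 s := by
        have hcongr : ∫⁻ ρ in Ioi (0:ℝ), ENNReal.ofReal (f1 ρ)
            = ∫⁻ ρ in Ioi (0:ℝ),
              ENNReal.ofReal (c * mm) * ENNReal.ofReal (gker b 1 ρ / (s + ρ)) :=
          setLIntegral_congr_fun measurableSet_Ioi (fun ρ hρ => by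
            rw [← ENNReal.ofReal_mul hcm, hf1, gker_one]; congr 1; ring)
        rw [hcongr, lintegral_const_mul' _ _ ENNReal.ofReal_ne_top,
          show (∫⁻ u in Ioi (0:ℝ), ENNReal.ofReal (gker b 1 u / (s + u))) = gphi b 1 s from rfl]
      have hint1 : IntegrableOn f1 (Ioi 0) volume := by
        refine integrable_of_lint hf1meas.aestronglyMeasurable hf1nn ?_
        rw [hlint1]
        exact (ENNReal.mul_lt_top ENNReal.ofReal_lt_top (gphi_one_lt_top hb hs0)).ne
      have hI1 : ∫ ρ in Ioi (0:ℝ), f1 ρ = c * mm * (gphi b 1 s).toReal := by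
        rw [integral_eq_lintegral_of_nonneg_ae hf1nn hf1meas.aestronglyMeasurable, hlint1,
          ENNReal.toReal_mul, ENNReal.toReal_ofReal hcm]
      calc ∫ ρ in Ioi (0:ℝ), b * Real.exp (-(b * ρ)) * (c * mm / (s + ρ) - κ * (c * b))
          = ∫ ρ in Ioi (0:ℝ), (f1 ρ - b * Real.exp (-(b * ρ)) * (κ * (c * b))) := by
            refine setIntegral_congr_fun measurableSet_Ioi fun ρ hρ => ?_
            rw [hf1]
            ring
        _ = (∫ ρ in Ioi (0:ℝ), f1 ρ) - ∫ ρ in Ioi (0:ℝ), b * Real.exp (-(b * ρ)) * (κ * (c * b)) :=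
            integral_sub hint1 hint2
        _ = c * (mm * (gphi b 1 s).toReal) - κ * (c * b) := by
            rw [hI1, hI2]
            ring
  | succ n =>
    have hfin : ∀ ρ : ℝ, 0 < ρ → gphi b (n+1) (s + ρ) ≠ ⊤ := by
      intro ρ hρ
      refine (gphi_lt_top hb (by linarith) ?_).ne
      rcases n with _ | n
      · exact Or.inr ⟨rfl, by linarith⟩
      · exact Or.inl (by omega)
    set f1 : ℝ → ℝ := fun ρ => b * Real.exp (-(b * ρ))
        * (c * (mm * (gphi b (n+1) (s + ρ)).toReal)) with hf1
    have hf1meas : Measurable f1 := by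
      apply hexpKmeas.mul
      exact measurable_const.mul (measurable_const.mul
        (((measurable_gphi b (n+1)).comp (measurable_id.const_add s)).ennreal_toReal))
    have hf1nn : 0 ≤ᵐ[volume.restrict (Ioi (0:ℝ))] f1 := by
      filter_upwards with ρ
      rw [hf1]
      have := ENNReal.toReal_nonneg (a := gphi b (n+1) (s + ρ))
      positivity
    have hlint1 : ∫⁻ ρ in Ioi (0:ℝ), ENNReal.ofReal (f1 ρ)
        = ENNReal.ofReal (c * mm) * gphi b (n+2) s := by
      have hcongr : ∫⁻ ρ in Ioi (0:ℝ), ENNReal.ofReal (f1 ρ)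
          = ∫⁻ ρ in Ioi (0:ℝ), ENNReal.ofReal (c * mm)
              * (ENNReal.ofReal (b * Real.exp (-(b * ρ))) * gphi b (n+1) (s + ρ)) :=
        setLIntegral_congr_fun measurableSet_Ioi (
          fun ρ (hρ : ρ ∈ Ioi (0:ℝ)) => by
            have hρ0 : (0:ℝ) < ρ := hρ
            simp only [hf1]
            rw [show b * Real.exp (-(b * ρ)) * (c * (mm * (gphi b (n+1) (s + ρ)).toReal))
                = (c * mm) * ((b * Real.exp (-(b * ρ))) * (gphi b (n+1) (s + ρ)).toReal) by ring,
              ENNReal.ofReal_mul hcm,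
              ENNReal.ofReal_mul (by positivity : (0:ℝ) ≤ b * Real.exp (-(b * ρ))),
              ENNReal.ofReal_toReal (hfin ρ hρ0)])
      rw [hcongr, lintegral_const_mul' _ _ ENNReal.ofReal_ne_top,
        gphi_step hb hs (by omega : 1 ≤ n + 1)]
    have hint1 : IntegrableOn f1 (Ioi 0) volume := by
      refine integrable_of_lint hf1meas.aestronglyMeasurable hf1nn ?_
      rw [hlint1]
      exact (ENNReal.mul_lt_top ENNReal.ofReal_lt_top
        (gphi_lt_top hb hs (Or.inl (by omega)))).ne
    have hI1 : ∫ ρ in Ioi (0:ℝ), f1 ρ = c * mm * (gphi b (n+2) s).toReal := by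
      rw [integral_eq_lintegral_of_nonneg_ae hf1nn hf1meas.aestronglyMeasurable, hlint1,
        ENNReal.toReal_mul, ENNReal.toReal_ofReal hcm]
    calc ∫ ρ in Ioi (0:ℝ), b * Real.exp (-(b * ρ)) * Dfun c b mm κ (n+1) (s + ρ)
        = ∫ ρ in Ioi (0:ℝ), (f1 ρ - b * Real.exp (-(b * ρ)) * (κ * (c * b))) := by
          refine setIntegral_congr_fun measurableSet_Ioi fun ρ hρ => ?_
          have hρ0 : (0:ℝ) < ρ := hρ
          rw [Dfun_nonneg_case (by intro h; exact absurd h.2 (by positivity)), hf1]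
          ring
      _ = (∫ ρ in Ioi (0:ℝ), f1 ρ) - ∫ ρ in Ioi (0:ℝ), b * Real.exp (-(b * ρ)) * (κ * (c * b)) :=
          integral_sub hint1 hint2
      _ = Dfun c b mm κ (n+2) s := by
          rw [hI1, hI2, Dfun_nonneg_case (by simp)]
          ring

end ASHAux

namespace ASHAux

open MeasureTheory Set

variable {lam : ℝ → ℝ} {k : ℕ}

lemma mphRho_nonneg (hpos : ∀ y ∈ Ioi (0:ℝ), 0 < lam y) (γ : ℝ) (β : Fin k → ℝ)
    (y ylag : ℝ) (x : Fin k → ℝ) : 0 ≤ mphRho lam γ β y ylag x :=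
  mul_nonneg (intHaz_nonneg hpos y) (Real.exp_pos _).le

lemma mphPbar_nonneg (hpos : ∀ y ∈ Ioi (0:ℝ), 0 < lam y) (γ : ℝ) (β : Fin k → ℝ)
    (T : ℕ) (y : ℕ → ℝ) (x : ℕ → Fin k → ℝ) : 0 ≤ mphPbar lam γ β T y x :=
  Finset.sum_nonneg fun i _ => mphRho_nonneg hpos γ β _ _ _

lemma pbar_step (γ : ℝ) (β : Fin k → ℝ) {t : ℕ} (ht : 1 ≤ t) (y : ℕ → ℝ)
    (x : ℕ → Fin k → ℝ) (yt : ℝ) :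
    mphPbar lam γ β t (Function.update y t yt) x
      = mphPbar lam γ β (t-1) y x + mphRho lam γ β yt (y (t-1)) (x t) := by
  obtain ⟨t', rfl⟩ : ∃ t', t = t' + 1 := ⟨t-1, by omega⟩
  unfold mphPbar
  rw [Finset.sum_Icc_succ_top (by omega : 1 ≤ t' + 1)]
  simp only [Nat.add_sub_cancel]
  congr 1
  · apply Finset.sum_congr rfl
    intro i hi
    rw [Finset.mem_Icc] at hi
    rw [Function.update_of_ne (by omega : i ≠ t' + 1),
      Function.update_of_ne (by omega : i - 1 ≠ t' + 1)]
  · rw [Function.update_self]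
    congr 1
    rw [Function.update_of_ne (by omega : t' ≠ t' + 1)]

lemma pbar_update_x (γ : ℝ) (β : Fin k → ℝ) (T' : ℕ) (y : ℕ → ℝ) (x : ℕ → Fin k → ℝ)
    {j : ℕ} (hj : T' < j) (xv : Fin k → ℝ) :
    mphPbar lam γ β T' y (Function.update x j xv) = mphPbar lam γ β T' y x :=
  Finset.sum_congr rfl fun i hi => by
    rw [Finset.mem_Icc] at hi
    rw [Function.update_of_ne (by omega : i ≠ j)]

lemma pbar_congr_x (γ : ℝ) (β : Fin k → ℝ) (T' : ℕ) (y : ℕ → ℝ) {x x' : ℕ → Fin k → ℝ}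
    (h : ∀ i, i ≤ T' → x i = x' i) :
    mphPbar lam γ β T' y x = mphPbar lam γ β T' y x' :=
  Finset.sum_congr rfl fun i hi => by
    rw [Finset.mem_Icc] at hi
    rw [h i hi.2]

lemma mphPbar_zero (γ : ℝ) (β : Fin k → ℝ) (y : ℕ → ℝ) (x : ℕ → Fin k → ℝ) :
    mphPbar lam γ β 0 y x = 0 := by
  unfold mphPbar
  simp

/-- Final evaluation of `Dfun` at accumulated hazard `0` for the full horizon. -/
lemma Dfun_final {c b mT κ : ℝ} (hb : 0 < b) (hκ : κ = 0 ∨ κ = 1) {T : ℕ} (hT : 2 ≤ T)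
    (hmT : mT = (T:ℝ) - 1) :
    Dfun c b mT κ T 0 = c * b - κ * (c * b) := by
  obtain ⟨T', rfl⟩ : ∃ T', T = T' + 2 := ⟨T - 2, by omega⟩
  have hm : mT = (T':ℝ) + 1 := by rw [hmT]; push_cast; ring
  have hcast : ((T' + 1 + 1 : ℕ) : ℝ) - 1 = (T':ℝ) + 1 := by push_cast; ring
  rw [show T' + 2 = (T' + 1) + 1 from rfl, Dfun_nonneg_case (by simp),
    gphi_zero hb (by omega : 2 ≤ T' + 1 + 1), hcast,
    ENNReal.toReal_ofReal (by positivity), hm]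
  have hne : ((T':ℝ) + 1) ≠ 0 := by positivity
  field_simp

lemma iterInt_eq (hmeas : Measurable lam)
    (hpos : ∀ y ∈ Ioi (0:ℝ), 0 < lam y)
    (hint : ∀ y : ℝ, 0 < y → IntegrableOn lam (Ioc 0 y) volume)
    (htop : Filter.Tendsto (intHaz lam) Filter.atTop Filter.atTop)
    (γ : ℝ) (β : Fin k → ℝ) (T : ℕ) (hT : 2 ≤ T) (c : ℝ) (hc : 0 < c) (a : ℝ) :
    ∀ n t, t + n = T + 1 → 1 ≤ t → ∀ (y : ℕ → ℝ) (x : ℕ → Fin k → ℝ),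
    iterInt (volume.restrict (Ioi (0:ℝ)))
      (fun _ y' ylag x' a' => mphDensity lam γ β y' ylag x' a')
      (fun y' x' => c * ((T:ℝ) - 1) / mphPbar lam γ β T y' x' - c * Real.exp a)
      a x n t y
    = Dfun c (Real.exp a) ((T:ℝ) - 1) 1 n (mphPbar lam γ β (t-1) y x) := by
  have hm : (0:ℝ) < (T:ℝ) - 1 := by
    have h2 : (2:ℝ) ≤ (T:ℝ) := by exact_mod_cast hT
    linarith
  intro n
  induction n with
  | zero =>
    intro t htn ht y x
    have ht1 : t - 1 = T := by omega
    simp only [iterInt, Dfun, ht1]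
    ring
  | succ n ih =>
    intro t htn ht y x
    have hrw : ∀ yt : ℝ,
        iterInt (volume.restrict (Ioi (0:ℝ)))
          (fun _ y' ylag x' a' => mphDensity lam γ β y' ylag x' a')
          (fun y' x' => c * ((T:ℝ) - 1) / mphPbar lam γ β T y' x' - c * Real.exp a)
          a x n (t+1) (Function.update y t yt)
        = Dfun c (Real.exp a) ((T:ℝ) - 1) 1 n
            (mphPbar lam γ β (t-1) y x + mphRho lam γ β yt (y (t-1)) (x t)) := by
      intro yt
      rw [ih (t+1) (by omega) (by omega) (Function.update y t yt) x]
      simp only [Nat.add_sub_cancel]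
      rw [pbar_step γ β ht y x yt]
    have hG : Measurable (fun ρ => Dfun c (Real.exp a) ((T:ℝ) - 1) 1 n
        (mphPbar lam γ β (t-1) y x + ρ)) :=
      (measurable_Dfun c (Real.exp a) ((T:ℝ) - 1) 1 n).comp (measurable_id.const_add _)
    simp only [iterInt]
    trans (∫ yt in Ioi (0:ℝ), mphDensity lam γ β yt (y (t-1)) (x t) a
        * Dfun c (Real.exp a) ((T:ℝ) - 1) 1 n
            (mphPbar lam γ β (t-1) y x + mphRho lam γ β yt (y (t-1)) (x t)))
    · exact integral_congr_ae (Filter.Eventually.of_forall fun yt => by simp only [hrw])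
    trans (∫ ρ in Ioi (0:ℝ), (Real.exp a * Real.exp (-(Real.exp a * ρ)))
        * Dfun c (Real.exp a) ((T:ℝ) - 1) 1 n (mphPbar lam γ β (t-1) y x + ρ))
    · exact sub_integral hmeas hpos hint htop γ β hG (y (t-1)) (x t) a
    · exact Dfun_step (Real.exp_pos a) hc hm zero_le_one
        (mphPbar_nonneg hpos γ β (t-1) y x) n

lemma pathInt_eq (hmeas : Measurable lam)
    (hpos : ∀ y ∈ Ioi (0:ℝ), 0 < lam y)
    (hint : ∀ y : ℝ, 0 < y → IntegrableOn lam (Ioc 0 y) volume)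
    (htop : Filter.Tendsto (intHaz lam) Filter.atTop Filter.atTop)
    (γ : ℝ) (β : Fin k → ℝ) (T : ℕ) (hT : 2 ≤ T) (c : ℝ) (hc : 0 < c) (a : ℝ)
    (g : ℕ → ProbabilityTheory.Kernel ((ℕ → ℝ) × (ℕ → Fin k → ℝ) × ℝ) (Fin k → ℝ))
    (hg : ∀ t, ProbabilityTheory.IsMarkovKernel (g t)) :
    ∀ n, 1 ≤ n → ∀ t, t + n = T + 1 → 1 ≤ t → ∀ (y : ℕ → ℝ) (x : ℕ → Fin k → ℝ),
    pathInt (volume.restrict (Ioi (0:ℝ)))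
      (fun _ y' ylag x' a' => mphDensity lam γ β y' ylag x' a') g
      (fun y' x' => c * ((T:ℝ) - 1) / mphPbar lam γ β T y' x')
      a n t y x
    = Dfun c (Real.exp a) ((T:ℝ) - 1) 0 n (mphPbar lam γ β (t-1) y x) := by
  have hm : (0:ℝ) < (T:ℝ) - 1 := by
    have h2 : (2:ℝ) ≤ (T:ℝ) := by exact_mod_cast hT
    linarith
  intro n
  induction n with
  | zero => omega
  | succ n ih =>
    intro _ t htn ht y x
    have hG : Measurable (fun ρ => Dfun c (Real.exp a) ((T:ℝ) - 1) 0 n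
        (mphPbar lam γ β (t-1) y x + ρ)) :=
      (measurable_Dfun c (Real.exp a) ((T:ℝ) - 1) 0 n).comp (measurable_id.const_add _)
    cases n with
    | zero =>
      -- pathInt with one period left
      simp only [pathInt]
      trans (∫ yt in Ioi (0:ℝ), mphDensity lam γ β yt (y (t-1)) (x t) a
          * Dfun c (Real.exp a) ((T:ℝ) - 1) 0 0
              (mphPbar lam γ β (t-1) y x + mphRho lam γ β yt (y (t-1)) (x t)))
      · refine integral_congr_ae (Filter.Eventually.of_forall fun yt => ?_)
        have htT : T = t := by omega
        subst htT
        simp only [Dfun]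
        rw [pbar_step (lam := lam) γ β ht y x yt]
        ring
      trans (∫ ρ in Ioi (0:ℝ), (Real.exp a * Real.exp (-(Real.exp a * ρ)))
          * Dfun c (Real.exp a) ((T:ℝ) - 1) 0 0 (mphPbar lam γ β (t-1) y x + ρ))
      · exact sub_integral hmeas hpos hint htop γ β hG (y (t-1)) (x t) a
      · exact Dfun_step (Real.exp_pos a) hc hm le_rfl
          (mphPbar_nonneg hpos γ β (t-1) y x) 0
    | succ n' =>
      simp only [pathInt]
      have hrw : ∀ yt : ℝ,
          (∫ xt, pathInt (volume.restrict (Ioi (0:ℝ)))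
            (fun _ y' ylag x' a' => mphDensity lam γ β y' ylag x' a') g
            (fun y' x' => c * ((T:ℝ) - 1) / mphPbar lam γ β T y' x')
            a (n' + 1) (t + 1) (Function.update y t yt) (Function.update x (t+1) xt)
            ∂((g (t+1)) (Function.update y t yt, x, a)))
          = Dfun c (Real.exp a) ((T:ℝ) - 1) 0 (n'+1)
              (mphPbar lam γ β (t-1) y x + mphRho lam γ β yt (y (t-1)) (x t)) := by
        intro yt
        have hconst : ∀ xt, pathInt (volume.restrict (Ioi (0:ℝ)))
            (fun _ y' ylag x' a' => mphDensity lam γ β y' ylag x' a') g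
            (fun y' x' => c * ((T:ℝ) - 1) / mphPbar lam γ β T y' x')
            a (n' + 1) (t + 1) (Function.update y t yt) (Function.update x (t+1) xt)
            = Dfun c (Real.exp a) ((T:ℝ) - 1) 0 (n'+1)
                (mphPbar lam γ β (t-1) y x + mphRho lam γ β yt (y (t-1)) (x t)) := by
          intro xt
          rw [ih (by omega) (t+1) (by omega) (by omega) (Function.update y t yt)
            (Function.update x (t+1) xt)]
          simp only [Nat.add_sub_cancel]
          rw [pbar_update_x γ β t (Function.update y t yt) x (by omega) xt,
            pbar_step γ β ht y x yt]
        rw [show (fun xt => pathInt (volume.restrict (Ioi (0:ℝ)))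
            (fun _ y' ylag x' a' => mphDensity lam γ β y' ylag x' a') g
            (fun y' x' => c * ((T:ℝ) - 1) / mphPbar lam γ β T y' x')
            a (n' + 1) (t + 1) (Function.update y t yt) (Function.update x (t+1) xt))
            = fun _ => Dfun c (Real.exp a) ((T:ℝ) - 1) 0 (n'+1)
                (mphPbar lam γ β (t-1) y x + mphRho lam γ β yt (y (t-1)) (x t))
          from funext hconst]
        have : ProbabilityTheory.IsMarkovKernel (g (t+1)) := hg (t+1)
        simp [measure_univ]
      trans (∫ yt in Ioi (0:ℝ), mphDensity lam γ β yt (y (t-1)) (x t) a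
          * Dfun c (Real.exp a) ((T:ℝ) - 1) 0 (n'+1)
              (mphPbar lam γ β (t-1) y x + mphRho lam γ β yt (y (t-1)) (x t)))
      · exact integral_congr_ae (Filter.Eventually.of_forall fun yt => by simp only [hrw])
      trans (∫ ρ in Ioi (0:ℝ), (Real.exp a * Real.exp (-(Real.exp a * ρ)))
          * Dfun c (Real.exp a) ((T:ℝ) - 1) 0 (n'+1) (mphPbar lam γ β (t-1) y x + ρ))
      · exact sub_integral hmeas hpos hint htop γ β
          ((measurable_Dfun c (Real.exp a) ((T:ℝ) - 1) 0 (n'+1)).comp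
            (measurable_id.const_add _)) (y (t-1)) (x t) a
      · exact Dfun_step (Real.exp_pos a) hc hm le_rfl
          (mphPbar_nonneg hpos γ β (t-1) y x) (n'+1)

end ASHAux

/-- **FHR moment function for the average structural hazard.** In the MPH model with
`T ≥ 2` periods, fix a target evaluation point `(ỹ, ỹ₋, x̃)` and let
`c = λ_α(ỹ) e^{x̃'β + γ ỹ₋}`, `h(y^T, x^T, a) = c e^a`, and
`φ(y^T, x^T) = c (T−1)/p̄`. Then (i) `∫ (φ − h) ∏_{t=1}^T f_θ dy^{1:T} = 0` for all
`(y_0, x^T, a)`; (ii) for each `s = 2,…,T` the partial integral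
`∫ (φ − h) ∏_{t=s}^T f_θ dy^{s:T}` does not depend on `(x_s,…,x_T)`; and consequently,
under every feedback process and heterogeneity distribution making `φ` and `h`
integrable, `E[φ(Y^T, X^T)] = λ_α(ỹ) e^{x̃'β + γ ỹ₋} E[e^A]`. -/
theorem ash_FHR_moment
    (lam : ℝ → ℝ) (hlam_meas : Measurable lam)
    (hlam_pos : ∀ y ∈ Set.Ioi (0:ℝ), 0 < lam y)
    (hlam_int : ∀ y : ℝ, 0 < y → IntegrableOn lam (Set.Ioc 0 y) volume)
    (hlam_top : Filter.Tendsto (intHaz lam) Filter.atTop Filter.atTop)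
    (γ : ℝ) (β : Fin k → ℝ) (T : ℕ) (hT : 2 ≤ T)
    -- the target evaluation point (ỹ, ỹ₋, x̃) ∈ (0,∞) × (0,∞) × ℝ^k
    (ytil ytillag : ℝ) (hytil : 0 < ytil) (hytillag : 0 < ytillag) (xtil : Fin k → ℝ) :
    -- condition (i)
    (∀ (y : ℕ → ℝ) (x : ℕ → Fin k → ℝ) (a : ℝ),
      iterInt (volume.restrict (Set.Ioi (0:ℝ)))
        (fun _ y' ylag x' a' => mphDensity lam γ β y' ylag x' a')
        (fun y' x' =>
          lam ytil * Real.exp ((∑ i, xtil i * β i) + γ * ytillag) * ((T : ℝ) - 1) /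
              mphPbar lam γ β T y' x' -
            lam ytil * Real.exp ((∑ i, xtil i * β i) + γ * ytillag) * Real.exp a)
        a x T 1 y = 0) ∧
    -- condition (ii)
    (∀ s, 2 ≤ s → s ≤ T → ∀ (y : ℕ → ℝ) (x x' : ℕ → Fin k → ℝ) (a : ℝ),
      (∀ i, i < s → x i = x' i) →
      iterInt (volume.restrict (Set.Ioi (0:ℝ)))
        (fun _ y' ylag x'' a' => mphDensity lam γ β y' ylag x'' a')
        (fun y' x'' =>
          lam ytil * Real.exp ((∑ i, xtil i * β i) + γ * ytillag) * ((T : ℝ) - 1) /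
              mphPbar lam γ β T y' x'' -
            lam ytil * Real.exp ((∑ i, xtil i * β i) + γ * ytillag) * Real.exp a)
        a x (T - s + 1) s y =
      iterInt (volume.restrict (Set.Ioi (0:ℝ)))
        (fun _ y' ylag x'' a' => mphDensity lam γ β y' ylag x'' a')
        (fun y' x'' =>
          lam ytil * Real.exp ((∑ i, xtil i * β i) + γ * ytillag) * ((T : ℝ) - 1) /
              mphPbar lam γ β T y' x'' -
            lam ytil * Real.exp ((∑ i, xtil i * β i) + γ * ytillag) * Real.exp a)
        a x' (T - s + 1) s y) ∧
    -- consequence: E[φ(Y^T, X^T)] equals the average structural hazard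
    (∀ (ν : Measure (ℝ × (Fin k → ℝ))), IsProbabilityMeasure ν →
      ∀ (piK : Kernel (ℝ × (Fin k → ℝ)) ℝ), IsMarkovKernel piK →
      ∀ (g : ℕ → Kernel ((ℕ → ℝ) × (ℕ → Fin k → ℝ) × ℝ) (Fin k → ℝ)),
        (∀ t, IsMarkovKernel (g t)) →
      ∀ (y₀ : ℕ → ℝ) (x₀ : ℕ → Fin k → ℝ),
      -- φ is absolutely integrable under the induced joint law
      (∫⁻ p, ∫⁻ a, pathLint (volume.restrict (Set.Ioi (0:ℝ)))
          (fun _ y' ylag x' a' => mphDensity lam γ β y' ylag x' a') g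
          (fun y' x' => ENNReal.ofReal
            |lam ytil * Real.exp ((∑ i, xtil i * β i) + γ * ytillag) * ((T : ℝ) - 1) /
              mphPbar lam γ β T y' x'|) a T 1
          (Function.update y₀ 0 p.1) (Function.update x₀ 1 p.2) ∂(piK p) ∂ν) ≠ ⊤ →
      -- h = c e^A is absolutely integrable under the induced joint law
      (∫⁻ p, ∫⁻ a, ENNReal.ofReal
          |lam ytil * Real.exp ((∑ i, xtil i * β i) + γ * ytillag) * Real.exp a|
          ∂(piK p) ∂ν) ≠ ⊤ →
      (∫ p, ∫ a, pathInt (volume.restrict (Set.Ioi (0:ℝ)))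
          (fun _ y' ylag x' a' => mphDensity lam γ β y' ylag x' a') g
          (fun y' x' =>
            lam ytil * Real.exp ((∑ i, xtil i * β i) + γ * ytillag) * ((T : ℝ) - 1) /
              mphPbar lam γ β T y' x') a T 1
          (Function.update y₀ 0 p.1) (Function.update x₀ 1 p.2) ∂(piK p) ∂ν) =
        lam ytil * Real.exp ((∑ i, xtil i * β i) + γ * ytillag) *
          ∫ p, ∫ a, Real.exp a ∂(piK p) ∂ν) := by
  classical
  set c : ℝ := lam ytil * Real.exp ((∑ i, xtil i * β i) + γ * ytillag) with hcdef
  have hc : 0 < c := mul_pos (hlam_pos ytil hytil) (Real.exp_pos _)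
  refine ⟨?_, ?_, ?_⟩
  · -- condition (i)
    intro y x a
    rw [ASHAux.iterInt_eq hlam_meas hlam_pos hlam_int hlam_top γ β T hT c hc a T 1
      (by omega) le_rfl y x, ASHAux.mphPbar_zero,
      ASHAux.Dfun_final (Real.exp_pos a) (Or.inr rfl) hT rfl]
    ring
  · -- condition (ii)
    intro s hs2 hsT y x x' a hxx'
    rw [ASHAux.iterInt_eq hlam_meas hlam_pos hlam_int hlam_top γ β T hT c hc a (T - s + 1) s
      (by omega) (by omega) y x,
      ASHAux.iterInt_eq hlam_meas hlam_pos hlam_int hlam_top γ β T hT c hc a (T - s + 1) s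
      (by omega) (by omega) y x',
      ASHAux.pbar_congr_x γ β (s-1) y (fun i hi => hxx' i (by omega))]
  · -- consequence
    intro ν hν piK hpiK g hg y₀ x₀ hφint hhint
    have hpath : ∀ (p : ℝ × (Fin k → ℝ)) (a : ℝ),
        pathInt (volume.restrict (Set.Ioi (0:ℝ)))
          (fun _ y' ylag x' a' => mphDensity lam γ β y' ylag x' a') g
          (fun y' x' => c * ((T : ℝ) - 1) / mphPbar lam γ β T y' x') a T 1
          (Function.update y₀ 0 p.1) (Function.update x₀ 1 p.2)
        = c * Real.exp a := by
      intro p a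
      rw [ASHAux.pathInt_eq hlam_meas hlam_pos hlam_int hlam_top γ β T hT c hc a g hg T
        (by omega) 1 (by omega) le_rfl (Function.update y₀ 0 p.1) (Function.update x₀ 1 p.2),
        ASHAux.mphPbar_zero, ASHAux.Dfun_final (Real.exp_pos a) (Or.inl rfl) hT rfl]
      ring
    have hcongr : ∫ p, ∫ a, pathInt (volume.restrict (Set.Ioi (0:ℝ)))
          (fun _ y' ylag x' a' => mphDensity lam γ β y' ylag x' a') g
          (fun y' x' => c * ((T : ℝ) - 1) / mphPbar lam γ β T y' x') a T 1
          (Function.update y₀ 0 p.1) (Function.update x₀ 1 p.2) ∂(piK p) ∂ν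
        = ∫ p, ∫ a, c * Real.exp a ∂(piK p) ∂ν :=
      integral_congr_ae (Filter.Eventually.of_forall fun p => by simp only [hpath])
    rw [hcongr]
    simp_rw [integral_const_mul]


end MPH

end
end

section
/- The Chamberlain–Wooldridge moment function for the Poisson model is FHR. In the Poisson panel data model with T = 2, for any function m : ℕ × ℝ^k → ℝ the function φ(y_0, y_1, y_2, x_1, x_2) = (y_1 − y_2 · e^{(z_1 − z_2)'θ}) · m(y_0, x_1) satisfies the FHR conditions with μ the counting measure on ℕ: (ii) for all (y_0, y_1, x_1, x_2, a), Σ_{y_2 ∈ ℕ} φ(y_0, y_1, y_2, x_1, x_2) f_θ(y_2 | y_1, x_2, a) = (y_1 − e^{z_1'θ + a}) m(y_0, x_1), which does not depend on x_2; and (i) for all (y_0, x_1, x_2, a), Σ_{y_1 ∈ ℕ} Σ_{y_2 ∈ ℕ} φ(y_0, y_1, y_2, x_1, x_2) f_θ(y_2 | y_1, x_2, a) f_θ(y_1 | y_0, x_1, a) = 0. -/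
/-!
The Chamberlain–Wooldridge moment function for the Poisson panel data model with
feedback (T = 2) is FHR (Bonhomme, Dano & Graham, Section 7.2): with
`φ(y_0, y_1, y_2, x_1, x_2) = (y_1 − y_2 e^{(z_1 − z_2)'θ}) m(y_0, x_1)`, conditions
(ii) and (i) hold, with μ the counting measure on ℕ.
-/

open scoped BigOperators

noncomputable section

variable {k : ℕ}

/-- The linear index `z_t'θ = x_t'θ_x + y_{t−1} θ_y` of the Poisson model, where
`z_t = (x_t', y_{t−1})'` and `θ = (θ_x', θ_y)'`. -/
noncomputable def poisLin (θx : Fin k → ℝ) (θy : ℝ) (x : Fin k → ℝ) (ylag : ℕ) : ℝ :=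
  (∑ i, x i * θx i) + (ylag : ℝ) * θy

/-- The Poisson conditional probability mass function with mean `e^{z'θ + a}`:
`f_θ(y | y₋, x, a) = exp(−e^{z'θ + a}) e^{y (z'θ + a)} / y!`. -/
noncomputable def poisPMF (lin a : ℝ) (y : ℕ) : ℝ :=
  Real.exp (-Real.exp (lin + a)) * Real.exp ((y : ℝ) * (lin + a)) / (Nat.factorial y)


private lemma hasSum_pow_div_fact (r : ℝ) :
    HasSum (fun n : ℕ => r ^ n / (Nat.factorial n)) (Real.exp r) := by
  rw [Real.exp_eq_exp_ℝ]
  exact NormedSpace.expSeries_div_hasSum_exp r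

private lemma poisPMF_eq (lin a : ℝ) (y : ℕ) :
    poisPMF lin a y =
      Real.exp (-Real.exp (lin + a)) * (Real.exp (lin + a)) ^ y / (Nat.factorial y) := by
  rw [poisPMF, ← Real.exp_nat_mul]

private lemma hasSum_poisPMF (lin a : ℝ) : HasSum (poisPMF lin a) 1 := by
  have h := ((hasSum_pow_div_fact (Real.exp (lin + a))).mul_left
      (Real.exp (-Real.exp (lin + a))))
  have hfun : (fun n : ℕ => Real.exp (-Real.exp (lin + a)) *
      ((Real.exp (lin + a)) ^ n / (Nat.factorial n))) = poisPMF lin a := by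
    funext n; rw [poisPMF_eq, mul_div_assoc]
  rw [hfun] at h
  have hv : Real.exp (-Real.exp (lin + a)) * Real.exp (Real.exp (lin + a)) = 1 := by
    rw [← Real.exp_add]; simp
  rwa [hv] at h

private lemma hasSum_mul_poisPMF (lin a : ℝ) :
    HasSum (fun y : ℕ => (y : ℝ) * poisPMF lin a y) (Real.exp (lin + a)) := by
  set L := Real.exp (lin + a) with hL
  have h := ((hasSum_pow_div_fact L).mul_left (Real.exp (-L) * L))
  have hfun : (fun n : ℕ => Real.exp (-L) * L * (L ^ n / (Nat.factorial n))) =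
      fun n : ℕ => ((n + 1 : ℕ) : ℝ) * poisPMF lin a (n + 1) := by
    funext n
    rw [poisPMF_eq, ← hL]
    have hfac : ((Nat.factorial (n + 1)) : ℝ) = ((n : ℝ) + 1) * (Nat.factorial n) := by
      rw [Nat.factorial_succ]; push_cast; ring
    have hfn : ((Nat.factorial n : ℝ)) ≠ 0 := by
      exact_mod_cast (Nat.factorial_pos n).ne'
    have hn1 : ((n : ℝ) + 1) ≠ 0 := by positivity
    rw [hfac]
    push_cast
    field_simp
    ring
  rw [hfun] at h
  have hv : Real.exp (-L) * L * Real.exp L = L := by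
    rw [mul_comm (Real.exp (-L)) L, mul_assoc, ← Real.exp_add]; simp
  rw [hv] at h
  exact (hasSum_nat_add_iff' 1).mp (by simpa using h)

/-- **The Chamberlain–Wooldridge moment function for the Poisson model is FHR.**
For `φ(y_0, y_1, y_2, x_1, x_2) = (y_1 − y_2 e^{(z_1 − z_2)'θ}) m(y_0, x_1)`:
(ii) summing `φ f_θ(y_2 | y_1, x_2, a)` over `y_2 ∈ ℕ` gives
`(y_1 − e^{z_1'θ + a}) m(y_0, x_1)`, which does not depend on `x_2`; and
(i) the double sum of `φ f_θ(y_2|y_1,x_2,a) f_θ(y_1|y_0,x_1,a)` over `(y_1, y_2)`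
is zero. -/
theorem poisson_chamberlain_wooldridge_FHR
    (θx : Fin k → ℝ) (θy : ℝ) (m : ℕ → (Fin k → ℝ) → ℝ) :
    -- condition (ii)
    (∀ (y0 y1 : ℕ) (x1 x2 : Fin k → ℝ) (a : ℝ),
      (∑' y2 : ℕ,
          ((y1 : ℝ) - (y2 : ℝ) *
              Real.exp (poisLin θx θy x1 y0 - poisLin θx θy x2 y1)) * m y0 x1 *
            poisPMF (poisLin θx θy x2 y1) a y2) =
        ((y1 : ℝ) - Real.exp (poisLin θx θy x1 y0 + a)) * m y0 x1) ∧
    -- condition (i)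
    (∀ (y0 : ℕ) (x1 x2 : Fin k → ℝ) (a : ℝ),
      (∑' y1 : ℕ,
          (∑' y2 : ℕ,
            ((y1 : ℝ) - (y2 : ℝ) *
                Real.exp (poisLin θx θy x1 y0 - poisLin θx θy x2 y1)) * m y0 x1 *
              poisPMF (poisLin θx θy x2 y1) a y2) *
            poisPMF (poisLin θx θy x1 y0) a y1) = 0) := by
  have cond2 : ∀ (y0 y1 : ℕ) (x1 x2 : Fin k → ℝ) (a : ℝ),
      (∑' y2 : ℕ,
          ((y1 : ℝ) - (y2 : ℝ) *
              Real.exp (poisLin θx θy x1 y0 - poisLin θx θy x2 y1)) * m y0 x1 *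
            poisPMF (poisLin θx θy x2 y1) a y2) =
        ((y1 : ℝ) - Real.exp (poisLin θx θy x1 y0 + a)) * m y0 x1 := by
    intro y0 y1 x1 x2 a
    set l1 := poisLin θx θy x1 y0
    set l2 := poisLin θx θy x2 y1
    set E := Real.exp (l1 - l2) with hE
    have h1 := (hasSum_poisPMF l2 a).mul_left ((y1 : ℝ) * m y0 x1)
    have h2 := (hasSum_mul_poisPMF l2 a).mul_left (m y0 x1 * E)
    have h := h1.sub h2
    have hfun : (fun y2 : ℕ => (y1 : ℝ) * m y0 x1 * poisPMF l2 a y2 -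
        m y0 x1 * E * ((y2 : ℝ) * poisPMF l2 a y2)) =
        fun y2 : ℕ => ((y1 : ℝ) - (y2 : ℝ) * E) * m y0 x1 * poisPMF l2 a y2 := by
      funext y2; ring
    rw [hfun] at h
    have hv : E * Real.exp (l2 + a) = Real.exp (l1 + a) := by
      rw [hE, ← Real.exp_add]; ring_nf
    have := h.tsum_eq
    rw [this]
    rw [mul_one]
    linear_combination (-(m y0 x1)) * hv
  refine ⟨cond2, ?_⟩
  intro y0 x1 x2 a
  set l1 := poisLin θx θy x1 y0 with hl1
  have hinner : ∀ y1 : ℕ,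
      (∑' y2 : ℕ,
          ((y1 : ℝ) - (y2 : ℝ) *
              Real.exp (poisLin θx θy x1 y0 - poisLin θx θy x2 y1)) * m y0 x1 *
            poisPMF (poisLin θx θy x2 y1) a y2) =
        ((y1 : ℝ) - Real.exp (l1 + a)) * m y0 x1 := fun y1 => cond2 y0 y1 x1 x2 a
  calc (∑' y1 : ℕ,
          (∑' y2 : ℕ,
            ((y1 : ℝ) - (y2 : ℝ) *
                Real.exp (poisLin θx θy x1 y0 - poisLin θx θy x2 y1)) * m y0 x1 *
              poisPMF (poisLin θx θy x2 y1) a y2) *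
            poisPMF (poisLin θx θy x1 y0) a y1)
      = ∑' y1 : ℕ, ((y1 : ℝ) - Real.exp (l1 + a)) * m y0 x1 * poisPMF l1 a y1 := by
        apply tsum_congr; intro y1; rw [hinner y1]
    _ = 0 := by
        have h1 := (hasSum_mul_poisPMF l1 a).mul_left (m y0 x1)
        have h2 := (hasSum_poisPMF l1 a).mul_left (Real.exp (l1 + a) * m y0 x1)
        have h := h1.sub h2
        have hfun : (fun y1 : ℕ => m y0 x1 * ((y1 : ℝ) * poisPMF l1 a y1) -
            Real.exp (l1 + a) * m y0 x1 * poisPMF l1 a y1) =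
            fun y1 : ℕ => ((y1 : ℝ) - Real.exp (l1 + a)) * m y0 x1 * poisPMF l1 a y1 := by
          funext y1; ring
        rw [hfun] at h
        have := h.tsum_eq
        rw [this]; ring


end
end
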